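/- arXiv:1701.08417 — 3 statements merged into one kernel-verified Lean document; each statement's English description precedes it below -/
import Mathlib

section
/- A finite simple graph G is ωh-perfect (i.e., for every induced subgraph H of G the Hadwiger number of H equals the clique number of H) if and only if G is chordal. -/
open SimpleGraph

/-- A `k`-coloring `c` of `G` is *complete* if it is surjective and for every pair of distinct
colors there is an edge of `G` whose endpoints receive those two colors. -/
def IsCompleteColoring {V : Type*} (G : SimpleGraph V) {k : ℕ} (c : V → Fin k) : Prop :=
  Function.Surjective c ∧
    ∀ i j : Fin k, i ≠ j → ∃ u v : V, G.Adj u v ∧ c u = i ∧ c v = j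

/-- A coloring is *proper* if adjacent vertices receive distinct colors. -/
def IsProperColoring {V : Type*} (G : SimpleGraph V) {k : ℕ} (c : V → Fin k) : Prop :=
  ∀ u v : V, G.Adj u v → c u ≠ c v

/-- A `k`-coloring `c` of `G` is *dominating* if it is surjective and every color class contains
a vertex having a neighbor in every other color class. -/
def IsDominatingColoring {V : Type*} (G : SimpleGraph V) {k : ℕ} (c : V → Fin k) : Prop :=
  Function.Surjective c ∧
    ∀ i : Fin k, ∃ v : V, c v = i ∧ ∀ j : Fin k, j ≠ i → ∃ u : V, G.Adj v u ∧ c u = j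

/-- A `k`-coloring `c` of `G` is *pseudo-Grundy* if it is surjective and every vertex is
adjacent to at least one vertex of each smaller color. -/
def IsPseudoGrundyColoring {V : Type*} (G : SimpleGraph V) {k : ℕ} (c : V → Fin k) : Prop :=
  Function.Surjective c ∧
    ∀ v : V, ∀ j : Fin k, j < c v → ∃ u : V, G.Adj v u ∧ c u = j

/-- The pseudoachromatic number `ψ(G)`: the largest `k` admitting a complete `k`-coloring. -/
noncomputable def pseudoachromaticNumber {V : Type*} (G : SimpleGraph V) : ℕ :=
  sSup {k | ∃ c : V → Fin k, IsCompleteColoring G c}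

/-- The achromatic number `α(G)`: the largest `k` admitting a proper complete `k`-coloring. -/
noncomputable def achromaticNumber {V : Type*} (G : SimpleGraph V) : ℕ :=
  sSup {k | ∃ c : V → Fin k, IsProperColoring G c ∧ IsCompleteColoring G c}

/-- The b-chromatic number `b(G)`: the largest `k` admitting a proper dominating `k`-coloring. -/
noncomputable def bChromaticNumber {V : Type*} (G : SimpleGraph V) : ℕ :=
  sSup {k | ∃ c : V → Fin k, IsProperColoring G c ∧ IsDominatingColoring G c}

/-- The pseudo-b-chromatic number `B(G)`: the largest `k` admitting a dominating `k`-coloring. -/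
noncomputable def pseudoBChromaticNumber {V : Type*} (G : SimpleGraph V) : ℕ :=
  sSup {k | ∃ c : V → Fin k, IsDominatingColoring G c}

/-- The Grundy number `Γ(G)`: the largest `k` admitting a proper pseudo-Grundy `k`-coloring. -/
noncomputable def grundyNumber {V : Type*} (G : SimpleGraph V) : ℕ :=
  sSup {k | ∃ c : V → Fin k, IsProperColoring G c ∧ IsPseudoGrundyColoring G c}

/-- The pseudo-Grundy number `γ(G)`: the largest `k` admitting a pseudo-Grundy `k`-coloring. -/
noncomputable def pseudoGrundyNumber {V : Type*} (G : SimpleGraph V) : ℕ :=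
  sSup {k | ∃ c : V → Fin k, IsPseudoGrundyColoring G c}

/-- `G` contains the complete graph `K_k` as a minor: there are `k` pairwise disjoint
"branch sets", each inducing a connected (nonempty) subgraph, with an edge of `G` between
every two of them. -/
def HasCompleteMinor {V : Type*} (G : SimpleGraph V) (k : ℕ) : Prop :=
  ∃ B : Fin k → Set V,
    (∀ i, (G.induce (B i)).Connected) ∧
    (∀ i j : Fin k, i ≠ j → Disjoint (B i) (B j)) ∧
    (∀ i j : Fin k, i ≠ j → ∃ u ∈ B i, ∃ v ∈ B j, G.Adj u v)

/-- The Hadwiger number `h(G)`: the largest `k` such that `K_k` is a minor of `G`. -/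
noncomputable def hadwigerNumber {V : Type*} (G : SimpleGraph V) : ℕ :=
  sSup {k | HasCompleteMinor G k}

/-- `G` has an induced subgraph isomorphic to `H`. -/
def HasInducedCopy {V : Type*} {W : Type*} (G : SimpleGraph V) (H : SimpleGraph W) : Prop :=
  ∃ s : Set V, Nonempty (G.induce s ≃g H)

/-- A graph is *chordal* if it has no induced cycle on four or more vertices. -/
def IsChordal {V : Type*} (G : SimpleGraph V) : Prop :=
  ∀ n : ℕ, 4 ≤ n → ¬ HasInducedCopy G (cycleGraph n)

/-- The diamond graph `D`: `K₄` minus one edge. -/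
def diamondGraph : SimpleGraph (Fin 4) :=
  (⊤ : SimpleGraph (Fin 4)).deleteEdges {s(0, 1)}


/-! ### Auxiliary development -/

section Aux
open Relation

universe u
variable {V : Type*} {W : Type*}

/-- One adjacency step staying inside the set `s`. -/
def Step (G : SimpleGraph V) (s : Set V) (u v : V) : Prop := G.Adj u v ∧ u ∈ s ∧ v ∈ s

/-- Connectivity within a set of vertices, as a relation on the ambient type. -/
def Within (G : SimpleGraph V) (s : Set V) : V → V → Prop := Relation.ReflTransGen (Step G s)

/-- A simplicial vertex: its neighbourhood is a clique. -/
def SimpVert (G : SimpleGraph V) (v : V) : Prop :=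
  ∀ u w, G.Adj v u → G.Adj v w → u ≠ w → G.Adj u w

lemma within_symm {G : SimpleGraph V} {s : Set V} {x y : V} (h : Within G s x y) :
    Within G s y x := by
  induction h with
  | refl => exact ReflTransGen.refl
  | tail h1 h2 ih => exact ReflTransGen.head ⟨h2.1.symm, h2.2.2, h2.2.1⟩ ih

lemma within_mem {G : SimpleGraph V} {s : Set V} {x y : V} (h : Within G s x y) (hx : x ∈ s) :
    y ∈ s := by
  induction h with
  | refl => exact hx
  | tail h1 h2 ih => exact h2.2.2

lemma rtg_to_chain {r : V → V → Prop} {x y : V} (h : Relation.ReflTransGen r x y) :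
    ∃ (m : ℕ) (f : ℕ → V), f 0 = x ∧ f m = y ∧ ∀ i < m, r (f i) (f (i + 1)) := by
  induction h with
  | refl => exact ⟨0, fun _ => x, rfl, rfl, by omega⟩
  | @tail b c h1 h2 ih =>
      obtain ⟨m, f, hf0, hfm, hstep⟩ := ih
      refine ⟨m + 1, fun i => if i = m + 1 then c else f i, by simp [hf0], by simp, ?_⟩
      intro i hi
      rcases Nat.lt_or_ge i m with hlt | hge
      · simp only []
        rw [if_neg (by omega : ¬ i = m + 1), if_neg (by omega : ¬ i + 1 = m + 1)]
        exact hstep i hlt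
      · have : i = m := by omega
        subst this
        simp only []
        rw [if_neg (by omega : ¬ i = i + 1)]
        simpa [hfm] using h2

lemma reach_within {G : SimpleGraph V} {s : Set V} {c : V} {u u' : V}
    (hu : Within G s c u) (hu' : Within G s c u') :
    Within G {x | Within G s c x} u u' := by
  obtain ⟨m, f, hf0, hfm, hstep⟩ := rtg_to_chain ((within_symm hu).trans hu')
  have key : ∀ i ≤ m, Within G {x | Within G s c x} u (f i) ∧ Within G s c (f i) := by
    intro i hi
    induction i with
    | zero => exact ⟨hf0 ▸ ReflTransGen.refl, hf0 ▸ hu⟩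
    | succ k ihk =>
        obtain ⟨hW, hR⟩ := ihk (by omega)
        have hst := hstep k (by omega)
        have hR' : Within G s c (f (k + 1)) := hR.tail hst
        exact ⟨hW.tail ⟨hst.1, hR, hR'⟩, hR'⟩
  exact hfm ▸ (key m le_rfl).1

lemma connected_induce_iff' {G : SimpleGraph V} {s : Set V} :
    (G.induce s).Connected ↔ s.Nonempty ∧ ∀ x ∈ s, ∀ y ∈ s, Within G s x y := by
  constructor
  · intro hc
    have hp := hc.preconnected
    obtain ⟨⟨x0, hx0⟩⟩ := hc.nonempty
    refine ⟨⟨x0, hx0⟩, fun x hx y hy => ?_⟩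
    obtain ⟨w⟩ := hp ⟨x, hx⟩ ⟨y, hy⟩
    clear hp
    have : ∀ (a b : s) (w : (G.induce s).Walk a b), Within G s a.1 b.1 := by
      intro a b w
      induction w with
      | nil => exact ReflTransGen.refl
      | cons h p ih => exact ReflTransGen.head ⟨h, by simp, by simp⟩ ih
    exact this _ _ w
  · rintro ⟨⟨x0, hx0⟩, hall⟩
    have : Nonempty ↥s := ⟨⟨x0, hx0⟩⟩
    refine ⟨fun a b => ?_⟩
    obtain ⟨a, ha⟩ := a
    obtain ⟨b, hb⟩ := b
    have h := hall a ha b hb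
    induction h with
    | refl => rfl
    | tail h1 h2 ih =>
        exact (ih h2.2.1).trans
          (Adj.reachable (by exact h2.1 : (G.induce s).Adj ⟨_, h2.2.1⟩ ⟨_, h2.2.2⟩))

/-! #### Induced paths -/

def IsPathSeq (G : SimpleGraph V) (A : Set V) (x y : V) (p : ℕ) (v : ℕ → V) : Prop :=
  v 0 = x ∧ v (p + 1) = y ∧ (∀ i, 1 ≤ i → i ≤ p → v i ∈ A) ∧ ∀ i ≤ p, G.Adj (v i) (v (i + 1))

lemma cut_pathSeq {G : SimpleGraph V} {A : Set V} {x y : V} {p : ℕ} {v : ℕ → V}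
    (hps : IsPathSeq G A x y p v) (i j : ℕ) (hij : i < j) (hjp : j ≤ p + 1)
    (hadj : G.Adj (v i) (v j)) : ∃ v', IsPathSeq G A x y (p - (j - i - 1)) v' := by
  obtain ⟨h0, hy, hmem, hstep⟩ := hps
  refine ⟨fun k => if k ≤ i then v k else v (k + (j - i - 1)), ?_, ?_, ?_, ?_⟩
  · show (if 0 ≤ i then v 0 else _) = x
    rw [if_pos (Nat.zero_le i), h0]
  · show (if p - (j - i - 1) + 1 ≤ i then _ else v (p - (j - i - 1) + 1 + (j - i - 1))) = y
    rw [if_neg (by omega), (by omega : p - (j - i - 1) + 1 + (j - i - 1) = p + 1), hy]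
  · intro k hk1 hkp
    show (if k ≤ i then v k else v (k + (j - i - 1))) ∈ A
    by_cases hki : k ≤ i
    · rw [if_pos hki]; exact hmem k hk1 (by omega)
    · rw [if_neg hki]; exact hmem _ (by omega) (by omega)
  · intro k hk
    show G.Adj (if k ≤ i then v k else _) (if k + 1 ≤ i then v (k + 1) else v (k + 1 + (j - i - 1)))
    rcases Nat.lt_or_ge k i with h1 | h1
    · rw [if_pos (by omega), if_pos (by omega)]
      exact hstep k (by omega)
    rcases Nat.eq_or_lt_of_le h1 with h2 | h2
    · rw [if_pos (by omega), if_neg (by omega), ← h2, (by omega : i + 1 + (j - i - 1) = j)]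
      exact hadj
    · rw [if_neg (by omega), if_neg (by omega),
        (by omega : k + 1 + (j - i - 1) = k + (j - i - 1) + 1)]
      exact hstep _ (by omega)

lemma exists_min_pathSeq {G : SimpleGraph V} {A : Set V} {x y : V}
    (hxy : x ≠ y) (hnadj : ¬ G.Adj x y) (hex : ∃ p v, IsPathSeq G A x y p v) :
    ∃ p v, IsPathSeq G A x y p v ∧ 1 ≤ p ∧
      (∀ i j, i < j → j ≤ p + 1 → v i ≠ v j) ∧
      (∀ i j, i + 1 < j → j ≤ p + 1 → ¬ G.Adj (v i) (v j)) := by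
  classical
  obtain ⟨p0, ⟨v, hv⟩, hmin⟩ :
      ∃ p0, (∃ v, IsPathSeq G A x y p0 v) ∧ ∀ q < p0, ¬ ∃ w, IsPathSeq G A x y q w :=
    ⟨Nat.find hex, Nat.find_spec hex, fun q hq => Nat.find_min hex hq⟩
  have hp1 : 1 ≤ p0 := by
    by_contra h
    have h0 : p0 = 0 := by omega
    obtain ⟨ha, hb, _, hstep⟩ := hv
    rw [h0] at hb hstep
    exact hnadj (ha ▸ hb ▸ hstep 0 le_rfl)
  refine ⟨p0, v, hv, hp1, ?_, ?_⟩
  · intro i j hij hjp heq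
    rcases Nat.eq_or_lt_of_le hjp with hj1 | hj1
    · have hi1 : 1 ≤ i := by
        by_contra h
        have h0 : i = 0 := by omega
        exact hxy (by calc x = v 0 := hv.1.symm
                        _ = v j := by rw [← h0]; exact heq
                        _ = y := by rw [hj1]; exact hv.2.1)
      refine hmin (i - 1) (by omega) ⟨v, hv.1, ?_, ?_, ?_⟩
      · rw [(by omega : i - 1 + 1 = i), heq, hj1]; exact hv.2.1
      · intro k hk1 hkp; exact hv.2.2.1 k hk1 (by omega)
      · intro k hk; exact hv.2.2.2 k (by omega)
    · have hadj : G.Adj (v i) (v (j + 1)) := heq ▸ hv.2.2.2 j (by omega)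
      obtain ⟨v', hv'⟩ := cut_pathSeq hv i (j + 1) (by omega) (by omega) hadj
      exact hmin _ (by omega) ⟨v', hv'⟩
  · intro i j hij hjp hadj
    obtain ⟨v', hv'⟩ := cut_pathSeq hv i j (by omega) hjp hadj
    exact hmin _ (by omega) ⟨v', hv'⟩

lemma exists_pathSeq_of_chain {G : SimpleGraph V} {A : Set V} {x y ux uy : V}
    (hux : ux ∈ A) (hadjx : G.Adj x ux) (hadjy : G.Adj uy y)
    (hchain : Within G A ux uy) : ∃ p v, IsPathSeq G A x y p v := by
  obtain ⟨m, f, hf0, hfm, hstep⟩ := rtg_to_chain hchain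
  have hmem : ∀ i ≤ m, f i ∈ A := by
    intro i hi
    induction i with
    | zero => exact hf0 ▸ hux
    | succ k ihk => exact (hstep k (by omega)).2.2
  refine ⟨m + 1, fun k => if k = 0 then x else if m + 2 ≤ k then y else f (k - 1), ?_, ?_, ?_, ?_⟩
  · simp
  · simp only []
    rw [if_neg (by omega), if_pos (by omega)]
  · intro i h1 h2
    simp only []
    rw [if_neg (by omega), if_neg (by omega)]
    exact hmem (i - 1) (by omega)
  · intro k hk
    simp only []
    rcases Nat.eq_zero_or_pos k with h0 | h0
    · subst h0
      rw [if_pos rfl, if_neg (by omega), if_neg (by omega), hf0]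
      exact hadjx
    rcases Nat.lt_or_ge k (m + 1) with h1 | h1
    · rw [if_neg (by omega), if_neg (by omega), if_neg (by omega), if_neg (by omega),
        (by omega : k + 1 - 1 = k - 1 + 1)]
      exact (hstep (k - 1) (by omega)).1
    · have : k = m + 1 := by omega
      subst this
      rw [if_neg (by omega), if_neg (by omega), if_neg (by omega), if_pos (by omega),
        (by omega : m + 1 - 1 = m), hfm]
      exact hadjy

/-! #### Holes (induced cycles) -/

lemma cycleGraph_adj_nat {n : ℕ} (h4 : 4 ≤ n) {i j : Fin n} (hij : i.val < j.val) :
    (cycleGraph n).Adj i j ↔ j.val = i.val + 1 ∨ (i.val = 0 ∧ j.val = n - 1) := by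
  rw [cycleGraph_adj']
  have h1 : (i - j).val = n + i.val - j.val := Fin.coe_sub_iff_lt.2 hij
  have h2 : (j - i).val = j.val - i.val := Fin.coe_sub_iff_le.2 (le_of_lt hij)
  have := j.isLt
  omega

lemma hasInducedCopy_cycle_of_fn {G : SimpleGraph V} {n : ℕ} (h4 : 4 ≤ n) (c : ℕ → V)
    (hinj : ∀ i j, i < j → j < n → c i ≠ c j)
    (hadj : ∀ i j, i < j → j < n → (G.Adj (c i) (c j) ↔ j = i + 1 ∨ (i = 0 ∧ j = n - 1))) :
    HasInducedCopy G (cycleGraph n) := by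
  have key : ∀ i j : Fin n, G.Adj (c i) (c j) ↔ (cycleGraph n).Adj i j := by
    intro i j
    rcases lt_trichotomy i.val j.val with h | h | h
    · rw [hadj i.val j.val h j.isLt, cycleGraph_adj_nat h4 h]
    · have : i = j := Fin.ext h
      subst this
      simp [SimpleGraph.irrefl]
    · rw [adj_comm, (cycleGraph n).adj_comm, hadj j.val i.val h i.isLt,
        cycleGraph_adj_nat h4 h]
  have hf : Function.Injective (fun i : Fin n => c i.val) := by
    intro i j hij
    by_contra hne
    rcases lt_trichotomy i.val j.val with h | h | h
    · exact hinj i.val j.val h j.isLt hij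
    · exact hne (Fin.ext h)
    · exact hinj j.val i.val h i.isLt hij.symm
  refine ⟨Set.range (fun i : Fin n => c i.val), ⟨?_⟩⟩
  refine ⟨(Equiv.ofInjective _ hf).symm, ?_⟩
  intro a b
  show (cycleGraph n).Adj _ _ ↔ G.Adj _ _
  rw [← key]
  obtain ⟨i, rfl⟩ := (Equiv.ofInjective _ hf).surjective a
  obtain ⟨j, rfl⟩ := (Equiv.ofInjective _ hf).surjective b
  simp

def valImageEquiv {V : Type*} {s : Set V} (t : Set ↥s) : ↥(Subtype.val '' t) ≃ ↥t where
  toFun x := ⟨⟨x.1, by obtain ⟨y, hy, he⟩ := x.2; exact he ▸ y.2⟩, by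
    obtain ⟨y, hy, he⟩ := x.2
    have : y = ⟨x.1, he ▸ y.2⟩ := Subtype.ext he
    exact this ▸ hy⟩
  invFun y := ⟨y.1.1, Set.mem_image_of_mem _ y.2⟩
  left_inv x := Subtype.ext rfl
  right_inv y := Subtype.ext (Subtype.ext rfl)

lemma HasInducedCopy.of_induce {G : SimpleGraph V} {s : Set V} {H : SimpleGraph W}
    (h : HasInducedCopy (G.induce s) H) : HasInducedCopy G H := by
  obtain ⟨t, ⟨e⟩⟩ := h
  refine ⟨Subtype.val '' t, ⟨?_⟩⟩
  refine ⟨(valImageEquiv t).trans e.toEquiv, ?_⟩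
  intro a b
  show H.Adj (e (valImageEquiv t a)) (e (valImageEquiv t b)) ↔ _
  rw [e.map_rel_iff]
  show ((G.induce s).induce t).Adj _ _ ↔ (G.induce _).Adj a b
  simp only [comap_adj, Function.Embedding.coe_subtype]
  exact Iff.rfl

lemma IsChordal.induce {G : SimpleGraph V} (h : IsChordal G) (s : Set V) :
    IsChordal (G.induce s) := fun n hn hcopy => h n hn hcopy.of_induce

lemma no_hole_glue {G : SimpleGraph V} (hch : IsChordal G) {A B : Set V} {x y : V}
    (hxy : x ≠ y) (hnadj : ¬ G.Adj x y)
    (hAB : ∀ u ∈ A, ∀ z ∈ B, ¬ G.Adj u z)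
    (hdAB : ∀ u ∈ A, u ∉ B) (hxB : x ∉ B)
    (hpA : ∃ p v, IsPathSeq G A x y p v) (hpB : ∃ q w, IsPathSeq G B x y q w) : False := by
  obtain ⟨p, v, ⟨hv0, hv1, hvA, hvstep⟩, hp1, hvinj, hvchord⟩ :=
    exists_min_pathSeq hxy hnadj hpA
  obtain ⟨q, w, ⟨hw0, hw1, hwB, hwstep⟩, hq1, hwinj, hwchord⟩ :=
    exists_min_pathSeq hxy hnadj hpB
  set n := p + q + 2 with hn
  have h4 : 4 ≤ n := by omega
  set c : ℕ → V := fun k => if k ≤ p + 1 then v k else w (n - k) with hc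
  have hc1 : ∀ k, k ≤ p + 1 → c k = v k := fun k hk => if_pos hk
  have hc2 : ∀ k, p + 1 ≤ k → k ≤ n → c k = w (n - k) := by
    intro k hk1 hk2
    rcases Nat.eq_or_lt_of_le hk1 with h | h
    · rw [← h, hc1 _ le_rfl, hv1, (by omega : n - (p + 1) = q + 1), hw1]
    · exact if_neg (by omega)
  have hcx : c 0 = x := by rw [hc1 0 (by omega), hv0]
  have hinj : ∀ i j, i < j → j < n → c i ≠ c j := by
    intro i j hij hjn
    rcases le_or_gt j (p + 1) with hj | hj
    · rw [hc1 i (by omega), hc1 j hj]; exact hvinj i j hij hj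
    rcases le_or_gt (p + 1) i with hi | hi
    · rw [hc2 i hi (by omega), hc2 j (by omega) (by omega)]
      exact fun h => hwinj (n - j) (n - i) (by omega) (by omega) h.symm
    · rw [hc1 i (by omega), hc2 j (by omega) (by omega)]
      have hwmB : w (n - j) ∈ B := hwB _ (by omega) (by omega)
      rcases Nat.eq_zero_or_pos i with h0 | h0
      · rw [h0, hv0]; exact fun h => hxB (h ▸ hwmB)
      · exact fun h => hdAB _ (hvA i h0 (by omega)) (h ▸ hwmB)
  have hadj : ∀ i j, i < j → j < n → (G.Adj (c i) (c j) ↔ j = i + 1 ∨ (i = 0 ∧ j = n - 1)) := by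
    intro i j hij hjn
    rcases le_or_gt j (p + 1) with hj | hj
    · rw [hc1 i (by omega), hc1 j hj]
      constructor
      · intro hadj
        by_contra hcon
        push_neg at hcon
        exact hvchord i j (by omega) hj hadj
      · rintro (rfl | ⟨rfl, rfl⟩)
        · exact hvstep i (by omega)
        · omega
    rcases le_or_gt (p + 1) i with hi | hi
    · rw [hc2 i hi (by omega), hc2 j (by omega) (by omega)]
      rw [G.adj_comm]
      constructor
      · intro hadj
        left
        by_contra hcon
        exact hwchord (n - j) (n - i) (by omega) (by omega) hadj
      · rintro (rfl | ⟨h0, _⟩)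
        · rw [(by omega : n - i = n - (i + 1) + 1)]
          exact hwstep _ (by omega)
        · omega
    · rw [hc1 i (by omega), hc2 j (by omega) (by omega)]
      rcases Nat.eq_zero_or_pos i with h0 | h0
      · subst h0
        rw [hv0, ← hw0]
        constructor
        · intro hadj
          right
          refine ⟨rfl, ?_⟩
          by_contra hcon
          have hnj2 : 2 ≤ n - j := by omega
          exact hwchord 0 (n - j) (by omega) (by omega) hadj
        · rintro (h1 | ⟨-, rfl⟩)
          · omega
          · rw [(by omega : n - (n - 1) = 0 + 1)]
            exact hwstep 0 (by omega)
      · have hvi : v i ∈ A := hvA i h0 (by omega)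
        have hwj : w (n - j) ∈ B := hwB _ (by omega) (by omega)
        constructor
        · intro hadj; exact absurd hadj (hAB _ hvi _ hwj)
        · rintro (h1 | ⟨h1, -⟩) <;> omega
  exact hch n h4 (hasInducedCopy_cycle_of_fn h4 c hinj hadj)

/-! #### Simplicial vertices in chordal graphs (Dirac) -/

lemma simpVert_of_induce {G : SimpleGraph V} {s : Set V} (v : ↥s)
    (hcl : ∀ z, G.Adj v.val z → z ∈ s) (hs : SimpVert (G.induce s) v) : SimpVert G v.val := by
  intro u w h1 h2 hne
  have hu := hcl u h1
  have hw := hcl w h2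
  have := hs ⟨u, hu⟩ ⟨w, hw⟩ h1 h2 (by simpa [Subtype.ext_iff] using hne)
  exact this

theorem dirac_aux (N : ℕ) : ∀ {V : Type u} [Fintype V] (G : SimpleGraph V),
    Fintype.card V ≤ N → IsChordal G → Nonempty V →
    (∀ u w : V, u ≠ w → G.Adj u w) ∨
      (∃ u w : V, u ≠ w ∧ ¬ G.Adj u w ∧ SimpVert G u ∧ SimpVert G w) := by
  induction N with
  | zero =>
      intro V _ G hcard _ hne
      exact absurd hcard (by simpa using Fintype.card_pos)
  | succ N ih =>
      intro V _ G hcard hch hne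
      classical
      by_cases hcomp : ∀ u w : V, u ≠ w → G.Adj u w
      · exact Or.inl hcomp
      push_neg at hcomp
      obtain ⟨a, b, hab, hnadj⟩ := hcomp
      set Sep : Finset V → Prop :=
        fun S => a ∉ S ∧ b ∉ S ∧ ¬ Within G ((↑S : Set V))ᶜ a b with hSepDef
      have hfull : Sep (Finset.univ \ {a, b}) := by
        refine ⟨by simp, by simp, ?_⟩
        intro hW
        rcases Relation.ReflTransGen.cases_head hW with heq | ⟨z, hstep, _⟩
        · exact hab heq
        · have hz : z ∈ ((↑(Finset.univ \ ({a, b} : Finset V)) : Set V))ᶜ := hstep.2.2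
          have : z = a ∨ z = b := by
            by_contra hc
            push_neg at hc
            exact hz (by simp [hc.1, hc.2])
          rcases this with rfl | rfl
          · exact G.irrefl hstep.1
          · exact hnadj hstep.1
      have hex : ∃ k, ∃ S : Finset V, S.card = k ∧ Sep S := ⟨_, _, rfl, hfull⟩
      obtain ⟨S, hS, hSmin⟩ : ∃ S, Sep S ∧ ∀ T, Sep T → S.card ≤ T.card := by
        obtain ⟨S, hcardS, hSepS⟩ := Nat.find_spec hex
        exact ⟨S, hSepS, fun T hT => by rw [hcardS]; exact Nat.find_min' hex ⟨T, rfl, hT⟩⟩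
      set Sc := ((↑S : Set V))ᶜ with hScDef
      have hScMem : ∀ {x : V}, x ∈ Sc ↔ x ∉ S := fun {x} => by simp [hScDef]
      set A := {x | Within G Sc a x} with hA
      set B := {x | Within G Sc b x} with hB
      have haA : a ∈ A := ReflTransGen.refl
      have hbB : b ∈ B := ReflTransGen.refl
      have hAS : ∀ x ∈ A, x ∉ S := fun x hx => hScMem.1 (within_mem hx (hScMem.2 hS.1))
      have hBS : ∀ x ∈ B, x ∉ S := fun x hx => hScMem.1 (within_mem hx (hScMem.2 hS.2.1))
      have hAcl : ∀ x ∈ A, ∀ z, G.Adj x z → z ∉ S → z ∈ A := fun x hx z hadj hz =>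
        hx.tail ⟨hadj, hScMem.2 (hAS x hx), hScMem.2 hz⟩
      have hBcl : ∀ x ∈ B, ∀ z, G.Adj x z → z ∉ S → z ∈ B := fun x hx z hadj hz =>
        hx.tail ⟨hadj, hScMem.2 (hBS x hx), hScMem.2 hz⟩
      have hbA : b ∉ A := hS.2.2
      have hABd : ∀ x ∈ A, x ∉ B := fun x hx hx' => hbA (within_symm (hx'.trans (within_symm hx)))
      have hedge : ∀ u ∈ A, ∀ z ∈ B, ¬ G.Adj u z := fun u hu z hz hadj =>
        hABd z (hAcl u hu z hadj (hBS z hz)) hz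
      -- minimality: every separator vertex has neighbours in both components
      have hnbrA : ∀ s0 ∈ S, ∃ u ∈ A, G.Adj s0 u := by
        intro s0 hs0
        by_contra hno
        push_neg at hno
        have hsub : ∀ x, Within G ((↑(S.erase s0) : Set V))ᶜ a x → x ∈ A := by
          intro x hx
          induction hx with
          | refl => exact haA
          | @tail u z h1 h2 ih2 =>
              by_cases hzs : z = s0
              · subst hzs
                exact absurd h2.1.symm (hno u ih2)
              · refine hAcl u ih2 z h2.1 (fun hzin => ?_)
                exact h2.2.2 (by exact_mod_cast Finset.mem_erase.2 ⟨hzs, hzin⟩)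
        have hsep' : Sep (S.erase s0) :=
          ⟨fun h => hS.1 (Finset.mem_of_mem_erase h),
           fun h => hS.2.1 (Finset.mem_of_mem_erase h),
           fun hW => hbA (hsub b hW)⟩
        have h1 := hSmin _ hsep'
        have h2 : (S.erase s0).card < S.card := Finset.card_erase_lt_of_mem hs0
        omega
      have hnbrB : ∀ s0 ∈ S, ∃ u ∈ B, G.Adj s0 u := by
        intro s0 hs0
        by_contra hno
        push_neg at hno
        have hsub : ∀ x, Within G ((↑(S.erase s0) : Set V))ᶜ b x → x ∈ B := by
          intro x hx
          induction hx with
          | refl => exact hbB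
          | @tail u z h1 h2 ih2 =>
              by_cases hzs : z = s0
              · subst hzs
                exact absurd h2.1.symm (hno u ih2)
              · refine hBcl u ih2 z h2.1 (fun hzin => ?_)
                exact h2.2.2 (by exact_mod_cast Finset.mem_erase.2 ⟨hzs, hzin⟩)
        have hsep' : Sep (S.erase s0) :=
          ⟨fun h => hS.1 (Finset.mem_of_mem_erase h),
           fun h => hS.2.1 (Finset.mem_of_mem_erase h),
           fun hW => hABd a haA (hsub a (within_symm hW))⟩
        have h1 := hSmin _ hsep'
        have h2 : (S.erase s0).card < S.card := Finset.card_erase_lt_of_mem hs0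
        omega
      -- S is a clique
      have hclique : ∀ x ∈ S, ∀ y ∈ S, x ≠ y → G.Adj x y := by
        intro x hx y hy hxy
        by_contra hnadjxy
        obtain ⟨ux, huxA, hux⟩ := hnbrA x hx
        obtain ⟨uy, huyA, huy⟩ := hnbrA y hy
        obtain ⟨wx, hwxB, hwx⟩ := hnbrB x hx
        obtain ⟨wy, hwyB, hwy⟩ := hnbrB y hy
        have hchA : Within G A ux uy := reach_within huxA huyA
        have hchB : Within G B wx wy := reach_within hwxB hwyB
        have hpA := exists_pathSeq_of_chain huxA hux huy.symm hchA
        have hpB := exists_pathSeq_of_chain hwxB hwx hwy.symm hchB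
        exact no_hole_glue hch hxy hnadjxy hedge hABd (fun h => hBS x h hx) hpA hpB
      -- one simplicial vertex in each side
      have hside : ∀ (c d : V), c ∉ S → d ∉ S → ¬ Within G Sc c d →
          ∃ u : V, Within G Sc c u ∧ SimpVert G u := by
        intro c d hcS hdS hcd
        set C := {x | Within G Sc c x} with hC
        set U : Set V := C ∪ ↑S with hU
        have hcC : c ∈ C := ReflTransGen.refl
        have hCS : ∀ x ∈ C, x ∉ S := fun x hx => hScMem.1 (within_mem hx (hScMem.2 hcS))
        have hCcl : ∀ x ∈ C, ∀ z, G.Adj x z → z ∈ U := by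
          intro x hx z hadj
          by_cases hz : z ∈ S
          · exact Or.inr hz
          · exact Or.inl (hx.tail ⟨hadj, hScMem.2 (hCS x hx), hScMem.2 hz⟩)
        have hdU : d ∉ U := by
          rintro (h | h)
          exacts [hcd h, hdS h]
        have hFin : Fintype ↥U := Fintype.ofFinite _
        have hcardU : Fintype.card ↥U < Fintype.card V :=
          Fintype.card_lt_of_injective_of_notMem Subtype.val Subtype.val_injective
            (by simpa using hdU)
        have hneU : Nonempty ↥U := ⟨⟨c, Or.inl hcC⟩⟩
        rcases ih (G.induce U) (by omega) (hch.induce U) hneU with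
          hcompU | ⟨u, w, huw, hnadjuw, hsu, hsw⟩
        · refine ⟨c, hcC, ?_⟩
          exact simpVert_of_induce (⟨c, Or.inl hcC⟩ : ↥U) (fun z hz => hCcl c hcC z hz)
            (fun u w _ _ hne => hcompU u w hne)
        · have hpick : ∃ u0 : ↥U, u0.val ∈ C ∧ SimpVert (G.induce U) u0 := by
            rcases (u.2 : u.val ∈ C ∪ ↑S) with h | h
            · exact ⟨u, h, hsu⟩
            · rcases (w.2 : w.val ∈ C ∪ ↑S) with h' | h'
              · exact ⟨w, h', hsw⟩
              · exact absurd (hclique _ h _ h' (fun he => huw (Subtype.ext he)) :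
                  G.Adj u.val w.val) hnadjuw
          obtain ⟨u0, hu0C, hu0s⟩ := hpick
          exact ⟨u0.val, hu0C, simpVert_of_induce u0 (fun z hz => hCcl u0.val hu0C z hz) hu0s⟩
      obtain ⟨u, huA, hsu⟩ := hside a b hS.1 hS.2.1 hS.2.2
      obtain ⟨w, hwB, hsw⟩ := hside b a hS.2.1 hS.1 (fun h => hS.2.2 (within_symm h))
      exact Or.inr ⟨u, w, fun he => hABd u huA (he ▸ hwB), hedge u huA w hwB, hsu, hsw⟩


lemma exists_simplicial {V : Type u} [Fintype V] [Nonempty V] (G : SimpleGraph V)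
    (hch : IsChordal G) : ∃ v, SimpVert G v := by
  rcases dirac_aux (Fintype.card V) G le_rfl hch ‹Nonempty V› with h | ⟨u, -, -, -, hu, -⟩
  · exact ⟨Classical.arbitrary V, fun u w h1 h2 hne => h u w hne⟩
  · exact ⟨u, hu⟩

lemma within_erase_simplicial {G : SimpleGraph V} {v : V} (hv : SimpVert G v) {A : Set V}
    {x y : V} (h : Within G A x y) (hx : x ≠ v) (hy : y ≠ v) : Within G (A \ {v}) x y := by
  obtain ⟨m, f, hf0, hfm, hchain⟩ := rtg_to_chain h
  subst hf0 hfm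
  clear h
  induction m using Nat.strong_induction_on generalizing f with
  | _ m ihm =>
    match m, hchain with
    | 0, _ => exact ReflTransGen.refl
    | (m + 1), hchain =>
      have hst0 := hchain 0 (by omega)
      by_cases h1 : f 1 = v
      · -- skip over v
        have hm2 : 2 ≤ m + 1 := by
          rcases Nat.lt_or_ge (m + 1) 2 with h | h
          · exfalso
            have hm0 : m = 0 := by omega
            subst hm0
            exact hy h1
          · exact h
        have hst1 := hchain 1 (by omega)
        have hf2 : f 2 ≠ v := by rw [h1] at hst1; exact (hst1.1.ne).symm
        have htail : Within G (A \ {v}) (f 2) (f (m + 1)) := by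
          have h5 := ihm (m - 1) (by omega) (fun i => f (i + 2))
            (fun i hi => by
              show Step G A (f (i + 2)) (f (i + 1 + 2))
              have := hchain (i + 2) (by omega)
              rwa [(by omega : i + 2 + 1 = i + 1 + 2)] at this)
            hf2 (by show f (m - 1 + 2) ≠ v; rw [(by omega : m - 1 + 2 = m + 1)]; exact hy)
          have h6 : Within G (A \ {v}) (f 2) (f (m - 1 + 2)) := h5
          rwa [(by omega : m - 1 + 2 = m + 1)] at h6
        by_cases h02 : f 0 = f 2
        · rw [h02]; exact htail
        · have hadj02 : G.Adj (f 0) (f 2) := by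
            refine hv (f 0) (f 2) ?_ ?_ h02
            · rw [← h1]; exact hst0.1.symm
            · rw [← h1]; exact hst1.1
          exact ReflTransGen.head ⟨hadj02, ⟨hst0.2.1, hx⟩, ⟨hst1.2.2, hf2⟩⟩ htail
      · have htail : Within G (A \ {v}) (f 1) (f (m + 1)) := by
          have h5 := ihm m (by omega) (fun i => f (i + 1))
            (fun i hi => by
              show Step G A (f (i + 1)) (f (i + 1 + 1))
              exact hchain (i + 1) (by omega)) h1
            (by show f (m + 1) ≠ v; exact hy)
          exact h5
        exact ReflTransGen.head ⟨hst0.1, ⟨hst0.2.1, hx⟩, ⟨hst0.2.2, h1⟩⟩ htail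

lemma within_induce_lift {G : SimpleGraph V} {s t : Set V} (hts : t ⊆ s) {x y : V}
    (h : Within G t x y) (hx : x ∈ s) (hy : y ∈ s) :
    Within (G.induce s) {z : ↥s | z.val ∈ t} ⟨x, hx⟩ ⟨y, hy⟩ := by
  induction h with
  | refl => exact ReflTransGen.refl
  | @tail u z h1 h2 ih =>
      have hu : u ∈ s := hts h2.2.1
      have hz : z ∈ s := hts h2.2.2
      have base : Within (G.induce s) {w : ↥s | w.val ∈ t} ⟨x, hx⟩ ⟨u, hu⟩ := ih hu
      exact base.tail ⟨(h2.1 : G.Adj u z), h2.2.1, h2.2.2⟩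

lemma hasCompleteMinor_induce_of {G : SimpleGraph V} {s : Set V} {k : ℕ} (B : Fin k → Set V)
    (hsub : ∀ i, B i ⊆ s)
    (hne : ∀ i, (B i).Nonempty)
    (hwithin : ∀ i, ∀ x ∈ B i, ∀ y ∈ B i, Within G (B i) x y)
    (hdisj : ∀ i j, i ≠ j → Disjoint (B i) (B j))
    (hedge : ∀ i j, i ≠ j → ∃ u ∈ B i, ∃ z ∈ B j, G.Adj u z) :
    HasCompleteMinor (G.induce s) k := by
  refine ⟨fun i => {z : ↥s | z.val ∈ B i}, ?_, ?_, ?_⟩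
  · intro i
    show (((G.induce s)).induce {z : ↥s | z.val ∈ B i}).Connected
    rw [connected_induce_iff']
    obtain ⟨x0, hx0⟩ := hne i
    refine ⟨⟨⟨x0, hsub i hx0⟩, hx0⟩, ?_⟩
    rintro ⟨x, hxs⟩ hx ⟨y, hys⟩ hy
    exact within_induce_lift (hsub i) (hwithin i x hx y hy) hxs hys
  · intro i j hij
    rw [Set.disjoint_left]
    rintro ⟨x, hxs⟩ hx hx'
    exact (Set.disjoint_left.1 (hdisj i j hij)) hx hx'
  · intro i j hij
    obtain ⟨u, hu, z, hz, hadj⟩ := hedge i j hij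
    exact ⟨⟨u, hsub i hu⟩, hu, ⟨z, hsub j hz⟩, hz, hadj⟩

theorem minor_clique (N : ℕ) : ∀ {V : Type u} [Fintype V] (G : SimpleGraph V),
    Fintype.card V ≤ N → IsChordal G → ∀ k, HasCompleteMinor G k →
    ∃ s : Finset V, G.IsNClique k s := by
  induction N with
  | zero =>
      intro V _ G hcard hch k hm
      obtain ⟨B, hconn, -, -⟩ := hm
      rcases Nat.eq_zero_or_pos k with rfl | hk
      · exact ⟨∅, isNClique_empty.mpr rfl⟩
      · obtain ⟨x⟩ := (hconn ⟨0, hk⟩).nonempty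
        have : 0 < Fintype.card V := Fintype.card_pos_iff.2 ⟨x.1⟩
        omega
  | succ N ih =>
      intro V _ G hcard hch k hm
      classical
      obtain ⟨B, hconn, hdisj, hedge⟩ := hm
      rcases Nat.eq_zero_or_pos k with rfl | hk
      · exact ⟨∅, isNClique_empty.mpr rfl⟩
      have hbr : ∀ i, (B i).Nonempty ∧ ∀ x ∈ B i, ∀ y ∈ B i, Within G (B i) x y :=
        fun i => connected_induce_iff'.1 (hconn i)
      have hVne : Nonempty V := ⟨(hbr ⟨0, hk⟩).1.choose⟩
      obtain ⟨v, hv⟩ := exists_simplicial G hch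
      by_cases hb : ∃ i, v ∈ B i ∧ ∀ w ∈ B i, w = v
      · -- v forms a singleton branch set : direct clique
        obtain ⟨i, hvi, hBi⟩ := hb
        have hsel : ∀ j, j ≠ i → ∃ y, y ∈ B j ∧ G.Adj v y := by
          intro j hj
          obtain ⟨u, hu, z, hz, hadj⟩ := hedge i j (Ne.symm hj)
          exact ⟨z, hz, (hBi u hu) ▸ hadj⟩
        set F : Fin k → V := fun j => if h : j = i then v else (hsel j h).choose with hF
        have hFi : F i = v := dif_pos rfl
        have hFmem : ∀ j, F j ∈ B j := by
          intro j
          by_cases h : j = i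
          · subst h; rw [hFi]; exact hvi
          · show (if h : j = i then v else (hsel j h).choose) ∈ B j
            rw [dif_neg h]; exact (hsel j h).choose_spec.1
        have hFadjv : ∀ j, j ≠ i → G.Adj v (F j) := by
          intro j h
          show G.Adj v (if h : j = i then v else (hsel j h).choose)
          rw [dif_neg h]; exact (hsel j h).choose_spec.2
        have hFinj : Function.Injective F := by
          intro j j' h
          by_contra hne
          exact Set.disjoint_left.1 (hdisj j j' hne) (hFmem j) (h ▸ hFmem j')
        have hFadj : ∀ j j', j ≠ j' → G.Adj (F j) (F j') := by
          intro j j' hne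
          by_cases hji : j = i
          · subst hji
            rw [hFi]
            exact hFadjv j' (fun h => hne h.symm)
          by_cases hj'i : j' = i
          · subst hj'i
            rw [hFi]
            exact (hFadjv j hji).symm
          · exact hv (F j) (F j') (hFadjv j hji) (hFadjv j' hj'i) (fun h => hne (hFinj h))
        refine ⟨Finset.image F Finset.univ, ?_, ?_⟩
        · intro x hx y hy hxy
          simp only [Finset.coe_image, Set.mem_image, Finset.mem_coe, Finset.mem_univ] at hx hy
          obtain ⟨j, -, rfl⟩ := hx
          obtain ⟨j', -, rfl⟩ := hy
          exact hFadj j j' (fun h => hxy (h ▸ rfl))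
        · rw [Finset.card_image_of_injective _ hFinj, Finset.card_univ, Fintype.card_fin]
      · -- recurse on G - v
        push_neg at hb
        set s : Set V := {v}ᶜ with hs
        have hFin : Fintype ↥s := Fintype.ofFinite _
        have hcards : Fintype.card ↥s < Fintype.card V :=
          Fintype.card_lt_of_injective_of_notMem Subtype.val Subtype.val_injective
            (b := v) (by rw [Subtype.range_coe]; simp [hs])
        have hnbr : ∀ i, v ∈ B i → ∃ z1, z1 ∈ B i ∧ z1 ≠ v ∧ G.Adj v z1 := by
          intro i hvi
          obtain ⟨w0, hw0, hw0v⟩ := hb i hvi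
          have hW := (hbr i).2 v hvi w0 hw0
          rcases Relation.ReflTransGen.cases_head hW with heq | ⟨z1, hst, -⟩
          · exact absurd heq.symm hw0v
          · exact ⟨z1, hst.2.2, hst.1.ne', hst.1⟩
        set B' : Fin k → Set V := fun i => B i \ {v} with hB'
        have hB'mem : ∀ i x, x ∈ B' i ↔ x ∈ B i ∧ x ≠ v := by
          intro i x
          simp [hB']
        have hsub : ∀ i, B' i ⊆ s := by
          intro i x hx
          simp only [hs, Set.mem_compl_iff, Set.mem_singleton_iff]
          exact ((hB'mem i x).1 hx).2
        have hne' : ∀ i, (B' i).Nonempty := by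
          intro i
          by_cases hvi : v ∈ B i
          · obtain ⟨z1, h1, h2, -⟩ := hnbr i hvi
            exact ⟨z1, (hB'mem i z1).2 ⟨h1, h2⟩⟩
          · obtain ⟨x, hx⟩ := (hbr i).1
            exact ⟨x, (hB'mem i x).2 ⟨hx, fun h => hvi (h ▸ hx)⟩⟩
        have hwithin' : ∀ i, ∀ x ∈ B' i, ∀ y ∈ B' i, Within G (B' i) x y := by
          intro i x hx y hy
          have hx' := (hB'mem i x).1 hx
          have hy' := (hB'mem i y).1 hy
          exact within_erase_simplicial hv ((hbr i).2 x hx'.1 y hy'.1) hx'.2 hy'.2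
        have hdisj' : ∀ i j, i ≠ j → Disjoint (B' i) (B' j) := fun i j hij =>
          (hdisj i j hij).mono Set.diff_subset Set.diff_subset
        have hedge' : ∀ i j, i ≠ j → ∃ u ∈ B' i, ∃ z ∈ B' j, G.Adj u z := by
          intro i j hij
          obtain ⟨u, hu, z, hz, hadj⟩ := hedge i j hij
          by_cases huv : u = v
          · subst huv
            obtain ⟨z1, hz1, hz1v, hadj1⟩ := hnbr i hu
            have hzv : z ≠ u := fun h => Set.disjoint_left.1 (hdisj i j hij) hu (h ▸ hz)
            have hz1z : z1 ≠ z := fun h =>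
              Set.disjoint_left.1 (hdisj i j hij) hz1 (h ▸ hz)
            exact ⟨z1, (hB'mem i z1).2 ⟨hz1, hz1v⟩, z, (hB'mem j z).2 ⟨hz, hzv⟩,
              hv z1 z hadj1 hadj hz1z⟩
          by_cases hzv : z = v
          · subst hzv
            obtain ⟨z1, hz1, hz1v, hadj1⟩ := hnbr j hz
            have huz : u ≠ z := fun h => Set.disjoint_left.1 (hdisj i j hij) hu (h ▸ hz)
            have huz1 : u ≠ z1 := fun h =>
              Set.disjoint_left.1 (hdisj j i (Ne.symm hij)) hz1 (h.symm ▸ hu)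
            exact ⟨u, (hB'mem i u).2 ⟨hu, huz⟩, z1, (hB'mem j z1).2 ⟨hz1, hz1v⟩,
              (hv z1 u hadj1 hadj.symm (Ne.symm huz1)).symm⟩
          · exact ⟨u, (hB'mem i u).2 ⟨hu, huv⟩, z, (hB'mem j z).2 ⟨hz, hzv⟩, hadj⟩
        have hm' : HasCompleteMinor (G.induce s) k :=
          hasCompleteMinor_induce_of B' hsub hne' hwithin' hdisj' hedge'
        obtain ⟨t, ht⟩ := ih (G.induce s) (by omega) (hch.induce s) k hm'
        refine ⟨t.image Subtype.val, ?_, ?_⟩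
        · intro x hx y hy hxy
          simp only [Finset.coe_image, Set.mem_image, Finset.mem_coe] at hx hy
          obtain ⟨a, ha, rfl⟩ := hx
          obtain ⟨b, hb2, rfl⟩ := hy
          exact ht.1 ha hb2 (fun h => hxy (h ▸ rfl))
        · rw [Finset.card_image_of_injective _ Subtype.val_injective, ht.2]

lemma hasCompleteMinor_zero (G : SimpleGraph V) : HasCompleteMinor G 0 :=
  ⟨fun i => i.elim0, fun i => i.elim0, fun i j h => i.elim0, fun i j h => i.elim0⟩

lemma hasCompleteMinor_card_le [Fintype V] (G : SimpleGraph V) (k : ℕ)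
    (h : HasCompleteMinor G k) : k ≤ Fintype.card V := by
  obtain ⟨B, hconn, hdisj, -⟩ := h
  have hne : ∀ i, (B i).Nonempty := fun i => (connected_induce_iff'.1 (hconn i)).1
  choose pick hpick using hne
  have hinj : Function.Injective pick := by
    intro i j h
    by_contra hne2
    exact Set.disjoint_left.1 (hdisj i j hne2) (hpick i) (h ▸ hpick j)
  simpa using Fintype.card_le_of_injective pick hinj

lemma hasCompleteMinor_of_clique {G : SimpleGraph V} {k : ℕ} {s : Finset V}
    (h : G.IsNClique k s) : HasCompleteMinor G k := by
  classical
  obtain ⟨hcl, hcard⟩ := h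
  set e : Fin k ≃ ↥s := (s.equivFinOfCardEq hcard).symm with he
  refine ⟨fun i => {(e i).val}, ?_, ?_, ?_⟩
  · intro i
    rw [connected_induce_iff']
    refine ⟨⟨(e i).val, rfl⟩, ?_⟩
    intro x hx y hy
    rw [Set.mem_singleton_iff] at hx hy
    rw [hx, hy]
    exact ReflTransGen.refl
  · intro i j hij
    rw [Set.disjoint_singleton_left, Set.mem_singleton_iff]
    intro h
    exact hij (e.injective (Subtype.ext h))
  · intro i j hij
    refine ⟨(e i).val, rfl, (e j).val, rfl, ?_⟩
    exact hcl (e i).2 (e j).2 (fun h => hij (e.injective (Subtype.ext h)))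

lemma hadwiger_eq_cliqueNum_of_chordal {V : Type u} [Fintype V] (G : SimpleGraph V)
    (hch : IsChordal G) : hadwigerNumber G = G.cliqueNum := by
  have hbdd : BddAbove {k | HasCompleteMinor G k} :=
    ⟨Fintype.card V, fun k hk => hasCompleteMinor_card_le G k hk⟩
  apply le_antisymm
  · have h0 : (0 : ℕ) ∈ {k | HasCompleteMinor G k} := hasCompleteMinor_zero G
    apply csSup_le ⟨0, h0⟩
    intro k hk
    obtain ⟨s, hs⟩ := minor_clique (Fintype.card V) G le_rfl hch k hk
    have h1 : s.card ≤ G.cliqueNum := SimpleGraph.IsClique.card_le_cliqueNum (tc := hs.1)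
    rw [← hs.2]
    exact h1
  · obtain ⟨s, hs⟩ := G.exists_isNClique_cliqueNum
    exact le_csSup hbdd (hasCompleteMinor_of_clique hs)

lemma cycle_no_triangle_sorted {n : ℕ} (h4 : 4 ≤ n) {a b c : Fin n}
    (h1 : a.val < b.val) (h2 : b.val < c.val)
    (hab : (cycleGraph n).Adj a b) (hbc : (cycleGraph n).Adj b c)
    (hac : (cycleGraph n).Adj a c) : False := by
  rw [cycleGraph_adj_nat h4 h1] at hab
  rw [cycleGraph_adj_nat h4 h2] at hbc
  rw [cycleGraph_adj_nat h4 (lt_trans h1 h2)] at hac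
  have := c.isLt
  omega

lemma cycle_no_triangle {n : ℕ} (h4 : 4 ≤ n) {a b c : Fin n}
    (hab : (cycleGraph n).Adj a b) (hbc : (cycleGraph n).Adj b c)
    (hac : (cycleGraph n).Adj a c) : False := by
  have hne1 : a.val ≠ b.val := fun h => hab.ne (Fin.ext h)
  have hne2 : b.val ≠ c.val := fun h => hbc.ne (Fin.ext h)
  have hne3 : a.val ≠ c.val := fun h => hac.ne (Fin.ext h)
  rcases lt_trichotomy a.val b.val with h1 | h1 | h1
  · rcases lt_trichotomy b.val c.val with h2 | h2 | h2
    · exact cycle_no_triangle_sorted h4 h1 h2 hab hbc hac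
    · exact absurd h2 hne2
    · rcases lt_trichotomy a.val c.val with h3 | h3 | h3
      · exact cycle_no_triangle_sorted h4 h3 h2 hac hbc.symm hab
      · exact absurd h3 hne3
      · exact cycle_no_triangle_sorted h4 h3 h1 hac.symm hab hbc.symm
  · exact absurd h1 hne1
  · rcases lt_trichotomy a.val c.val with h3 | h3 | h3
    · exact cycle_no_triangle_sorted h4 h1 h3 hab.symm hac hbc
    · exact absurd h3 hne3
    · rcases lt_trichotomy b.val c.val with h2 | h2 | h2
      · exact cycle_no_triangle_sorted h4 h2 h3 hbc hac.symm hab.symm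
      · exact absurd h2 hne2
      · exact cycle_no_triangle_sorted h4 h2 h1 hbc.symm hab.symm hac.symm
  
lemma cliqueNum_eq_two_of_iso_cycle {W : Type*} [Fintype W] (H : SimpleGraph W) {n : ℕ}
    (h4 : 4 ≤ n) (e : H ≃g cycleGraph n) : H.cliqueNum = 2 := by
  classical
  apply le_antisymm
  · by_contra h
    push_neg at h
    obtain ⟨t, ht⟩ := H.exists_isNClique_cliqueNum
    obtain ⟨t3, hsub, hcard3⟩ := Finset.exists_subset_card_eq (s := t) (n := 3) (by rw [ht.2]; omega : 3 ≤ t.card)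
    rcases Finset.card_eq_three.1 hcard3 with ⟨a, b, c, hab, hac, hbc, rfl⟩
    have hadj : ∀ x ∈ ({a, b, c} : Finset W), ∀ y ∈ ({a, b, c} : Finset W), x ≠ y → H.Adj x y :=
      fun x hx y hy hxy => ht.1 (hsub hx) (hsub hy) hxy
    refine cycle_no_triangle h4 (a := e a) (b := e b) (c := e c) ?_ ?_ ?_ <;>
      rw [e.map_rel_iff]
    · exact hadj a (by simp) b (by simp) hab
    · exact hadj b (by simp) c (by simp) hbc
    · exact hadj a (by simp) c (by simp) hac
  · set a := e.symm ⟨0, by omega⟩ with ha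
    set b := e.symm ⟨1, by omega⟩ with hb
    have hadjH : H.Adj a b := by
      rw [ha, hb, e.symm.map_rel_iff]
      exact (cycleGraph_adj_nat h4 (by simp)).2 (Or.inl rfl)
    have hne : a ≠ b := hadjH.ne
    have hclique : H.IsClique {a, b} := by
      intro x hx y hy hxy
      simp only [Set.mem_insert_iff, Set.mem_singleton_iff] at hx hy
      rcases hx with rfl | rfl <;> rcases hy with rfl | rfl
      · exact absurd rfl hxy
      · exact hadjH
      · exact hadjH.symm
      · exact absurd rfl hxy
    have h2 : ({a, b} : Finset W).card = 2 := Finset.card_pair hne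
    have := SimpleGraph.IsClique.card_le_cliqueNum
      (tc := show H.IsClique ({a, b} : Finset W) by simpa using hclique)
    omega

lemma hadwiger_ge_three_of_iso_cycle {W : Type*} [Fintype W] (H : SimpleGraph W) {n : ℕ}
    (h4 : 4 ≤ n) (e : H ≃g cycleGraph n) : 3 ≤ hadwigerNumber H := by
  classical
  set a0 := e.symm ⟨0, by omega⟩ with ha0
  set a1 := e.symm ⟨1, by omega⟩ with ha1
  set B2 : Set W := {w : W | 2 ≤ (e w).val} with hB2
  have hsymm_val : ∀ (m : ℕ) (h : m < n), (e (e.symm ⟨m, h⟩)).val = m := by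
    intro m h
    rw [e.apply_symm_apply]
  have hadj_symm : ∀ (u v : Fin n), H.Adj (e.symm u) (e.symm v) ↔ (cycleGraph n).Adj u v :=
    fun u v => e.symm.map_rel_iff
  -- reachability within B2
  have hreach : ∀ m, 2 ≤ m → ∀ (h : m < n), Within H B2 (e.symm ⟨2, by omega⟩) (e.symm ⟨m, h⟩) := by
    intro m hm
    induction m, hm using Nat.le_induction with
    | base => intro h; exact ReflTransGen.refl
    | succ m hm ih =>
        intro h
        refine (ih (by omega)).tail ?_
        refine ⟨(hadj_symm _ _).2 ?_, ?_, ?_⟩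
        · exact (cycleGraph_adj_nat h4 (by simp)).2 (Or.inl rfl)
        · show 2 ≤ (e (e.symm ⟨m, by omega⟩)).val
          rw [hsymm_val]; omega
        · show 2 ≤ (e (e.symm ⟨m + 1, h⟩)).val
          rw [hsymm_val]; omega
  have hwithin2 : ∀ x ∈ B2, ∀ y ∈ B2, Within H B2 x y := by
    intro x hx y hy
    have hx' : Within H B2 (e.symm ⟨2, by omega⟩) x := by
      have := hreach (e x).val hx (e x).isLt
      rwa [Fin.eta, e.symm_apply_apply] at this
    have hy' : Within H B2 (e.symm ⟨2, by omega⟩) y := by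
      have := hreach (e y).val hy (e y).isLt
      rwa [Fin.eta, e.symm_apply_apply] at this
    exact (within_symm hx').trans hy'
  set B : Fin 3 → Set W := fun i => if i.val = 0 then {a0} else if i.val = 1 then {a1} else B2
    with hBdef
  have hB0 : B 0 = {a0} := rfl
  have hB1 : B 1 = {a1} := rfl
  have hB2' : B 2 = B2 := rfl
  have hmem : ∀ i : Fin 3, ∀ w ∈ B i, (e w).val < 2 → w = a0 ∨ w = a1 := by
    intro i w hw hlt
    rcases i with ⟨iv, hi⟩
    interval_cases iv
    · exact Or.inl hw
    · exact Or.inr hw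
    · exact absurd hw (by simp [hBdef, hB2]; omega)
  have hvala0 : (e a0).val = 0 := hsymm_val 0 (by omega)
  have hvala1 : (e a1).val = 1 := hsymm_val 1 (by omega)
  have hminor : HasCompleteMinor H 3 := by
    refine ⟨B, ?_, ?_, ?_⟩
    · intro i
      rw [connected_induce_iff']
      rcases i with ⟨iv, hi⟩
      interval_cases iv
      · refine ⟨⟨a0, rfl⟩, ?_⟩
        rintro x (rfl : x = a0) y (rfl : y = a0)
        exact ReflTransGen.refl
      · refine ⟨⟨a1, rfl⟩, ?_⟩
        rintro x (rfl : x = a1) y (rfl : y = a1)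
        exact ReflTransGen.refl
      · refine ⟨⟨e.symm ⟨2, by omega⟩, ?_⟩, hwithin2⟩
        show 2 ≤ (e (e.symm ⟨2, by omega⟩)).val
        rw [hsymm_val]
    · intro i j hij
      rcases i with ⟨iv, hi⟩
      rcases j with ⟨jv, hj⟩
      have hne01 : a0 ≠ a1 := fun h => by
        have := congrArg (fun z => (e z).val) h
        simp only [hvala0, hvala1] at this
        omega
      have hd02 : Disjoint ({a0} : Set W) B2 := by
        rw [Set.disjoint_singleton_left, hB2]
        simp [hvala0]
      have hd12 : Disjoint ({a1} : Set W) B2 := by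
        rw [Set.disjoint_singleton_left, hB2]
        simp [hvala1]
      interval_cases iv <;> interval_cases jv <;>
        first
          | (exact absurd rfl hij)
          | (simp only [hB0, hB1, hB2'] at *)
      · exact Set.disjoint_singleton.2 hne01
      · exact hd02
      · exact Set.disjoint_singleton.2 hne01.symm
      · exact hd12
      · exact hd02.symm
      · exact hd12.symm
    · intro i j hij
      have hlast : n - 1 < n := by omega
      have hadj01 : H.Adj a0 a1 := by
        rw [ha0, ha1, hadj_symm]
        exact (cycleGraph_adj_nat h4 (by simp)).2 (Or.inl rfl)
      have hadj12 : H.Adj a1 (e.symm ⟨2, by omega⟩) := by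
        rw [ha1, hadj_symm]
        exact (cycleGraph_adj_nat h4 (by simp)).2 (Or.inl rfl)
      have hadj02 : H.Adj a0 (e.symm ⟨n - 1, hlast⟩) := by
        rw [ha0, hadj_symm]
        exact (cycleGraph_adj_nat h4 (by simp; omega)).2 (Or.inr ⟨rfl, rfl⟩)
      have hm2 : e.symm ⟨2, by omega⟩ ∈ B2 := by
        show 2 ≤ (e (e.symm ⟨2, by omega⟩)).val
        rw [hsymm_val]
      have hmlast : e.symm ⟨n - 1, hlast⟩ ∈ B2 := by
        show 2 ≤ (e (e.symm ⟨n - 1, hlast⟩)).val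
        rw [hsymm_val]
        omega
      rcases i with ⟨iv, hi⟩
      rcases j with ⟨jv, hj⟩
      interval_cases iv <;> interval_cases jv <;> first | (exact absurd rfl hij) | skip
      · exact ⟨a0, rfl, a1, rfl, hadj01⟩
      · exact ⟨a0, rfl, e.symm ⟨n - 1, hlast⟩, hmlast, hadj02⟩
      · exact ⟨a1, rfl, a0, rfl, hadj01.symm⟩
      · exact ⟨a1, rfl, e.symm ⟨2, by omega⟩, hm2, hadj12⟩
      · exact ⟨e.symm ⟨n - 1, hlast⟩, hmlast, a0, rfl, hadj02.symm⟩
      · exact ⟨e.symm ⟨2, by omega⟩, hm2, a1, rfl, hadj12.symm⟩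
  have hbdd : BddAbove {k | HasCompleteMinor H k} :=
    ⟨Fintype.card W, fun k hk => hasCompleteMinor_card_le H k hk⟩
  exact le_csSup hbdd hminor


end Aux

/-- A finite simple graph `G` is ωh-perfect (every induced subgraph has
Hadwiger number equal to its clique number) iff `G` is chordal. -/
theorem omega_hadwiger_perfect_iff_chordal {V : Type*} [Fintype V] (G : SimpleGraph V) :
    (∀ s : Set V, hadwigerNumber (G.induce s) = (G.induce s).cliqueNum) ↔ IsChordal G := by
  constructor
  · intro h
    by_contra hnc
    rw [IsChordal] at hnc
    push_neg at hnc
    obtain ⟨n, hn4, s, ⟨e⟩⟩ := hnc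
    have hf : Fintype ↥s := Fintype.ofFinite _
    have h1 := cliqueNum_eq_two_of_iso_cycle (G.induce s) hn4 e
    have h2 := hadwiger_ge_three_of_iso_cycle (G.induce s) hn4 e
    have h3 := h s
    omega
  · intro hch s
    have hf : Fintype ↥s := Fintype.ofFinite _
    exact hadwiger_eq_cliqueNum_of_chordal (G.induce s) (hch.induce s)
end

section
/- Every ωh-perfect graph is perfect; that is, if for every induced subgraph H of G the Hadwiger number of H equals the clique number of H, then for every induced subgraph H of G the chromatic number of H equals the clique number of H. -/
open SimpleGraph

namespace OHP

variable {V : Type*} (G : SimpleGraph V)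

/-- A walk from `x` to `y` of length `m` whose vertices (including endpoints) lie in `t`. -/
def AWk (t : Set V) (x y : V) (m : ℕ) (p : ℕ → V) : Prop :=
  p 0 = x ∧ p m = y ∧ (∀ i < m, G.Adj (p i) (p (i+1))) ∧ (∀ i ≤ m, p i ∈ t)

/-- A walk from `x` to `y` of length `m` whose interior vertices lie in `t`. -/
def IWk (t : Set V) (x y : V) (m : ℕ) (p : ℕ → V) : Prop :=
  p 0 = x ∧ p m = y ∧ (∀ i < m, G.Adj (p i) (p (i+1))) ∧ (∀ i, 0 < i → i < m → p i ∈ t)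

/-- Reachability within a set `t`. -/
def RIn (t : Set V) (x y : V) : Prop := ∃ m p, AWk G t x y m p

variable {G}

lemma RIn.refl {t : Set V} {x : V} (hx : x ∈ t) : RIn G t x x :=
  ⟨0, fun _ => x, rfl, rfl, fun i hi => absurd hi (Nat.not_lt_zero i), fun _ _ => hx⟩

lemma RIn.mem_left {t : Set V} {x y : V} (h : RIn G t x y) : x ∈ t := by
  obtain ⟨m, p, h1, _, _, h4⟩ := h
  simpa [h1] using h4 0 (Nat.zero_le m)

lemma RIn.mem_right {t : Set V} {x y : V} (h : RIn G t x y) : y ∈ t := by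
  obtain ⟨m, p, _, h2, _, h4⟩ := h
  simpa [h2] using h4 m le_rfl

lemma RIn.symm {t : Set V} {x y : V} (h : RIn G t x y) : RIn G t y x := by
  obtain ⟨m, p, h1, h2, h3, h4⟩ := h
  refine ⟨m, fun i => p (m - i), by simp [h2], by simp [h1], fun i hi => ?_, fun i hi => h4 _ (Nat.sub_le _ _)⟩
  have e : m - (i+1) + 1 = m - i := by omega
  have h := (h3 (m - (i+1)) (by omega)).symm
  rw [e] at h
  exact h

lemma RIn.trans {t : Set V} {x y z : V} (h : RIn G t x y) (h' : RIn G t y z) :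
    RIn G t x z := by
  obtain ⟨m, p, h1, h2, h3, h4⟩ := h
  obtain ⟨m', p', g1, g2, g3, g4⟩ := h'
  refine ⟨m + m', fun i => if i ≤ m then p i else p' (i - m), by simp [h1], ?_, ?_, ?_⟩
  · by_cases hm : m + m' ≤ m
    · have : m' = 0 := by omega
      subst this; simp [hm, h2, g1 ▸ g2]
    · simp [hm, g2]
  · intro i hi
    by_cases h5 : i + 1 ≤ m
    · simp only [if_pos h5, if_pos (by omega : i ≤ m)]
      exact h3 i (by omega)
    · by_cases h6 : i ≤ m
      · have : i = m := by omega
        subst this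
        simp only [if_pos le_rfl, if_neg h5]
        have := g3 0 (by omega)
        simpa [g1, h2] using this
      · simp only [if_neg h5, if_neg h6]
        have e : i + 1 - m = (i - m) + 1 := by omega
        rw [e]
        exact g3 (i - m) (by omega)
  · intro i _
    by_cases h6 : i ≤ m
    · simpa [h6] using h4 i h6
    · simpa [h6] using g4 (i - m) (by omega)

lemma RIn.mono {t t' : Set V} (hsub : t ⊆ t') {x y : V} (h : RIn G t x y) :
    RIn G t' x y := by
  obtain ⟨m, p, h1, h2, h3, h4⟩ := h
  exact ⟨m, p, h1, h2, h3, fun i hi => hsub (h4 i hi)⟩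

lemma RIn.step {t : Set V} {x y z : V} (h : RIn G t x y) (ha : G.Adj y z) (hz : z ∈ t) :
    RIn G t x z := by
  refine h.trans ⟨1, fun i => if i = 0 then y else z, by simp, by simp, ?_, ?_⟩
  · intro i hi
    have : i = 0 := by omega
    simp [this, ha]
  · intro i hi
    by_cases h0 : i = 0 <;> simp [h0, h.mem_right, hz]

/-- All vertices of a walk from `a` lie in the component of `a`; hence reachability
can be upgraded to reachability within the component. -/
lemma RIn.to_comp {t : Set V} {a y : V} (h : RIn G t a y) :
    RIn G {w | RIn G t a w} a y := by
  obtain ⟨m, p, h1, h2, h3, h4⟩ := h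
  refine ⟨m, p, h1, h2, h3, fun i hi => ?_⟩
  -- prefix walk
  induction i with
  | zero => simpa [h1] using RIn.refl (show a ∈ t by simpa [h1] using h4 0 (Nat.zero_le m))
  | succ k ih =>
      have hk : RIn G t a (p k) := ih (by omega)
      exact hk.step (h3 k (by omega)) (h4 _ hi)

lemma IWk.splice_eq {t : Set V} {x y : V} {m : ℕ} {p : ℕ → V} {i d : ℕ}
    (h : IWk G t x y m p) (hd : 1 ≤ d) (hdm : i + d ≤ m) (heq : p i = p (i + d)) :
    ∃ q, IWk G t x y (m - d) q := by
  obtain ⟨h1, h2, h3, h4⟩ := h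
  refine ⟨fun tt => if tt ≤ i then p tt else p (tt + d), by simpa using h1, ?_, ?_, ?_⟩
  · by_cases hc : m - d ≤ i
    · have hi : i = m - d := by omega
      have : i + d = m := by omega
      simp only [← hi, heq, this, h2, ite_self]
    · have : m - d + d = m := by omega
      simp [hc, this, h2]
  · intro tt htt
    by_cases hc : tt + 1 ≤ i
    · simp only [if_pos hc, if_pos (by omega : tt ≤ i)]
      exact h3 tt (by omega)
    · by_cases hc2 : tt ≤ i
      · have : tt = i := by omega
        subst this
        simp only [if_pos le_rfl, if_neg hc, heq]
        have e : tt + 1 + d = tt + d + 1 := by omega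
        rw [e]
        exact h3 (tt + d) (by omega)
      · simp only [if_neg hc, if_neg hc2]
        have e : tt + 1 + d = tt + d + 1 := by omega
        rw [e]
        exact h3 (tt + d) (by omega)
  · intro tt ht0 htm
    by_cases hc : tt ≤ i
    · simpa [hc] using h4 tt ht0 (by omega)
    · simpa [hc] using h4 (tt + d) (by omega) (by omega)

lemma IWk.splice_adj {t : Set V} {x y : V} {m : ℕ} {p : ℕ → V} {i d : ℕ}
    (h : IWk G t x y m p) (hd : 2 ≤ d) (hdm : i + d ≤ m) (hadj : G.Adj (p i) (p (i + d))) :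
    ∃ q, IWk G t x y (m - d + 1) q := by
  obtain ⟨h1, h2, h3, h4⟩ := h
  refine ⟨fun tt => if tt ≤ i then p tt else p (tt + d - 1), by simpa using h1, ?_, ?_, ?_⟩
  · have hc : ¬ (m - d + 1 ≤ i) := by omega
    have e : m - d + 1 + d - 1 = m := by omega
    simp [hc, e, h2]
  · intro tt htt
    by_cases hc : tt + 1 ≤ i
    · simp only [if_pos hc, if_pos (by omega : tt ≤ i)]
      exact h3 tt (by omega)
    · by_cases hc2 : tt ≤ i
      · have : tt = i := by omega
        subst this
        have e : tt + 1 + d - 1 = tt + d := by omega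
        simp only [if_pos le_rfl, if_neg hc, e]
        exact hadj
      · simp only [if_neg hc, if_neg hc2]
        have e : tt + 1 + d - 1 = tt + d - 1 + 1 := by omega
        rw [e]
        exact h3 (tt + d - 1) (by omega)
  · intro tt ht0 htm
    by_cases hc : tt ≤ i
    · simpa [hc] using h4 tt ht0 (by omega)
    · simpa [hc] using h4 (tt + d - 1) (by omega) (by omega)

/-- From any walk with interior in `t` between distinct non-adjacent vertices, extract an
induced path. -/
lemma exists_min_path {t : Set V} {x y : V} (hxy : x ≠ y) (hna : ¬ G.Adj x y)
    (h : ∃ m p, IWk G t x y m p) :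
    ∃ m p, IWk G t x y m p ∧ 2 ≤ m ∧
      (∀ i j, i < j → j ≤ m → p i ≠ p j) ∧
      (∀ i j, i + 1 < j → j ≤ m → ¬ G.Adj (p i) (p j)) := by
  classical
  have hex : ∃ m, ∃ p, IWk G t x y m p := h
  let m := Nat.find hex
  obtain ⟨p, hp⟩ : ∃ p, IWk G t x y m p := Nat.find_spec hex
  have hmin : ∀ k < m, ¬ ∃ p, IWk G t x y k p := fun k hk => Nat.find_min hex hk
  have hm2 : 2 ≤ m := by
    rcases Nat.lt_or_ge m 2 with hlt | hge
    · interval_cases m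
      · exact absurd (hp.1.symm.trans hp.2.1) hxy
      · exact absurd (by have := hp.2.2.1 0 (by omega); rwa [hp.1, hp.2.1] at this) hna
    · exact hge
  refine ⟨m, p, hp, hm2, ?_, ?_⟩
  · intro i j hij hjm heq
    obtain ⟨q, hq⟩ := hp.splice_eq (d := j - i) (i := i) (by omega) (by omega)
      (by rwa [show i + (j - i) = j by omega])
    exact hmin (m - (j - i)) (by omega) ⟨q, hq⟩
  · intro i j hij hjm hadj
    obtain ⟨q, hq⟩ := hp.splice_adj (d := j - i) (i := i) (by omega) (by omega)
      (by rwa [show i + (j - i) = j by omega])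
    exact hmin (m - (j - i) + 1) (by omega) ⟨q, hq⟩

section Graphs

variable {W : Type*}

lemma hasCompleteMinor_le_card [Fintype W] {H : SimpleGraph W} {k : ℕ}
    (hk : HasCompleteMinor H k) : k ≤ Fintype.card W := by
  classical
  obtain ⟨B, hconn, hdisj, -⟩ := hk
  have hne : ∀ i, ∃ w, w ∈ B i := by
    intro i
    have := (hconn i).nonempty
    obtain ⟨⟨w, hw⟩⟩ := this
    exact ⟨w, hw⟩
  choose r hr using hne
  have hinj : Function.Injective r := by
    intro i j hij
    by_contra hne
    exact Set.disjoint_left.mp (hdisj i j hne) (hr i) (hij ▸ hr j)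
  simpa using Fintype.card_le_of_injective r hinj

lemma bddAbove_completeMinor [Fintype W] (H : SimpleGraph W) :
    BddAbove {k | HasCompleteMinor H k} :=
  ⟨Fintype.card W, fun _ hk => hasCompleteMinor_le_card hk⟩

lemma le_hadwigerNumber [Fintype W] (H : SimpleGraph W) {k : ℕ}
    (hk : HasCompleteMinor H k) : k ≤ hadwigerNumber H :=
  le_csSup (bddAbove_completeMinor H) hk

lemma cliqueNum_le_two_of_triangle_free [Fintype W] (H : SimpleGraph W)
    (htri : ∀ u v w : W, H.Adj u v → H.Adj v w → H.Adj u w → False) :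
    H.cliqueNum ≤ 2 := by
  classical
  have hne : {n | ∃ s, H.IsNClique n s}.Nonempty :=
    ⟨0, ∅, SimpleGraph.isNClique_empty.mpr rfl⟩
  apply csSup_le hne
  rintro n ⟨F, hF⟩
  by_contra hn
  push_neg at hn
  have h3 : 3 ≤ F.card := by rw [hF.card_eq]; omega
  obtain ⟨u, hu⟩ : F.Nonempty := Finset.card_pos.mp (show 0 < F.card by omega)
  obtain ⟨v, hv, hvu⟩ := Finset.exists_mem_ne (show 1 < F.card by omega) u
  have hcard2 : 0 < ((F.erase u).erase v).card := by
    rw [Finset.card_erase_of_mem (Finset.mem_erase.mpr ⟨hvu, hv⟩), Finset.card_erase_of_mem hu]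
    omega
  obtain ⟨w, hw⟩ := Finset.card_pos.mp hcard2
  rw [Finset.mem_erase, Finset.mem_erase] at hw
  obtain ⟨hwv, hwu, hwF⟩ := hw
  exact htri u v w (hF.isClique hu hv (Ne.symm hvu)) (hF.isClique hv hwF (Ne.symm hwv))
    (hF.isClique hu hwF (Ne.symm hwu))

/-- The induced graph on the image of a "chain" is connected. -/
lemma induce_connected_of_chain (H : SimpleGraph W) (f : ℕ → W) (n : ℕ)
    (hadj : ∀ i < n, H.Adj (f i) (f (i+1))) :
    (H.induce (f '' Set.Iic n)).Connected := by
  have hmem : ∀ i, i ≤ n → f i ∈ f '' Set.Iic n := fun i hi => ⟨i, hi, rfl⟩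
  have key : ∀ i, ∀ hi : i ≤ n, (H.induce (f '' Set.Iic n)).Reachable ⟨f 0, hmem 0 (Nat.zero_le n)⟩
      ⟨f i, hmem i hi⟩ := by
    intro i hi
    induction i with
    | zero => exact SimpleGraph.Reachable.refl _
    | succ j ih =>
        refine (ih (by omega)).trans ?_
        have : (H.induce (f '' Set.Iic n)).Adj ⟨f j, hmem j (by omega)⟩ ⟨f (j+1), hmem _ hi⟩ := by
          simp only [SimpleGraph.comap_adj, Function.Embedding.coe_subtype]
          exact hadj j (by omega)
        exact this.reachable
  haveI : Nonempty ↥(f '' Set.Iic n) := ⟨⟨f 0, hmem 0 (Nat.zero_le n)⟩⟩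
  constructor
  rintro ⟨u, hu⟩ ⟨v, hv⟩
  obtain ⟨i, hi, rfl⟩ := hu
  obtain ⟨j, hj, rfl⟩ := hv
  exact (key i hi).symm.trans (key j hj)

end Graphs

section CliqueTransfer

variable {V : Type*} {G : SimpleGraph V}

lemma clique_card_le_cliqueNum_induce [Fintype V] {t : Set V} {C : Finset V}
    (hsub : ∀ c ∈ C, c ∈ t) (hcl : G.IsClique ↑C) : C.card ≤ (G.induce t).cliqueNum := by
  classical
  haveI : Fintype ↥t := Fintype.ofFinite ↥t
  let e : {c // c ∈ C} ↪ ↥t :=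
    ⟨fun c => ⟨c.1, hsub _ c.2⟩, fun a b hab => Subtype.ext (by
      simpa using congrArg Subtype.val hab)⟩
  let C' : Finset ↥t := C.attach.map e
  have hclique : (G.induce t).IsClique ↑C' := by
    rintro ⟨u, hu⟩ hu' ⟨v, hv⟩ hv' hne
    simp only [SimpleGraph.comap_adj, Function.Embedding.coe_subtype]
    have hu'' : u ∈ C := by
      obtain ⟨⟨c, hc⟩, -, hce⟩ := Finset.mem_map.mp (by exact_mod_cast hu')
      cases hce; exact hc
    have hv'' : v ∈ C := by
      obtain ⟨⟨c, hc⟩, -, hce⟩ := Finset.mem_map.mp (by exact_mod_cast hv')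
      cases hce; exact hc
    exact hcl hu'' hv'' (fun h => hne (Subtype.ext h))
  have hcard : C'.card = C.card := by simp [C']
  calc C.card = C'.card := hcard.symm
    _ ≤ (G.induce t).cliqueNum := SimpleGraph.IsClique.card_le_cliqueNum (tc := hclique)

lemma cliqueNum_induce_mono [Fintype V] {t₁ t₂ : Set V} (hsub : t₁ ⊆ t₂) :
    (G.induce t₁).cliqueNum ≤ (G.induce t₂).cliqueNum := by
  classical
  haveI : Fintype ↥t₁ := Fintype.ofFinite ↥t₁
  obtain ⟨C, hC⟩ := SimpleGraph.exists_isNClique_cliqueNum (G := G.induce t₁)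
  have hcard : (C.image Subtype.val).card = C.card := Finset.card_image_of_injective _ Subtype.val_injective
  rw [← hC.card_eq, ← hcard]
  apply clique_card_le_cliqueNum_induce
  · intro c hc
    obtain ⟨⟨c', hc'⟩, -, rfl⟩ := Finset.mem_image.mp hc
    exact hsub hc'
  · rintro u hu v hv hne
    simp only [Finset.coe_image, Set.mem_image] at hu hv
    obtain ⟨⟨u', hu'⟩, hum, rfl⟩ := hu
    obtain ⟨⟨v', hv'⟩, hvm, rfl⟩ := hv
    have := hC.isClique hum hvm (fun h => hne (congrArg Subtype.val h))
    simpa using this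

end CliqueTransfer

section Core

variable {V : Type*} {G : SimpleGraph V}

lemma IWk.of_neighbors {A : Set V} {x y u₁ u₂ : V} {m : ℕ} {p : ℕ → V}
    (h : AWk G A u₁ u₂ m p) (hx : G.Adj x u₁) (hy : G.Adj u₂ y) :
    ∃ m' p', IWk G A x y m' p' := by
  obtain ⟨h1, h2, h3, h4⟩ := h
  refine ⟨m + 2, fun i => if i = 0 then x else if i ≤ m + 1 then p (i - 1) else y,
    by simp, ?_, ?_, ?_⟩
  · have c1 : ¬ (m + 2 = 0) := by omega
    have c2 : ¬ (m + 2 ≤ m + 1) := by omega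
    simp [c1, c2]
  · intro i hi
    by_cases h0 : i = 0
    · subst h0
      have c : (0 : ℕ) + 1 ≤ m + 1 := by omega
      simpa [c, h1] using hx
    · by_cases hm : i ≤ m
      · have c1 : i ≤ m + 1 := by omega
        have c2 : i + 1 ≤ m + 1 := by omega
        have c3 : ¬ (i + 1 = 0) := by omega
        simp only [if_neg h0, if_pos c1, if_neg c3, if_pos c2]
        have e : i - 1 + 1 = i := by omega
        have := h3 (i - 1) (by omega)
        rwa [e] at this
      · have hieq : i = m + 1 := by omega
        subst hieq
        have c1 : m + 1 ≤ m + 1 := le_rfl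
        have c2 : ¬ (m + 1 + 1 ≤ m + 1) := by omega
        have c3 : ¬ (m + 1 = 0) := by omega
        have c4 : ¬ (m + 1 + 1 = 0) := by omega
        simp only [if_neg c3, if_pos c1, if_neg c4, if_neg c2]
        have e : m + 1 - 1 = m := by omega
        rw [e, h2]
        exact hy
  · intro i hi0 him
    have c1 : ¬ (i = 0) := by omega
    by_cases c2 : i ≤ m + 1
    · simp only [if_neg c1, if_pos c2]
      exact h4 (i - 1) (by omega)
    · omega

lemma cycle_contradiction [Fintype V]
    (h : ∀ s : Set V, hadwigerNumber (G.induce s) = (G.induce s).cliqueNum)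
    {A B : Set V} {x y : V}
    (hAB : ∀ u, u ∈ A → u ∈ B → False)
    (hnadj : ∀ u v, u ∈ A → v ∈ B → ¬ G.Adj u v)
    (hxA : x ∉ A) (hxB : x ∉ B) (hyA : y ∉ A) (hyB : y ∉ B)
    (hxy : x ≠ y) (hna : ¬ G.Adj x y)
    (hP : ∃ m p, IWk G A x y m p) (hQ : ∃ m p, IWk G B x y m p) : False := by
  classical
  obtain ⟨k, p, hp, hk2, pinj, pchord⟩ := exists_min_path hxy hna hP
  obtain ⟨l, q, hq, hl2, qinj, qchord⟩ := exists_min_path hxy hna hQ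
  obtain ⟨hp0, hpk, hpadj, hpmem⟩ := hp
  obtain ⟨hq0, hql, hqadj, hqmem⟩ := hq
  have padj : ∀ i j, i ≤ k → j ≤ k → G.Adj (p i) (p j) → i + 1 = j ∨ j + 1 = i := by
    intro i j hi hj hadj
    rcases Nat.lt_trichotomy i j with hlt | rfl | hgt
    · rcases Nat.lt_or_ge (i+1) j with hc | hc
      · exact absurd hadj (pchord i j hc hj)
      · omega
    · exact absurd hadj (G.irrefl)
    · rcases Nat.lt_or_ge (j+1) i with hc | hc
      · exact absurd hadj.symm (pchord j i hc hi)
      · omega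
  have qadj : ∀ i j, i ≤ l → j ≤ l → G.Adj (q i) (q j) → i + 1 = j ∨ j + 1 = i := by
    intro i j hi hj hadj
    rcases Nat.lt_trichotomy i j with hlt | rfl | hgt
    · rcases Nat.lt_or_ge (i+1) j with hc | hc
      · exact absurd hadj (qchord i j hc hj)
      · omega
    · exact absurd hadj (G.irrefl)
    · rcases Nat.lt_or_ge (j+1) i with hc | hc
      · exact absurd hadj.symm (qchord j i hc hi)
      · omega
  have pinjeq : ∀ i j, i ≤ k → j ≤ k → p i = p j → i = j := by
    intro i j hi hj he
    rcases Nat.lt_trichotomy i j with hlt | rfl | hgt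
    · exact absurd he (pinj i j hlt hj)
    · rfl
    · exact absurd he.symm (pinj j i hgt hi)
  have qinjeq : ∀ i j, i ≤ l → j ≤ l → q i = q j → i = j := by
    intro i j hi hj he
    rcases Nat.lt_trichotomy i j with hlt | rfl | hgt
    · exact absurd he (qinj i j hlt hj)
    · rfl
    · exact absurd he.symm (qinj j i hgt hi)
  have pqeq : ∀ i j, i ≤ k → j ≤ l → p i = q j → (i = 0 ∧ j = 0) ∨ (i = k ∧ j = l) := by
    intro i j hi hj he
    have hicase : i = 0 ∨ i = k ∨ (0 < i ∧ i < k) := by omega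
    have hjcase : j = 0 ∨ j = l ∨ (0 < j ∧ j < l) := by omega
    rcases hicase with rfl | rfl | ⟨hi1, hi2⟩ <;> rcases hjcase with rfl | rfl | ⟨hj1, hj2⟩
    · exact Or.inl ⟨rfl, rfl⟩
    · rw [hp0, hql] at he
      exact absurd he hxy
    · rw [hp0] at he
      exact absurd (he ▸ hqmem j hj1 hj2) hxB
    · rw [hpk, hq0] at he
      exact absurd he.symm hxy
    · exact Or.inr ⟨rfl, rfl⟩
    · rw [hpk] at he
      exact absurd (he ▸ hqmem j hj1 hj2) hyB
    · rw [hq0] at he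
      exact absurd (he ▸ hpmem i hi1 hi2) hxA
    · rw [hql] at he
      exact absurd (he ▸ hpmem i hi1 hi2) hyA
    · exact (hAB _ (hpmem i hi1 hi2) (he ▸ hqmem j hj1 hj2)).elim
  have pqadj : ∀ i j, i ≤ k → j ≤ l → G.Adj (p i) (q j) →
      (i = 0 ∧ j = 1) ∨ (i = 1 ∧ j = 0) ∨ (i = k ∧ j + 1 = l) ∨ (i + 1 = k ∧ j = l) := by
    intro i j hi hj hadj
    have hicase : i = 0 ∨ i = k ∨ (0 < i ∧ i < k) := by omega
    have hjcase : j = 0 ∨ j = l ∨ (0 < j ∧ j < l) := by omega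
    rcases hicase with rfl | rfl | ⟨hi1, hi2⟩ <;> rcases hjcase with rfl | rfl | ⟨hj1, hj2⟩
    · rw [hp0, ← hq0] at hadj
      exact absurd hadj (G.irrefl)
    · rw [hp0, hql] at hadj
      exact absurd hadj hna
    · rw [hp0, ← hq0] at hadj
      have := qadj 0 j (by omega) (by omega) hadj
      exact Or.inl ⟨rfl, by omega⟩
    · rw [hpk, hq0] at hadj
      exact absurd hadj.symm hna
    · rw [hpk, hql] at hadj
      exact absurd hadj (G.irrefl)
    · rw [hpk, ← hql] at hadj
      have := qadj l j le_rfl (by omega) hadj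
      exact Or.inr (Or.inr (Or.inl ⟨rfl, by omega⟩))
    · rw [hq0, ← hp0] at hadj
      have := padj i 0 hi (by omega) hadj
      exact Or.inr (Or.inl ⟨by omega, rfl⟩)
    · rw [hql, ← hpk] at hadj
      have := padj i k hi le_rfl hadj
      exact Or.inr (Or.inr (Or.inr ⟨by omega, rfl⟩))
    · exact absurd hadj (hnadj _ _ (hpmem i hi1 hi2) (hqmem j hj1 hj2))
  set s₀ : Set V := (p '' Set.Iic k) ∪ (q '' Set.Iic l) with hs₀
  have hmemP : ∀ i, i ≤ k → p i ∈ s₀ := by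
    intro i hi
    rw [hs₀]
    exact Set.mem_union_left _ ⟨i, hi, rfl⟩
  have hmemQ : ∀ j, j ≤ l → q j ∈ s₀ := by
    intro j hj
    rw [hs₀]
    exact Set.mem_union_right _ ⟨j, hj, rfl⟩
  have hcls : ∀ z ∈ s₀, (∃ i, i ≤ k ∧ z = p i) ∨ (∃ j, j ≤ l ∧ z = q j) := by
    rw [hs₀]
    rintro z (⟨i, hi, rfl⟩ | ⟨j, hj, rfl⟩)
    · exact Or.inl ⟨i, hi, rfl⟩
    · exact Or.inr ⟨j, hj, rfl⟩
  have tri : ∀ u v w : ↥s₀, (G.induce s₀).Adj u v → (G.induce s₀).Adj v w →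
      (G.induce s₀).Adj u w → False := by
    rintro ⟨u, hu⟩ ⟨v, hv⟩ ⟨w, hw⟩ huv hvw huw
    simp only [SimpleGraph.comap_adj, Function.Embedding.coe_subtype] at huv hvw huw
    rcases hcls u hu with ⟨i1, hi1, rfl⟩ | ⟨j1, hj1, rfl⟩ <;>
      rcases hcls v hv with ⟨i2, hi2, rfl⟩ | ⟨j2, hj2, rfl⟩ <;>
      rcases hcls w hw with ⟨i3, hi3, rfl⟩ | ⟨j3, hj3, rfl⟩
    · have e1 := padj i1 i2 hi1 hi2 huv
      have e2 := padj i2 i3 hi2 hi3 hvw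
      have e3 := padj i1 i3 hi1 hi3 huw
      omega
    · have e1 := padj i1 i2 hi1 hi2 huv
      have e2 := pqadj i2 j3 hi2 hj3 hvw
      have e3 := pqadj i1 j3 hi1 hj3 huw
      omega
    · have e1 := pqadj i1 j2 hi1 hj2 huv
      have e2 := pqadj i3 j2 hi3 hj2 hvw.symm
      have e3 := padj i1 i3 hi1 hi3 huw
      omega
    · have e1 := pqadj i1 j2 hi1 hj2 huv
      have e2 := qadj j2 j3 hj2 hj3 hvw
      have e3 := pqadj i1 j3 hi1 hj3 huw
      omega
    · have e1 := pqadj i2 j1 hi2 hj1 huv.symm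
      have e2 := padj i2 i3 hi2 hi3 hvw
      have e3 := pqadj i3 j1 hi3 hj1 huw.symm
      omega
    · have e1 := pqadj i2 j1 hi2 hj1 huv.symm
      have e2 := pqadj i2 j3 hi2 hj3 hvw
      have e3 := qadj j1 j3 hj1 hj3 huw
      omega
    · have e1 := qadj j1 j2 hj1 hj2 huv
      have e2 := pqadj i3 j2 hi3 hj2 hvw.symm
      have e3 := pqadj i3 j1 hi3 hj1 huw.symm
      omega
    · have e1 := qadj j1 j2 hj1 hj2 huv
      have e2 := qadj j2 j3 hj2 hj3 hvw
      have e3 := qadj j1 j3 hj1 hj3 huw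
      omega
  haveI : Fintype ↥s₀ := Fintype.ofFinite _
  have hcl2 : (G.induce s₀).cliqueNum ≤ 2 := cliqueNum_le_two_of_triangle_free _ tri
  have hminor : HasCompleteMinor (G.induce s₀) 3 := by
    let f0 : ℕ → ↥s₀ := fun i => ⟨p (min i (k-1)), hmemP _ (le_trans (min_le_right _ _) (by omega))⟩
    let f1 : ℕ → ↥s₀ := fun _ => ⟨y, hpk ▸ hmemP k le_rfl⟩
    let f2 : ℕ → ↥s₀ := fun i => ⟨q (min (i+1) (l-1)), hmemQ _ (le_trans (min_le_right _ _) (by omega))⟩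
    have hval0 : ∀ i, i ≤ k - 1 → (f0 i).1 = p i := by
      intro i hi
      simp only [f0, min_eq_left hi]
    have hval2 : ∀ i, i ≤ l - 2 → (f2 i).1 = q (i+1) := by
      intro i hi
      simp only [f2, min_eq_left (by omega : i + 1 ≤ l - 1)]
    have hmem0 : ∀ z, z ∈ f0 '' Set.Iic (k-1) → ∃ i, i ≤ k - 1 ∧ z.1 = p i := by
      rintro z ⟨i, hi, rfl⟩
      exact ⟨i, hi, hval0 i hi⟩
    have hmem1 : ∀ z, z ∈ f1 '' Set.Iic 0 → z.1 = y := by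
      rintro z ⟨i, hi, rfl⟩
      rfl
    have hmem2 : ∀ z, z ∈ f2 '' Set.Iic (l-2) → ∃ j, 1 ≤ j ∧ j ≤ l - 1 ∧ z.1 = q j := by
      rintro z ⟨i, hi, rfl⟩
      have hi' : i ≤ l - 2 := hi
      exact ⟨i + 1, by omega, by omega, hval2 i hi'⟩
    refine ⟨![f0 '' Set.Iic (k-1), f1 '' Set.Iic 0, f2 '' Set.Iic (l-2)], ?_, ?_, ?_⟩
    · intro i
      fin_cases i
      · apply induce_connected_of_chain
        intro i hi
        simp only [f0, SimpleGraph.comap_adj, Function.Embedding.coe_subtype]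
        rw [min_eq_left (by omega : i ≤ k - 1), min_eq_left (by omega : i + 1 ≤ k - 1)]
        exact hpadj i (by omega)
      · apply induce_connected_of_chain
        intro i hi
        omega
      · apply induce_connected_of_chain
        intro i hi
        simp only [f2, SimpleGraph.comap_adj, Function.Embedding.coe_subtype]
        rw [min_eq_left (by omega : i + 1 ≤ l - 1), min_eq_left (by omega : i + 1 + 1 ≤ l - 1)]
        exact hqadj (i+1) (by omega)
    · have d01 : Disjoint (f0 '' Set.Iic (k-1)) (f1 '' Set.Iic 0) := by
        rw [Set.disjoint_left]
        rintro z hz0 hz1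
        obtain ⟨i, hi, he0⟩ := hmem0 z hz0
        have he1 := hmem1 z hz1
        have : p i = p k := by rw [← he0, he1, hpk]
        have := pinjeq i k (by omega) le_rfl this
        omega
      have d02 : Disjoint (f0 '' Set.Iic (k-1)) (f2 '' Set.Iic (l-2)) := by
        rw [Set.disjoint_left]
        rintro z hz0 hz2
        obtain ⟨i, hi, he0⟩ := hmem0 z hz0
        obtain ⟨j, hj1, hj2, he2⟩ := hmem2 z hz2
        have : p i = q j := by rw [← he0, he2]
        have := pqeq i j (by omega) (by omega) this
        omega
      have d12 : Disjoint (f1 '' Set.Iic 0) (f2 '' Set.Iic (l-2)) := by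
        rw [Set.disjoint_left]
        rintro z hz1 hz2
        obtain ⟨j, hj1, hj2, he2⟩ := hmem2 z hz2
        have he1 := hmem1 z hz1
        have : q l = q j := by rw [hql, ← he1, he2]
        have := qinjeq l j le_rfl (by omega) this
        omega
      intro i j hij
      fin_cases i <;> fin_cases j <;>
        first
          | exact absurd rfl hij
          | exact d01
          | exact d02
          | exact d12
          | exact d01.symm
          | exact d02.symm
          | exact d12.symm
    · have e01 : ∃ u ∈ f0 '' Set.Iic (k-1), ∃ v ∈ f1 '' Set.Iic 0,
          (G.induce s₀).Adj u v := by
        refine ⟨f0 (k-1), ⟨k-1, Set.mem_Iic.mpr le_rfl, rfl⟩, f1 0, ⟨0, Set.mem_Iic.mpr le_rfl, rfl⟩, ?_⟩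
        simp only [f0, f1, SimpleGraph.comap_adj, Function.Embedding.coe_subtype]
        rw [min_self]
        show G.Adj (p (k-1)) y
        rw [← hpk]
        have e : k - 1 + 1 = k := by omega
        have := hpadj (k-1) (by omega)
        rwa [e] at this
      have e02 : ∃ u ∈ f0 '' Set.Iic (k-1), ∃ v ∈ f2 '' Set.Iic (l-2),
          (G.induce s₀).Adj u v := by
        refine ⟨f0 0, ⟨0, Set.mem_Iic.mpr (by omega), rfl⟩, f2 0, ⟨0, Set.mem_Iic.mpr (by omega), rfl⟩, ?_⟩
        simp only [f0, f2, SimpleGraph.comap_adj, Function.Embedding.coe_subtype]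
        rw [min_eq_left (by omega : (0:ℕ) ≤ k - 1), min_eq_left (by omega : (0:ℕ) + 1 ≤ l - 1)]
        show G.Adj (p 0) (q 1)
        rw [hp0, ← hq0]
        exact hqadj 0 (by omega)
      have e12 : ∃ u ∈ f1 '' Set.Iic 0, ∃ v ∈ f2 '' Set.Iic (l-2),
          (G.induce s₀).Adj u v := by
        refine ⟨f1 0, ⟨0, Set.mem_Iic.mpr le_rfl, rfl⟩, f2 (l-2), ⟨l-2, Set.mem_Iic.mpr le_rfl, rfl⟩, ?_⟩
        simp only [f1, f2, SimpleGraph.comap_adj, Function.Embedding.coe_subtype]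
        rw [min_eq_left (by omega : l - 2 + 1 ≤ l - 1)]
        show G.Adj y (q (l-2+1))
        rw [← hql]
        have e : l - 2 + 1 = l - 1 := by omega
        have e2 : l - 1 + 1 = l := by omega
        rw [e]
        have := hqadj (l-1) (by omega)
        rw [e2] at this
        exact this.symm
      intro i j hij
      have sw : ∀ {X Y : Set ↥s₀}, (∃ u ∈ X, ∃ v ∈ Y, (G.induce s₀).Adj u v) →
          ∃ u ∈ Y, ∃ v ∈ X, (G.induce s₀).Adj u v := by
        rintro X Y ⟨u, hu, v, hv, huv⟩
        exact ⟨v, hv, u, hu, huv.symm⟩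
      fin_cases i <;> fin_cases j <;>
        first
          | exact absurd rfl hij
          | exact e01
          | exact e02
          | exact e12
          | exact sw e01
          | exact sw e02
          | exact sw e12
  have h3 : 3 ≤ hadwigerNumber (G.induce s₀) := le_hadwigerNumber _ hminor
  rw [h s₀] at h3
  omega

end Core

section Dirac

variable {V : Type*} {G : SimpleGraph V}

/-- `v` is a simplicial vertex of the subgraph of `G` induced on `s`. -/
def Simp (G : SimpleGraph V) (s : Set V) (v : V) : Prop :=
  v ∈ s ∧ ∀ u w, u ∈ s → w ∈ s → G.Adj v u → G.Adj v w → u ≠ w → G.Adj u w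

lemma trivial_sep {s : Set V} {a b : V} (hab : a ≠ b) (hnadj : ¬ G.Adj a b) :
    ¬ RIn G (s \ (s \ {a, b})) a b := by
  rintro ⟨m, p, h1, h2, h3, h4⟩
  rcases Nat.eq_zero_or_pos m with rfl | hm
  · exact hab (h1.symm.trans h2)
  · have h1' : p 1 ∈ ({a, b} : Set V) := by
      have := h4 1 (by omega)
      simp only [Set.mem_diff, Set.mem_insert_iff, Set.mem_singleton_iff] at this ⊢
      tauto
    have hadj : G.Adj a (p 1) := h1 ▸ h3 0 (by omega)
    rcases h1' with he | he
    · rw [he] at hadj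
      exact G.irrefl hadj
    · rw [he] at hadj
      exact hnadj hadj

lemma reach_neighbor {t : Set V} {a b x : V}
    (hS : ¬ RIn G t a b) (hax : a ≠ x) (hbx : b ≠ x)
    (hR : RIn G (insert x t) a b) :
    ∃ u, RIn G t a u ∧ G.Adj x u := by
  classical
  obtain ⟨m, p, h1, h2, h3, h4⟩ := hR
  have claim : ∀ i ≤ m, (∀ kk, kk ≤ i → p kk ≠ x) → RIn G t a (p i) := by
    intro i
    induction i with
    | zero =>
        intro _ hno
        have : p 0 ∈ insert x t := h4 0 (by omega)
        rw [h1] at this ⊢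
        rcases Set.mem_insert_iff.mp this with he | he
        · exact absurd he hax
        · exact RIn.refl he
    | succ j ih =>
        intro hi hno
        have hj : RIn G t a (p j) := ih (by omega) (fun kk hkk => hno kk (by omega))
        have hmem : p (j+1) ∈ insert x t := h4 (j+1) hi
        rcases Set.mem_insert_iff.mp hmem with he | he
        · exact absurd he (hno (j+1) le_rfl)
        · exact hj.step (h3 j (by omega)) he
  by_cases hall : ∀ kk, kk ≤ m → p kk ≠ x
  · exact absurd (h2 ▸ claim m le_rfl hall) hS
  · push_neg at hall
    obtain ⟨kk, hkkm, hkkx⟩ := hall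
    have hex : ∃ i, p i = x := ⟨kk, hkkx⟩
    let i := Nat.find hex
    have hi : p i = x := Nat.find_spec hex
    have hile : i ≤ m := le_trans (Nat.find_min' hex hkkx) hkkm
    have hi0 : i ≠ 0 := by
      intro he
      rw [he, h1] at hi
      exact hax hi
    have him : i ≠ m := by
      intro he
      rw [he, h2] at hi
      exact hbx hi
    have hprev : RIn G t a (p (i-1)) := by
      apply claim (i-1) (by omega)
      intro kk hkk
      exact Nat.find_min hex (by omega : kk < i)
    have hadj : G.Adj (p (i-1)) (p i) := by
      have := h3 (i-1) (by omega)
      have e : i - 1 + 1 = i := by omega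
      rwa [e] at this
    exact ⟨p (i-1), hprev, (hi ▸ hadj).symm⟩

lemma dirac [Fintype V]
    (h : ∀ s : Set V, hadwigerNumber (G.induce s) = (G.induce s).cliqueNum) :
    ∀ n (s : Set V), s.ncard = n →
      ∀ a b, a ∈ s → b ∈ s → a ≠ b → ¬ G.Adj a b →
        ∃ x y, x ≠ y ∧ ¬ G.Adj x y ∧ Simp G s x ∧ Simp G s y := by
  intro n
  induction n using Nat.strong_induction_on with
  | _ n IH =>
  intro s hcard a b ha hb hab hnadj
  classical
  set SepOK : Set V → Prop := fun S => S ⊆ s ∧ a ∉ S ∧ b ∉ S ∧ ¬ RIn G (s \ S) a b with hsepok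
  have hSepEx : SepOK (s \ {a, b}) := by
    refine ⟨Set.diff_subset, ?_, ?_, trivial_sep hab hnadj⟩
    · simp
    · simp
  have hNe : {k | ∃ S, SepOK S ∧ S.ncard = k}.Nonempty := ⟨_, _, hSepEx, rfl⟩
  obtain ⟨S, hS, hScard⟩ := Nat.sInf_mem hNe
  have hmin : ∀ S', SepOK S' → S.ncard ≤ S'.ncard := fun S' hS' =>
    hScard ▸ Nat.sInf_le ⟨S', hS', rfl⟩
  obtain ⟨hSsub, haS, hbS, hsep⟩ := hS
  -- every vertex of S has a neighbor in each of the two components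
  have hnbr : ∀ c, c ∈ s → c ∉ S → ¬ RIn G (s \ S) a b →
      ∀ x ∈ S, c ≠ x → (∀ z, z ∈ s → z ∉ S → z ≠ x) = True → True := fun _ _ _ _ _ _ _ _ => trivial
  have hnbrGen : ∀ (c d : V), c ∉ S → d ∉ S → ¬ RIn G (s \ S) c d →
      ∀ x ∈ S, RIn G (insert x (s \ S)) c d → ∃ u, RIn G (s \ S) c u ∧ G.Adj x u := by
    intro c d hcS hdS hncd x hx hR
    exact reach_neighbor hncd (fun he => hcS (he ▸ hx)) (fun he => hdS (he ▸ hx)) hR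
  have hRins : ∀ x ∈ S, RIn G (insert x (s \ S)) a b := by
    intro x hx
    have hne : ¬ SepOK (S \ {x}) := by
      intro hS'
      have h1 := hmin _ hS'
      have h2 : (S \ {x}).ncard < S.ncard := by
        apply Set.ncard_lt_ncard _ (Set.toFinite S)
        constructor
        · exact Set.diff_subset
        · intro hsub
          have := hsub hx
          simp at this
      omega
    rw [hsepok] at hne
    simp only [not_and] at hne
    have h1 : S \ {x} ⊆ s := fun z hz => hSsub hz.1
    have h2 : a ∉ S \ {x} := fun hz => haS hz.1
    have h3 : b ∉ S \ {x} := fun hz => hbS hz.1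
    have := hne h1 h2 h3
    rw [not_not] at this
    have heq : s \ (S \ {x}) = insert x (s \ S) := by
      ext z
      simp only [Set.mem_diff, Set.mem_singleton_iff, Set.mem_insert_iff, not_and, not_not]
      constructor
      · rintro ⟨hzs, hz⟩
        by_cases hzS : z ∈ S
        · exact Or.inl (hz hzS)
        · exact Or.inr ⟨hzs, hzS⟩
      · rintro (rfl | ⟨hzs, hzS⟩)
        · exact ⟨hSsub hx, fun _ => rfl⟩
        · exact ⟨hzs, fun hzS' => absurd hzS' hzS⟩
    rwa [heq] at this
  have hnbrA : ∀ x ∈ S, ∃ u, RIn G (s \ S) a u ∧ G.Adj x u := by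
    intro x hx
    exact hnbrGen a b haS hbS hsep x hx (hRins x hx)
  have hnbrB : ∀ x ∈ S, ∃ u, RIn G (s \ S) b u ∧ G.Adj x u := by
    intro x hx
    have hsep' : ¬ RIn G (s \ S) b a := fun hr => hsep hr.symm
    exact hnbrGen b a hbS haS hsep' x hx ((hRins x hx).symm)
  -- S is a clique
  have hSclique : ∀ x ∈ S, ∀ y ∈ S, x ≠ y → G.Adj x y := by
    intro x hx y hy hxy
    by_contra hnaxy
    set A : Set V := {w | RIn G (s \ S) a w} with hA
    set B : Set V := {w | RIn G (s \ S) b w} with hB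
    have hABdisj : ∀ u, u ∈ A → u ∈ B → False := by
      intro u hu hv
      exact hsep (hu.trans hv.symm)
    have hAcl : ∀ u v, u ∈ A → G.Adj u v → v ∈ s \ S → v ∈ A := fun u v hu huv hv =>
      RIn.step hu huv hv
    have hBcl : ∀ u v, u ∈ B → G.Adj u v → v ∈ s \ S → v ∈ B := fun u v hu huv hv =>
      RIn.step hu huv hv
    have hABnadj : ∀ u v, u ∈ A → v ∈ B → ¬ G.Adj u v := by
      intro u v hu hv huv
      exact hABdisj v (hAcl u v hu huv hv.mem_right) hv
    have hxnA : x ∉ A := fun hxa => (hxa.mem_right).2 hx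
    have hxnB : x ∉ B := fun hxa => (hxa.mem_right).2 hx
    have hynA : y ∉ A := fun hxa => (hxa.mem_right).2 hy
    have hynB : y ∉ B := fun hxa => (hxa.mem_right).2 hy
    have hP : ∃ m p, IWk G A x y m p := by
      obtain ⟨u₁, hu₁, hxu₁⟩ := hnbrA x hx
      obtain ⟨u₂, hu₂, hyu₂⟩ := hnbrA y hy
      have h12 : RIn G (s \ S) u₁ u₂ := hu₁.symm.trans hu₂
      have h12' : RIn G A u₁ u₂ := by
        have := h12.to_comp
        apply this.mono
        intro w hw
        exact hu₁.trans hw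
      obtain ⟨m, pp, hpp⟩ := h12'
      exact IWk.of_neighbors hpp hxu₁ hyu₂.symm
    have hQ : ∃ m p, IWk G B x y m p := by
      obtain ⟨u₁, hu₁, hxu₁⟩ := hnbrB x hx
      obtain ⟨u₂, hu₂, hyu₂⟩ := hnbrB y hy
      have h12 : RIn G (s \ S) u₁ u₂ := hu₁.symm.trans hu₂
      have h12' : RIn G B u₁ u₂ := by
        have := h12.to_comp
        apply this.mono
        intro w hw
        exact hu₁.trans hw
      obtain ⟨m, pp, hpp⟩ := h12'
      exact IWk.of_neighbors hpp hxu₁ hyu₂.symm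
    exact cycle_contradiction h hABdisj hABnadj hxnA hxnB hynA hynB hxy hnaxy hP hQ
  -- a simplicial vertex on each side
  have side : ∀ c d : V, c ∈ s → d ∈ s → c ∉ S → d ∉ S → ¬ RIn G (s \ S) c d →
      ∃ z, RIn G (s \ S) c z ∧ Simp G s z := by
    intro c d hc hd hcS hdS hncd
    set C : Set V := {w | RIn G (s \ S) c w} with hC
    have hCsub : C ⊆ s \ S := fun w hw => hw.mem_right
    have hcC : c ∈ C := RIn.refl ⟨hc, hcS⟩
    set s₁ : Set V := C ∪ S with hs₁
    have hs₁s : s₁ ⊆ s := by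
      rintro z (hz | hz)
      · exact (hCsub hz).1
      · exact hSsub hz
    have hds₁ : d ∉ s₁ := by
      rintro (hz | hz)
      · exact hncd hz
      · exact hdS hz
    have hss : s₁ ⊂ s := ⟨hs₁s, fun hsub => hds₁ (hsub hd)⟩
    have hlt : s₁.ncard < n := hcard ▸ Set.ncard_lt_ncard hss (Set.toFinite s)
    have hCcl : ∀ u v, u ∈ C → G.Adj u v → v ∈ s \ S → v ∈ C := fun u v hu huv hv =>
      RIn.step hu huv hv
    have lift : ∀ z, z ∈ C → Simp G s₁ z → Simp G s z := by
      intro z hzC hzsimp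
      refine ⟨hs₁s hzsimp.1, ?_⟩
      intro u w hu hw hzu hzw huw
      have hmem : ∀ v, v ∈ s → G.Adj z v → v ∈ s₁ := by
        intro v hv hzv
        by_cases hvS : v ∈ S
        · exact Or.inr hvS
        · exact Or.inl (hCcl z v hzC hzv ⟨hv, hvS⟩)
      exact hzsimp.2 u w (hmem u hu hzu) (hmem w hw hzw) hzu hzw huw
    by_cases hcl : ∀ u ∈ s₁, ∀ v ∈ s₁, u ≠ v → G.Adj u v
    · refine ⟨c, hcC, lift c hcC ⟨Or.inl hcC, ?_⟩⟩
      intro u w hu hw _ _ huw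
      exact hcl u hu w hw huw
    · push_neg at hcl
      obtain ⟨a', ha', b', hb', hab', hnadj'⟩ := hcl
      obtain ⟨x', y', hxy', hnaxy', hx'simp, hy'simp⟩ :=
        IH s₁.ncard hlt s₁ rfl a' b' ha' hb' hab' hnadj'
      have hpick : x' ∈ C ∨ y' ∈ C := by
        rcases hx'simp.1 with hx'C | hx'S
        · exact Or.inl hx'C
        · rcases hy'simp.1 with hy'C | hy'S
          · exact Or.inr hy'C
          · exact absurd (hSclique x' hx'S y' hy'S hxy') hnaxy'
      rcases hpick with hx'C | hy'C
      · exact ⟨x', hx'C, lift x' hx'C hx'simp⟩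
      · exact ⟨y', hy'C, lift y' hy'C hy'simp⟩
  obtain ⟨xA, hxAC, hxAs⟩ := side a b ha hb haS hbS hsep
  obtain ⟨xB, hxBC, hxBs⟩ := side b a hb ha hbS haS (fun hr => hsep hr.symm)
  have hne : xA ≠ xB := by
    rintro rfl
    exact hsep (hxAC.trans hxBC.symm)
  have hnadj2 : ¬ G.Adj xA xB := by
    intro hadj
    exact hsep ((hxAC.step hadj hxBC.mem_right).trans hxBC.symm)
  exact ⟨xA, xB, hne, hnadj2, hxAs, hxBs⟩

lemma exists_simp [Fintype V]
    (h : ∀ s : Set V, hadwigerNumber (G.induce s) = (G.induce s).cliqueNum)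
    {s : Set V} (hne : s.Nonempty) : ∃ v, Simp G s v := by
  classical
  by_cases hcl : ∀ u ∈ s, ∀ v ∈ s, u ≠ v → G.Adj u v
  · exact ⟨hne.some, hne.some_mem, fun u w hu hw _ _ huw => hcl u hu w hw huw⟩
  · push_neg at hcl
    obtain ⟨a, ha, b, hb, hab, hnadj⟩ := hcl
    obtain ⟨x, y, _, _, hx, _⟩ := dirac h s.ncard s rfl a b ha hb hab hnadj
    exact ⟨x, hx⟩

end Dirac

section Coloring

variable {V : Type*} {G : SimpleGraph V}

lemma colorable_cliqueNum [Fintype V]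
    (h : ∀ s : Set V, hadwigerNumber (G.induce s) = (G.induce s).cliqueNum) :
    ∀ n (s : Set V), s.ncard = n → (G.induce s).Colorable (G.induce s).cliqueNum := by
  intro n
  induction n using Nat.strong_induction_on with
  | _ n IH =>
  intro s hcard
  classical
  rcases Set.eq_empty_or_nonempty s with rfl | hne
  · haveI : IsEmpty ↥(∅ : Set V) := by
      constructor
      rintro ⟨z, hz⟩
      exact hz
    exact SimpleGraph.Colorable.of_isEmpty _
  obtain ⟨v, hvs, hvsimp⟩ := exists_simp h hne
  set s' : Set V := s \ {v} with hs'
  have hss : s' ⊂ s := ⟨Set.diff_subset, fun hsub => ((hsub hvs).2 rfl)⟩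
  have hlt : s'.ncard < n := hcard ▸ Set.ncard_lt_ncard hss (Set.toFinite s)
  have hcol' := IH s'.ncard hlt s' rfl
  have hmono : (G.induce s').cliqueNum ≤ (G.induce s).cliqueNum :=
    cliqueNum_induce_mono Set.diff_subset
  set ω := (G.induce s).cliqueNum with hω
  have hcol : (G.induce s').Colorable ω := hcol'.mono hmono
  obtain ⟨C⟩ := hcol
  haveI : Fintype ↥s' := Fintype.ofFinite _
  let N' : Finset ↥s' := Finset.univ.filter (fun u => G.Adj v u.1)
  have hvN : v ∉ N'.image Subtype.val := by
    intro hv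
    obtain ⟨⟨u, hu⟩, -, he⟩ := Finset.mem_image.mp hv
    exact hu.2 he
  have hclN : G.IsClique ↑(insert v (N'.image Subtype.val)) := by
    intro u hu w hw huw
    simp only [Finset.coe_insert, Set.mem_insert_iff, Finset.coe_image, Set.mem_image,
      Finset.mem_coe] at hu hw
    have memN : ∀ z, (∃ x ∈ N', ↑x = z) → z ∈ s ∧ G.Adj v z := by
      rintro z ⟨⟨x, hx⟩, hxN, rfl⟩
      have := Finset.mem_filter.mp hxN
      exact ⟨hx.1, this.2⟩
    rcases hu with rfl | hu
    · rcases hw with rfl | hw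
      · exact absurd rfl huw
      · exact (memN w hw).2
    · rcases hw with rfl | hw
      · exact ((memN u hu).2).symm
      · exact hvsimp u w (memN u hu).1 (memN w hw).1 (memN u hu).2 (memN w hw).2 huw
  have hcardN : N'.card + 1 ≤ ω := by
    have hcardim : (N'.image Subtype.val).card = N'.card :=
      Finset.card_image_of_injective _ Subtype.val_injective
    have hsub : ∀ c ∈ insert v (N'.image Subtype.val), c ∈ s := by
      intro c hc
      rcases Finset.mem_insert.mp hc with rfl | hc
      · exact hvs
      · obtain ⟨⟨u, hu⟩, -, rfl⟩ := Finset.mem_image.mp hc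
        exact hu.1
    have := clique_card_le_cliqueNum_induce (t := s) hsub hclN
    rwa [Finset.card_insert_of_notMem hvN, hcardim] at this
  let U : Finset (Fin ω) := N'.image C
  have hUcard : U.card < ω := by
    have h1 : U.card ≤ N'.card := Finset.card_image_le
    omega
  have hifree : ∃ i : Fin ω, i ∉ U := by
    by_contra hno
    push_neg at hno
    have : (Finset.univ : Finset (Fin ω)) ⊆ U := fun i _ => hno i
    have := Finset.card_le_card this
    rw [Finset.card_univ, Fintype.card_fin] at this
    omega
  obtain ⟨i, hi⟩ := hifree
  refine ⟨SimpleGraph.Coloring.mk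
    (fun u => if hu : u.1 = v then i else C ⟨u.1, ⟨u.2, hu⟩⟩) ?_⟩
  rintro ⟨u, hu⟩ ⟨w, hw⟩ hadj
  simp only [SimpleGraph.comap_adj, Function.Embedding.coe_subtype] at hadj
  by_cases hu0 : u = v <;> by_cases hw0 : w = v
  · rw [hu0, hw0] at hadj
    exact absurd hadj (G.irrefl)
  · simp only [dif_pos hu0, dif_neg hw0]
    intro he
    apply hi
    rw [he]
    apply Finset.mem_image_of_mem
    simp only [N', Finset.mem_filter, Finset.mem_univ, true_and]
    rw [hu0] at hadj
    exact hadj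
  · simp only [dif_pos hw0, dif_neg hu0]
    intro he
    apply hi
    rw [← he]
    apply Finset.mem_image_of_mem
    simp only [N', Finset.mem_filter, Finset.mem_univ, true_and]
    rw [hw0] at hadj
    exact hadj.symm
  · simp only [dif_neg hu0, dif_neg hw0]
    have : (G.induce s').Adj ⟨u, ⟨hu, hu0⟩⟩ ⟨w, ⟨hw, hw0⟩⟩ := by
      simp only [SimpleGraph.comap_adj, Function.Embedding.coe_subtype]
      exact hadj
    exact C.valid this

end Coloring

end OHP


open OHP in
/-- Every ωh-perfect graph is perfect. -/
theorem omega_hadwiger_perfect_is_perfect {V : Type*} [Fintype V] (G : SimpleGraph V)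
    (h : ∀ s : Set V, hadwigerNumber (G.induce s) = (G.induce s).cliqueNum) :
    ∀ s : Set V, (G.induce s).chromaticNumber = ((G.induce s).cliqueNum : ℕ∞) := by
  intro s
  classical
  haveI : Fintype ↥s := Fintype.ofFinite _
  have hcol := OHP.colorable_cliqueNum h s.ncard s rfl
  have hle : (G.induce s).chromaticNumber ≤ ((G.induce s).cliqueNum : ℕ∞) :=
    hcol.chromaticNumber_le
  have hge : ((G.induce s).cliqueNum : ℕ∞) ≤ (G.induce s).chromaticNumber := by
    obtain ⟨C, hC⟩ := SimpleGraph.exists_isNClique_cliqueNum (G := G.induce s)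
    have := hC.isClique.card_le_chromaticNumber
    rwa [hC.card_eq] at this
  exact le_antisymm hle hge
end

section
/- A finite simple graph G is αh-perfect (for every induced subgraph H, the achromatic number of H equals the Hadwiger number of H) if and only if G is ωψ-perfect (for every induced subgraph H, the clique number of H equals the pseudoachromatic number of H). -/
open SimpleGraph

section Chunk1

open Classical in
private lemma aux_complete_card_le {V : Type*} [Fintype V] {G : SimpleGraph V} {k : ℕ}
    {c : V → Fin k} (h : IsCompleteColoring G c) : k ≤ Fintype.card V := by
  simpa using Fintype.card_le_of_surjective c h.1

open Classical in
private lemma aux_minor_card_le {V : Type*} [Fintype V] {G : SimpleGraph V} {k : ℕ}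
    (h : HasCompleteMinor G k) : k ≤ Fintype.card V := by
  classical
  obtain ⟨B, hconn, hdisj, _⟩ := h
  have hx : ∀ i : Fin k, ∃ v : V, v ∈ B i := by
    intro i
    obtain ⟨⟨v, hv⟩⟩ := (hconn i).nonempty
    exact ⟨v, hv⟩
  choose f hf using hx
  have hinj : Function.Injective f := by
    intro i j hij
    by_contra hne
    exact Set.disjoint_left.mp (hdisj i j hne) (hf i) (hij ▸ hf j)
  simpa using Fintype.card_le_of_injective f hinj

private lemma aux_psi_bdd {V : Type*} [Fintype V] (G : SimpleGraph V) :
    BddAbove {k | ∃ c : V → Fin k, IsCompleteColoring G c} :=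
  ⟨Fintype.card V, fun _ ⟨_, hc⟩ => aux_complete_card_le hc⟩

private lemma aux_alpha_bdd {V : Type*} [Fintype V] (G : SimpleGraph V) :
    BddAbove {k | ∃ c : V → Fin k, IsProperColoring G c ∧ IsCompleteColoring G c} :=
  ⟨Fintype.card V, fun _ ⟨_, _, hc⟩ => aux_complete_card_le hc⟩

private lemma aux_hadwiger_bdd {V : Type*} [Fintype V] (G : SimpleGraph V) :
    BddAbove {k | HasCompleteMinor G k} :=
  ⟨Fintype.card V, fun _ h => aux_minor_card_le h⟩

private lemma aux_alpha_le_psi {V : Type*} [Fintype V] (G : SimpleGraph V) :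
    achromaticNumber G ≤ pseudoachromaticNumber G :=
  csSup_le' fun _ ⟨c, _, hc⟩ => le_csSup (aux_psi_bdd G) ⟨c, hc⟩

private lemma aux_hadwiger_le_psi {V : Type*} [Fintype V] (G : SimpleGraph V) :
    hadwigerNumber G ≤ pseudoachromaticNumber G := by
  classical
  refine csSup_le' fun k hk => ?_
  match k with
  | 0 => exact Nat.zero_le _
  | (m+1) =>
    obtain ⟨B, hconn, hdisj, hadj⟩ := hk
    refine le_csSup (aux_psi_bdd G) ?_
    have hmem : ∀ (v : V) (i : Fin (m+1)), v ∈ B i → ∀ j, v ∈ B j → j = i := by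
      intro v i hv j hj
      by_contra hne
      exact Set.disjoint_left.mp (hdisj j i hne) hj hv
    refine ⟨fun v => if h : ∃ i, v ∈ B i then h.choose else 0, ?_, ?_⟩
    · intro i
      obtain ⟨⟨v, hv⟩⟩ := (hconn i).nonempty
      refine ⟨v, ?_⟩
      have h : ∃ i, v ∈ B i := ⟨i, hv⟩
      simp only [dif_pos h]
      exact hmem v i hv _ h.choose_spec
    · intro i j hij
      obtain ⟨u, hu, v, hv, huv⟩ := hadj i j hij
      refine ⟨u, v, huv, ?_, ?_⟩
      · have h : ∃ i, u ∈ B i := ⟨i, hu⟩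
        simp only [dif_pos h]
        exact hmem u i hu _ h.choose_spec
      · have h : ∃ i, v ∈ B i := ⟨j, hv⟩
        simp only [dif_pos h]
        exact hmem v j hv _ h.choose_spec

private lemma aux_connected_induce_singleton {V : Type*} (G : SimpleGraph V) (x : V) :
    (G.induce {x}).Connected := by
  haveI : Nonempty ({x} : Set V) := ⟨⟨x, rfl⟩⟩
  refine ⟨fun u v => ?_⟩
  have : u = v := Subtype.ext (u.2.trans v.2.symm)
  exact this ▸ Reachable.refl u

private lemma aux_connected_induce_pair {V : Type*} {G : SimpleGraph V} {x y : V}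
    (h : G.Adj x y) : (G.induce {x, y}).Connected := by
  have hx : x ∈ ({x, y} : Set V) := Or.inl rfl
  have hy : y ∈ ({x, y} : Set V) := Or.inr rfl
  have hadj : (G.induce {x, y}).Adj ⟨x, hx⟩ ⟨y, hy⟩ := by
    simpa using h
  haveI : Nonempty ({x, y} : Set V) := ⟨⟨x, hx⟩⟩
  refine ⟨fun u v => ?_⟩
  have key : ∀ w : ({x, y} : Set V), (G.induce {x, y}).Reachable ⟨x, hx⟩ w := by
    rintro ⟨w, (rfl | rfl)⟩
    · exact Reachable.refl _
    · exact hadj.reachable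
  exact (key u).symm.trans (key v)

private lemma aux_omega_le_hadwiger {V : Type*} [Fintype V] (G : SimpleGraph V) :
    G.cliqueNum ≤ hadwigerNumber G := by
  classical
  refine csSup_le' ?_
  rintro n ⟨s, hs⟩
  refine le_csSup (aux_hadwiger_bdd G) ?_
  have e : (s : Finset V) ≃ Fin n := s.equivFin.trans (finCongr hs.card_eq)
  refine ⟨fun i => {(e.symm i : V)}, fun i => aux_connected_induce_singleton G _, ?_, ?_⟩
  · intro i j hij
    rw [Set.disjoint_singleton_left, Set.mem_singleton_iff]
    intro hval
    exact hij (by rw [← e.apply_symm_apply i, ← e.apply_symm_apply j,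
      Subtype.ext hval])
  · intro i j hij
    refine ⟨_, rfl, _, rfl, hs.1 (e.symm i).2 (e.symm j).2 ?_⟩
    intro hval
    exact hij (by rw [← e.apply_symm_apply i, ← e.apply_symm_apply j, Subtype.ext hval])

end Chunk1
section Chunk2

private lemma aux_merge {V : Type*} {G : SimpleGraph V} {k : ℕ} {c : V → Fin (k + 1)}
    (hs : Function.Surjective c) (hp : IsProperColoring G c) {i j : Fin (k + 1)}
    (hij : i ≠ j) (hno : ∀ u v : V, G.Adj u v → ¬(c u = i ∧ c v = j)) :
    ∃ c' : V → Fin k, Function.Surjective c' ∧ IsProperColoring G c' := by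
  classical
  set σ := Equiv.swap j (Fin.last k) with hσ
  set d : V → Fin (k + 1) := fun v => σ (c v) with hd
  have hd_last : ∀ v, d v = Fin.last k ↔ c v = j := by
    intro v
    constructor
    · intro h
      apply σ.injective (a₁ := c v) (a₂ := j)
      rw [show σ (c v) = Fin.last k from h, hσ, Equiv.swap_apply_left]
    · intro h; show σ (c v) = _; rw [h, hσ, Equiv.swap_apply_left]
  have hi' : σ i ≠ Fin.last k := by
    intro h
    exact hij (σ.injective (by rw [h, hσ, Equiv.swap_apply_left]))
  have hd_i : ∀ v, d v = σ i ↔ c v = i := fun v => ⟨fun h => σ.injective h, fun h => by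
    show σ (c v) = _; rw [h]⟩
  refine ⟨fun v => if h : d v = Fin.last k then (σ i).castPred hi' else (d v).castPred h,
    ?_, ?_⟩
  · intro y
    obtain ⟨v, hv⟩ := hs (σ.symm y.castSucc)
    have hdv : d v = y.castSucc := by show σ (c v) = _; rw [hv, Equiv.apply_symm_apply]
    have hne : d v ≠ Fin.last k := by rw [hdv]; exact (Fin.castSucc_lt_last y).ne
    refine ⟨v, ?_⟩
    simp only [dif_neg hne]
    simp [hdv]
  · intro u v huv
    have hcuv : c u ≠ c v := hp u v huv
    have hduv : d u ≠ d v := fun h => hcuv (σ.injective h)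
    by_cases hu : d u = Fin.last k <;> by_cases hv : d v = Fin.last k
    · exact absurd (hu.trans hv.symm) hduv
    · simp only [dif_pos hu, dif_neg hv]
      intro h
      have : σ i = d v := Fin.castPred_inj.mp h
      exact hno v u huv.symm ⟨(hd_i v).mp this.symm, (hd_last u).mp hu⟩
    · simp only [dif_neg hu, dif_pos hv]
      intro h
      have : d u = σ i := Fin.castPred_inj.mp h
      exact hno u v huv ⟨(hd_i u).mp this, (hd_last v).mp hv⟩
    · simp only [dif_neg hu, dif_neg hv]
      intro h
      exact hduv (Fin.castPred_inj.mp h)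

private lemma aux_merge' {V : Type*} {G : SimpleGraph V} {k : ℕ} {c : V → Fin k}
    (hs : Function.Surjective c) (hp : IsProperColoring G c) {i j : Fin k}
    (hij : i ≠ j) (hno : ∀ u v : V, G.Adj u v → ¬(c u = i ∧ c v = j)) :
    ∃ m, m + 1 = k ∧ ∃ c' : V → Fin m, Function.Surjective c' ∧ IsProperColoring G c' := by
  match k, c, i, j with
  | 0, c, i, j => exact i.elim0
  | (m+1), c, i, j => exact ⟨m, rfl, aux_merge hs hp hij hno⟩

private lemma aux_omega_le_achromatic {V : Type*} [Fintype V] (G : SimpleGraph V) :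
    G.cliqueNum ≤ achromaticNumber G := by
  classical
  cases isEmpty_or_nonempty V with
  | inl hempty =>
    refine csSup_le' ?_
    rintro n ⟨s, hs⟩
    have : s = ∅ := Finset.eq_empty_of_isEmpty s
    rw [← hs.card_eq, this]
    simp
  | inr hne =>
    set P := {k | ∃ c : V → Fin k, Function.Surjective c ∧ IsProperColoring G c} with hP
    have hPne : (Fintype.card V) ∈ P := by
      refine ⟨Fintype.equivFin V, (Fintype.equivFin V).surjective, fun u v h he => ?_⟩
      exact h.ne ((Fintype.equivFin V).injective he)
    obtain ⟨c, hcs, hcp⟩ : sInf P ∈ P := Nat.sInf_mem ⟨_, hPne⟩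
    have hcomplete : IsCompleteColoring G c := by
      refine ⟨hcs, ?_⟩
      by_contra h
      push_neg at h
      obtain ⟨i, j, hij, hno⟩ := h
      have hno' : ∀ u v : V, G.Adj u v → ¬(c u = i ∧ c v = j) := fun u v huv hc =>
        hno u v huv hc.1 hc.2
      obtain ⟨m, hm, c', hc's, hc'p⟩ := aux_merge' hcs hcp hij hno'
      have : m ∈ P := ⟨c', hc's, hc'p⟩
      have := Nat.sInf_le this
      omega
    have halpha : sInf P ≤ achromaticNumber G :=
      le_csSup (aux_alpha_bdd G) ⟨c, hcp, hcomplete⟩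
    refine le_trans ?_ halpha
    refine csSup_le' ?_
    rintro n ⟨s, hs⟩
    rw [← hs.card_eq]
    have : Set.InjOn c s := by
      intro x hx y hy hxy
      by_contra hne'
      exact hcp x y (hs.1 hx hy hne') hxy
    calc s.card ≤ (Finset.univ : Finset (Fin (sInf P))).card :=
          Finset.card_le_card_of_injOn c (fun _ _ => Finset.mem_univ _) this
      _ = sInf P := by simp

end Chunk2
section Chunk3

private lemma aux_adj_invariant {W : Type*} {β : Type*} {H : SimpleGraph W} {F : W → β}
    (hF : ∀ x y, H.Adj x y → F x = F y) {u v : W} (h : H.Reachable u v) : F u = F v := by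
  obtain ⟨p⟩ := h
  induction p with
  | nil => rfl
  | cons h q ih => exact (hF _ _ h).trans ih

private lemma aux_exists_adj_of_reachable_ne {W : Type*} {H : SimpleGraph W} {u v : W}
    (h : H.Reachable u v) (hne : u ≠ v) : ∃ w, H.Adj u w := by
  obtain ⟨p⟩ := h
  cases p with
  | nil => exact absurd rfl hne
  | cons h q => exact ⟨_, h⟩

private lemma aux_reachable_of_mem_support {W : Type*} {H : SimpleGraph W} {u v w : W}
    (p : H.Walk u v) (h : w ∈ p.support) : H.Reachable u w := by
  induction p with
  | nil =>
    rw [SimpleGraph.Walk.support_nil, List.mem_singleton] at h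
    exact h ▸ Reachable.refl _
  | cons ha q ih =>
    rw [SimpleGraph.Walk.support_cons, List.mem_cons] at h
    rcases h with h | h
    · exact h ▸ Reachable.refl _
    · exact ha.reachable.trans (ih h)

private lemma aux_reachable_induce {V : Type*} {G : SimpleGraph V} {s : Set V} {u v : V}
    (p : G.Walk u v) (hsup : ∀ w ∈ p.support, w ∈ s) (hu : u ∈ s) (hv : v ∈ s) :
    (G.induce s).Reachable ⟨u, hu⟩ ⟨v, hv⟩ := by
  induction p with
  | nil => exact Reachable.refl _
  | @cons a b c ha q ih =>
    have hb : b ∈ s := hsup b (by rw [SimpleGraph.Walk.support_cons]; exact List.mem_cons_of_mem _ q.start_mem_support)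
    have hadj : (G.induce s).Adj ⟨a, hu⟩ ⟨b, hb⟩ := by simpa using ha
    exact hadj.reachable.trans (ih (fun w hw => hsup w (by rw [SimpleGraph.Walk.support_cons]; exact List.mem_cons_of_mem _ hw)) hb hv)

private lemma aux_component_connected {V : Type*} {G : SimpleGraph V} (u0 : V) :
    (G.induce {v | G.Reachable u0 v}).Connected := by
  haveI : Nonempty ({v | G.Reachable u0 v} : Set V) := ⟨⟨u0, Reachable.refl u0⟩⟩
  refine ⟨fun x y => ?_⟩
  obtain ⟨p⟩ := (x.2 : G.Reachable u0 x.val).symm.trans (y.2 : G.Reachable u0 y.val)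
  have := aux_reachable_induce p (fun w hw => (x.2 : G.Reachable u0 x.val).trans
    (aux_reachable_of_mem_support p hw)) x.2 y.2
  exact this

private lemma aux_p3_of_not_adj {V : Type*} {G : SimpleGraph V} :
    ∀ (n : ℕ) (x y : V), G.dist x y = n → G.Reachable x y → x ≠ y → ¬G.Adj x y →
    ∃ a b c : V, G.Adj a b ∧ G.Adj b c ∧ ¬G.Adj a c ∧ a ≠ c ∧
      G.Reachable x a ∧ G.Reachable x b ∧ G.Reachable x c := by
  intro n
  induction n using Nat.strong_induction_on with
  | _ n ih =>
    intro x y hd hr hxy hna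
    obtain ⟨p, hp⟩ := hr.exists_walk_length_eq_dist
    cases p with
    | nil => exact absurd rfl hxy
    | @cons _ b _ h q =>
      rw [SimpleGraph.Walk.length_cons, hd] at hp
      by_cases hb : b = y
      · subst hb; exact absurd h hna
      by_cases hby : G.Adj b y
      · exact ⟨x, b, y, h, hby, hna, hxy, Reachable.refl x, h.reachable, hr⟩
      · have hdby : G.dist b y < n := by
          have := SimpleGraph.dist_le q
          omega
        obtain ⟨a', b', c', h1, h2, h3, h4, h5, h6, h7⟩ :=
          ih _ hdby b y rfl ⟨q⟩ hb hby
        exact ⟨a', b', c', h1, h2, h3, h4, h.reachable.trans h5, h.reachable.trans h6,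
          h.reachable.trans h7⟩

private def ConfP4 {V : Type*} (G : SimpleGraph V) : Prop :=
  ∃ a b c d : V, a ≠ c ∧ a ≠ d ∧ b ≠ d ∧
    G.Adj a b ∧ G.Adj b c ∧ G.Adj c d ∧ ¬G.Adj a c ∧ ¬G.Adj a d ∧ ¬G.Adj b d

private def ConfC4 {V : Type*} (G : SimpleGraph V) : Prop :=
  ∃ a b c d : V, a ≠ c ∧ b ≠ d ∧
    G.Adj a b ∧ G.Adj b c ∧ G.Adj c d ∧ G.Adj d a ∧ ¬G.Adj a c ∧ ¬G.Adj b d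

private def ConfM3 {V : Type*} (G : SimpleGraph V) : Prop :=
  ∃ a₁ b₁ a₂ b₂ a₃ b₃ : V,
    G.Adj a₁ b₁ ∧ G.Adj a₂ b₂ ∧ G.Adj a₃ b₃ ∧
    a₁ ≠ a₂ ∧ a₁ ≠ b₂ ∧ b₁ ≠ a₂ ∧ b₁ ≠ b₂ ∧
    a₁ ≠ a₃ ∧ a₁ ≠ b₃ ∧ b₁ ≠ a₃ ∧ b₁ ≠ b₃ ∧
    a₂ ≠ a₃ ∧ a₂ ≠ b₃ ∧ b₂ ≠ a₃ ∧ b₂ ≠ b₃ ∧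
    ¬G.Adj a₁ a₂ ∧ ¬G.Adj a₁ b₂ ∧ ¬G.Adj b₁ a₂ ∧ ¬G.Adj b₁ b₂ ∧
    ¬G.Adj a₁ a₃ ∧ ¬G.Adj a₁ b₃ ∧ ¬G.Adj b₁ a₃ ∧ ¬G.Adj b₁ b₃ ∧
    ¬G.Adj a₂ a₃ ∧ ¬G.Adj a₂ b₃ ∧ ¬G.Adj b₂ a₃ ∧ ¬G.Adj b₂ b₃

private def ConfP3K2 {V : Type*} (G : SimpleGraph V) : Prop :=
  ∃ a b c d e : V, a ≠ c ∧
    G.Adj a b ∧ G.Adj b c ∧ ¬G.Adj a c ∧ G.Adj d e ∧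
    a ≠ d ∧ a ≠ e ∧ b ≠ d ∧ b ≠ e ∧ c ≠ d ∧ c ≠ e ∧
    ¬G.Adj a d ∧ ¬G.Adj a e ∧ ¬G.Adj b d ∧ ¬G.Adj b e ∧ ¬G.Adj c d ∧ ¬G.Adj c e

private lemma aux_confP4_lift {V : Type*} {G : SimpleGraph V} {s : Set V}
    (h : ConfP4 (G.induce s)) : ConfP4 G := by
  obtain ⟨a, b, c, d, h1, h2, h3, h4, h5, h6, h7, h8, h9⟩ := h
  exact ⟨a, b, c, d, fun he => h1 (Subtype.ext he), fun he => h2 (Subtype.ext he),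
    fun he => h3 (Subtype.ext he), h4, h5, h6, h7, h8, h9⟩

private lemma aux_confC4_lift {V : Type*} {G : SimpleGraph V} {s : Set V}
    (h : ConfC4 (G.induce s)) : ConfC4 G := by
  obtain ⟨a, b, c, d, h1, h2, h3, h4, h5, h6, h7, h8⟩ := h
  exact ⟨a, b, c, d, fun he => h1 (Subtype.ext he), fun he => h2 (Subtype.ext he),
    h3, h4, h5, h6, h7, h8⟩

private lemma aux_confM3_lift {V : Type*} {G : SimpleGraph V} {s : Set V}
    (h : ConfM3 (G.induce s)) : ConfM3 G := by
  obtain ⟨a₁, b₁, a₂, b₂, a₃, b₃, e1, e2, e3, n1, n2, n3, n4, n5, n6, n7, n8, n9, n10,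
    n11, n12, m1, m2, m3, m4, m5, m6, m7, m8, m9, m10, m11, m12⟩ := h
  exact ⟨a₁, b₁, a₂, b₂, a₃, b₃, e1, e2, e3,
    fun he => n1 (Subtype.ext he), fun he => n2 (Subtype.ext he),
    fun he => n3 (Subtype.ext he), fun he => n4 (Subtype.ext he),
    fun he => n5 (Subtype.ext he), fun he => n6 (Subtype.ext he),
    fun he => n7 (Subtype.ext he), fun he => n8 (Subtype.ext he),
    fun he => n9 (Subtype.ext he), fun he => n10 (Subtype.ext he),
    fun he => n11 (Subtype.ext he), fun he => n12 (Subtype.ext he),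
    m1, m2, m3, m4, m5, m6, m7, m8, m9, m10, m11, m12⟩

private lemma aux_confP3K2_lift {V : Type*} {G : SimpleGraph V} {s : Set V}
    (h : ConfP3K2 (G.induce s)) : ConfP3K2 G := by
  obtain ⟨a, b, c, d, e, h1, h2, h3, h4, h5, n1, n2, n3, n4, n5, n6, m1, m2, m3, m4, m5, m6⟩ := h
  exact ⟨a, b, c, d, e, fun he => h1 (Subtype.ext he), h2, h3, h4, h5,
    fun he => n1 (Subtype.ext he), fun he => n2 (Subtype.ext he),
    fun he => n3 (Subtype.ext he), fun he => n4 (Subtype.ext he),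
    fun he => n5 (Subtype.ext he), fun he => n6 (Subtype.ext he),
    m1, m2, m3, m4, m5, m6⟩

end Chunk3
section Chunk4

private lemma aux_exists_universal {V : Type*} [Fintype V] {G : SimpleGraph V} [Nonempty V]
    (hconn : G.Connected) (hP4 : ¬ConfP4 G) (hC4 : ¬ConfC4 G) :
    ∃ u : V, ∀ v : V, v ≠ u → G.Adj u v := by
  classical
  letI : DecidableRel G.Adj := Classical.decRel _
  obtain ⟨u, -, hu⟩ := Finset.exists_max_image Finset.univ (fun v => G.degree v)
    ⟨Classical.arbitrary V, Finset.mem_univ _⟩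
  by_contra hno
  push_neg at hno
  set S : Finset V := Finset.univ.filter (fun v => v ≠ u ∧ ¬G.Adj u v) with hS
  have hSne : S.Nonempty := by
    obtain ⟨v, hv1, hv2⟩ := hno u
    exact ⟨v, by simp [hS, hv1, hv2]⟩
  obtain ⟨w, hwS, hwmin⟩ := Finset.exists_min_image S (G.dist u) hSne
  rw [hS, Finset.mem_filter] at hwS
  obtain ⟨-, hwu, hwna⟩ := hwS
  have hr : G.Reachable u w := hconn u w
  obtain ⟨p, hp⟩ := hr.exists_walk_length_eq_dist
  have hd0 : G.dist u w ≠ 0 := by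
    intro h
    rw [h] at hp
    exact hwu (SimpleGraph.Walk.eq_of_length_eq_zero hp).symm
  cases hq : p.reverse with
  | nil =>
    have hl : p.length = 0 := by
      have h2 := SimpleGraph.Walk.length_reverse p
      rw [hq] at h2
      simpa using h2.symm
    exact hd0 (by omega)
  | @cons _ x _ hwx q =>
    have hlen : q.length + 1 = G.dist u w := by
      have := SimpleGraph.Walk.length_reverse p
      rw [hq] at this
      rw [SimpleGraph.Walk.length_cons] at this
      omega
    have hdx : G.dist u x < G.dist u w := by
      have h1 : G.dist x u ≤ q.length := SimpleGraph.dist_le q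
      rw [SimpleGraph.dist_comm] at h1
      omega
    have hxu : x ≠ u → G.Adj u x := by
      intro hxune
      by_contra hxna
      have hxS : x ∈ S := by simp [hS, hxune, hxna]
      exact absurd (hwmin x hxS) (by omega)
    by_cases hxeq : x = u
    · subst hxeq
      exact hwna hwx.symm
    · have hux : G.Adj u x := hxu hxeq
      have hxw : G.Adj x w := hwx.symm
      have hyadj : ∀ y, G.Adj u y → y ≠ x → G.Adj x y := by
        intro y hy hyx
        by_contra hxy
        have hyw : y ≠ w := fun h => hwna (h ▸ hy)
        by_cases hyw' : G.Adj y w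
        · exact hC4 ⟨u, y, w, x, Ne.symm hwu, hyx,
            hy, hyw', hxw.symm, hux.symm, hwna, fun h => hxy h.symm⟩
        · exact hP4 ⟨y, u, x, w, hyx, hyw, Ne.symm hwu,
            hy.symm, hux, hxw, fun h => hxy h.symm, hyw', hwna⟩
      -- degree contradiction
      have hsub : insert u (insert w ((G.neighborFinset u).erase x)) ⊆ G.neighborFinset x := by
        intro z hz
        rw [Finset.mem_insert, Finset.mem_insert] at hz
        rcases hz with rfl | rfl | hz
        · rw [SimpleGraph.mem_neighborFinset]; exact hux.symm
        · rw [SimpleGraph.mem_neighborFinset]; exact hxw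
        · rw [Finset.mem_erase, SimpleGraph.mem_neighborFinset] at hz
          rw [SimpleGraph.mem_neighborFinset]
          exact hyadj z hz.2 hz.1
      have hcard : (insert u (insert w ((G.neighborFinset u).erase x))).card
          = G.degree u + 1 := by
        rw [Finset.card_insert_of_notMem, Finset.card_insert_of_notMem,
          Finset.card_erase_of_mem]
        · have h1 : 0 < (G.neighborFinset u).card := by
            refine Finset.card_pos.mpr ⟨x, ?_⟩
            rw [SimpleGraph.mem_neighborFinset]; exact hux
          have e2 : G.degree u = (G.neighborFinset u).card := rfl
          omega
        · rw [SimpleGraph.mem_neighborFinset]; exact hux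
        · rw [Finset.mem_erase, SimpleGraph.mem_neighborFinset]
          rintro ⟨-, h⟩
          exact hwna h
        · rw [Finset.mem_insert, Finset.mem_erase, SimpleGraph.mem_neighborFinset]
          rintro (rfl | ⟨-, h⟩)
          · exact hwu rfl
          · exact G.irrefl h
      have hle := Finset.card_le_card hsub
      rw [hcard] at hle
      have hmax := hu x (Finset.mem_univ x)
      have e1 : G.degree x = (G.neighborFinset x).card := rfl
      omega

end Chunk4
section Chunk5

private lemma aux_complete_equiv {V : Type*} {G : SimpleGraph V} {k : ℕ} {c : V → Fin k}
    (σ : Fin k ≃ Fin k) (hc : IsCompleteColoring G c) :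
    IsCompleteColoring G (fun v => σ (c v)) := by
  refine ⟨σ.surjective.comp hc.1, ?_⟩
  intro i j hij
  obtain ⟨x, y, hxy, hx, hy⟩ := hc.2 (σ.symm i) (σ.symm j)
    (fun h => hij (by rw [← σ.apply_symm_apply i, ← σ.apply_symm_apply j, h]))
  exact ⟨x, y, hxy, by show σ (c x) = i; rw [hx, σ.apply_symm_apply],
    by show σ (c y) = j; rw [hy, σ.apply_symm_apply]⟩

private lemma aux_delete_color {V : Type*} {G : SimpleGraph V} {m : ℕ}
    {c : V → Fin (m + 2)} (hc : IsCompleteColoring G c) (u : V) :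
    ∃ c' : ({v : V | c v ≠ c u} : Set V) → Fin (m + 1),
      IsCompleteColoring (G.induce {v : V | c v ≠ c u}) c' := by
  classical
  set σ := Equiv.swap (c u) (Fin.last (m + 1)) with hσ
  have hd := aux_complete_equiv σ hc
  set d : V → Fin (m + 2) := fun v => σ (c v) with hdd
  have hd_last : ∀ v, d v = Fin.last (m + 1) ↔ c v = c u := by
    intro v
    constructor
    · intro h
      apply σ.injective (a₁ := c v) (a₂ := c u)
      rw [show σ (c v) = _ from h, hσ, Equiv.swap_apply_left]
    · intro h; show σ (c v) = _; rw [h, hσ, Equiv.swap_apply_left]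
  have hmem : ∀ v : ({v : V | c v ≠ c u} : Set V), d v.val ≠ Fin.last (m + 1) :=
    fun v h => v.2 ((hd_last v.val).mp h)
  refine ⟨fun v => (d v.val).castPred (hmem v), ?_, ?_⟩
  · intro y
    obtain ⟨v, hv⟩ := hd.1 y.castSucc
    have hvne : d v ≠ Fin.last (m + 1) := by
      rw [hv]; exact (Fin.castSucc_lt_last y).ne
    have hvs : v ∈ {v : V | c v ≠ c u} := fun h => hvne ((hd_last v).mpr h)
    exact ⟨⟨v, hvs⟩, by simp [hv]⟩
  · intro i j hij
    have hij' : i.castSucc ≠ j.castSucc := fun h => hij (Fin.castSucc_injective _ h)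
    obtain ⟨x, y, hxy, hx, hy⟩ := hd.2 i.castSucc j.castSucc hij'
    have hxs : x ∈ {v : V | c v ≠ c u} := fun h => (Fin.castSucc_lt_last i).ne
      (by rw [← hx]; exact (hd_last x).mpr h)
    have hys : y ∈ {v : V | c v ≠ c u} := fun h => (Fin.castSucc_lt_last j).ne
      (by rw [← hy]; exact (hd_last y).mpr h)
    refine ⟨⟨x, hxs⟩, ⟨y, hys⟩, by simpa using hxy, by simp [hx], by simp [hy]⟩

end Chunk5
section Chunk6

private lemma aux_clique_bdd {V : Type*} [Fintype V] (G : SimpleGraph V) :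
    BddAbove {n | ∃ s, G.IsNClique n s} := by
  refine ⟨Fintype.card V, ?_⟩
  rintro n ⟨s, hs⟩
  rw [← hs.card_eq]
  simpa using Finset.card_le_univ s

universe u

private lemma aux_main (n : ℕ) : ∀ {V : Type u} [Fintype V] (G : SimpleGraph V),
    Fintype.card V ≤ n → ¬ConfP4 G → ¬ConfC4 G → ¬ConfM3 G → ¬ConfP3K2 G →
    pseudoachromaticNumber G ≤ G.cliqueNum := by
  induction n with
  | zero =>
    intro V _ G hcard _ _ _ _
    refine csSup_le' ?_
    rintro k ⟨c, hc⟩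
    have := aux_complete_card_le hc
    exact le_trans (by omega) (Nat.zero_le _)
  | succ n ih =>
    intro V _ G hcard hP4 hC4 hM3 hP3K2
    classical
    refine csSup_le' ?_
    rintro k ⟨c, hc⟩
    match k, c, hc with
    | 0, c, hc => exact Nat.zero_le _
    | 1, c, hc =>
      obtain ⟨v, -⟩ := hc.1 0
      have h1 : G.IsNClique 1 {v} := SimpleGraph.isNClique_singleton.mpr rfl
      exact le_csSup (aux_clique_bdd G) ⟨_, h1⟩
    | (m+2), c, hc =>
      obtain ⟨u0, v0, huv0, -, -⟩ := hc.2 0 1 (by simp [Fin.ext_iff])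
      have homega2 : 2 ≤ G.cliqueNum := by
        have h1 : G.IsNClique 1 {v0} := SimpleGraph.isNClique_singleton.mpr rfl
        have h2 : G.IsNClique 2 {u0, v0} := by
          refine h1.insert ?_
          intro b hb
          rw [Finset.mem_singleton] at hb
          exact hb ▸ huv0
        exact le_csSup (aux_clique_bdd G) ⟨_, h2⟩
      have hfinish : ∀ T : Set V, (∀ p ∈ T, ∀ q ∈ T, p ≠ q → G.Adj p q) →
          (∀ i : Fin (m+2), ∃ v ∈ T, c v = i) → (m+2 : ℕ) ≤ G.cliqueNum := by
        intro T hcomp hsurj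
        haveI : Fintype T := Set.Finite.fintype (Set.toFinite T)
        have h1 : m + 2 ≤ Fintype.card T := by
          have hsur : Function.Surjective (fun v : T => c v.val) := by
            intro i; obtain ⟨v, hv, hcv⟩ := hsurj i; exact ⟨⟨v, hv⟩, hcv⟩
          simpa using Fintype.card_le_of_surjective _ hsur
        have hclq : G.IsNClique T.toFinset.card T.toFinset := by
          refine ⟨?_, rfl⟩
          intro p hp q hq hne
          simp only [Finset.mem_coe, Set.mem_toFinset] at hp hq
          exact hcomp p hp q hq hne
        have h2 : T.toFinset.card ≤ G.cliqueNum := le_csSup (aux_clique_bdd G) ⟨_, hclq⟩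
        rw [Set.toFinset_card] at h2
        omega
      by_cases hcaseB : ∃ x y z w : V, G.Adj x y ∧ G.Adj z w ∧ ¬G.Reachable x z
      · -- two nontrivial components; both are cliques
        obtain ⟨x, y, z, w, hxy, hzw, hnr⟩ := hcaseB
        have hnr' : ¬G.Reachable z x := fun h => hnr h.symm
        set A := {v : V | G.Reachable x v} with hA
        set Bs := {v : V | G.Reachable z v} with hBs
        have keyA : ∀ v, G.Reachable x v → v ≠ z ∧ v ≠ w ∧ ¬G.Adj v z ∧ ¬G.Adj v w := by
          intro v hv
          refine ⟨?_, ?_, ?_, ?_⟩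
          · rintro rfl; exact hnr hv
          · rintro rfl; exact hnr (hv.trans hzw.reachable.symm)
          · intro h; exact hnr (hv.trans h.reachable)
          · intro h; exact hnr ((hv.trans h.reachable).trans hzw.reachable.symm)
        have keyB : ∀ v, G.Reachable z v → v ≠ x ∧ v ≠ y ∧ ¬G.Adj v x ∧ ¬G.Adj v y := by
          intro v hv
          refine ⟨?_, ?_, ?_, ?_⟩
          · rintro rfl; exact hnr' hv
          · rintro rfl; exact hnr' (hv.trans hxy.reachable.symm)
          · intro h; exact hnr' (hv.trans h.reachable)
          · intro h; exact hnr' ((hv.trans h.reachable).trans hxy.reachable.symm)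
        have hAcomp : ∀ p ∈ A, ∀ q ∈ A, p ≠ q → G.Adj p q := by
          intro p hp q hq hne
          by_contra hna
          obtain ⟨a, b, c', h1, h2, h3, h4, h5, h6, h7⟩ :=
            aux_p3_of_not_adj (G.dist p q) p q rfl ((hp : G.Reachable x p).symm.trans hq) hne hna
          obtain ⟨ka1, ka2, ka3, ka4⟩ := keyA a ((hp : G.Reachable x p).trans h5)
          obtain ⟨kb1, kb2, kb3, kb4⟩ := keyA b ((hp : G.Reachable x p).trans h6)
          obtain ⟨kc1, kc2, kc3, kc4⟩ := keyA c' ((hp : G.Reachable x p).trans h7)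
          exact hP3K2 ⟨a, b, c', z, w, h4, h1, h2, h3, hzw,
            ka1, ka2, kb1, kb2, kc1, kc2, ka3, ka4, kb3, kb4, kc3, kc4⟩
        have hBcomp : ∀ p ∈ Bs, ∀ q ∈ Bs, p ≠ q → G.Adj p q := by
          intro p hp q hq hne
          by_contra hna
          obtain ⟨a, b, c', h1, h2, h3, h4, h5, h6, h7⟩ :=
            aux_p3_of_not_adj (G.dist p q) p q rfl ((hp : G.Reachable z p).symm.trans hq) hne hna
          obtain ⟨ka1, ka2, ka3, ka4⟩ := keyB a ((hp : G.Reachable z p).trans h5)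
          obtain ⟨kb1, kb2, kb3, kb4⟩ := keyB b ((hp : G.Reachable z p).trans h6)
          obtain ⟨kc1, kc2, kc3, kc4⟩ := keyB c' ((hp : G.Reachable z p).trans h7)
          exact hP3K2 ⟨a, b, c', x, y, h4, h1, h2, h3, hxy,
            ka1, ka2, kb1, kb2, kc1, kc2, ka3, ka4, kb3, kb4, kc3, kc4⟩
        have hcov : ∀ p q : V, G.Adj p q → p ∈ A ∨ p ∈ Bs := by
          intro p q hpq
          by_contra hn
          push_neg at hn
          obtain ⟨hnA, hnB⟩ := hn
          have hnrxp : ¬G.Reachable x p := hnA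
          have hnrzp : ¬G.Reachable z p := hnB
          have pairs : ∀ (s t s' t' : V), G.Adj s t → G.Adj s' t' → ¬G.Reachable s s' →
              s ≠ s' ∧ s ≠ t' ∧ t ≠ s' ∧ t ≠ t' ∧
              ¬G.Adj s s' ∧ ¬G.Adj s t' ∧ ¬G.Adj t s' ∧ ¬G.Adj t t' := by
            intro s t s' t' hst hst' hr
            refine ⟨?_, ?_, ?_, ?_, ?_, ?_, ?_, ?_⟩
            · rintro rfl; exact hr (Reachable.refl _)
            · rintro rfl; exact hr hst'.reachable.symm
            · rintro rfl; exact hr hst.reachable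
            · rintro rfl; exact hr (hst.reachable.trans hst'.reachable.symm)
            · intro h; exact hr h.reachable
            · intro h; exact hr (h.reachable.trans hst'.reachable.symm)
            · intro h; exact hr (hst.reachable.trans h.reachable)
            · intro h; exact hr ((hst.reachable.trans h.reachable).trans hst'.reachable.symm)
          obtain ⟨a1, a2, a3, a4, a5, a6, a7, a8⟩ := pairs x y z w hxy hzw hnr
          obtain ⟨b1, b2, b3, b4, b5, b6, b7, b8⟩ := pairs x y p q hxy hpq hnrxp
          obtain ⟨c1, c2, c3, c4, c5, c6, c7, c8⟩ := pairs z w p q hzw hpq hnrzp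
          exact hM3 ⟨x, y, z, w, p, q, hxy, hzw, hpq,
            a1, a2, a3, a4, b1, b2, b3, b4, c1, c2, c3, c4,
            a5, a6, a7, a8, b5, b6, b7, b8, c5, c6, c7, c8⟩
        have hsplit : (∀ i : Fin (m+2), ∃ v ∈ A, c v = i) ∨
            (∀ i : Fin (m+2), ∃ v ∈ Bs, c v = i) := by
          by_contra hcon
          push_neg at hcon
          obtain ⟨⟨i, hi⟩, ⟨j, hj⟩⟩ := hcon
          by_cases hij : i = j
          · subst hij
            obtain ⟨j', hj'⟩ := exists_ne i
            obtain ⟨p, q, hpq, hcp, hcq⟩ := hc.2 j' i hj'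
            rcases hcov q p hpq.symm with hqA | hqB
            · exact hi q hqA hcq
            · exact hj q hqB hcq
          · obtain ⟨p, q, hpq, hcp, hcq⟩ := hc.2 i j hij
            rcases hcov p q hpq with hpA | hpB
            · exact hi p hpA hcp
            · exact hj q ((hpB : G.Reachable z p).trans hpq.reachable) hcq
        rcases hsplit with h | h
        · exact hfinish A hAcomp h
        · exact hfinish Bs hBcomp h
      · -- all edges in one component
        push_neg at hcaseB
        have hcaseA : ∀ p q : V, G.Adj p q → G.Reachable u0 p := by
          intro p q hpq
          exact (hcaseB p q u0 v0 hpq huv0).symm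
        set W := {v : V | G.Reachable u0 v} with hW
        have hWconn := aux_component_connected (G := G) u0
        haveI : Nonempty W := ⟨⟨u0, Reachable.refl _⟩⟩
        obtain ⟨uu, huu⟩ := aux_exists_universal hWconn
          (fun h => hP4 (aux_confP4_lift h)) (fun h => hC4 (aux_confC4_lift h))
        set u := uu.val with hu
        have huniv : ∀ v ∈ W, v ≠ u → G.Adj u v := by
          intro v hv hne
          have := huu ⟨v, hv⟩ (fun h => hne (congrArg Subtype.val h))
          simpa using this
        set s := {v : V | c v ≠ c u} with hs
        obtain ⟨c', hc'⟩ := aux_delete_color hc u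
        have hcard' : Fintype.card s ≤ n := by
          have hlt : Fintype.card s < Fintype.card V :=
            Fintype.card_subtype_lt (x := u) (fun h => h rfl)
          omega
        have hii := ih (G.induce s) hcard'
          (fun h => hP4 (aux_confP4_lift h)) (fun h => hC4 (aux_confC4_lift h))
          (fun h => hM3 (aux_confM3_lift h)) (fun h => hP3K2 (aux_confP3K2_lift h))
        have hpsi : (m+1 : ℕ) ≤ pseudoachromaticNumber (G.induce s) :=
          le_csSup (aux_psi_bdd (G.induce s)) ⟨c', hc'⟩
        have hm1 : m + 1 ≤ (G.induce s).cliqueNum := le_trans hpsi hii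
        obtain ⟨t, ht⟩ := SimpleGraph.exists_isNClique_cliqueNum (G := G.induce s)
        by_cases hsize : (G.induce s).cliqueNum ≤ 1
        · omega
        · push_neg at hsize
          have htW : ∀ v : ↥s, v ∈ t → v.val ∈ W := by
            intro v hv
            obtain ⟨v2, hv2, hvne⟩ : ∃ v2 ∈ t, v2 ≠ v :=
              Finset.exists_mem_ne (by rw [ht.card_eq]; omega) v
            have hadj : (G.induce s).Adj v2 v := ht.1 hv2 hv hvne
            have hadj' : G.Adj v2.val v.val := hadj
            exact (hcaseB v.val v2.val u0 v0 hadj'.symm huv0).symm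
          set tv : Finset V := t.image Subtype.val with htvdef
          have htv_card : tv.card = (G.induce s).cliqueNum := by
            rw [htvdef, Finset.card_image_of_injective _ Subtype.val_injective, ht.card_eq]
          have hunotin : u ∉ tv := by
            intro h
            obtain ⟨v', hv', hval⟩ := Finset.mem_image.mp h
            exact v'.2 (by rw [hval])
          have hclq : G.IsNClique ((G.induce s).cliqueNum + 1) (insert u tv) := by
            constructor
            · intro p hp q hq hne
              simp only [Finset.coe_insert, Set.mem_insert_iff, Finset.mem_coe] at hp hq
              have hmemW : ∀ r, r ∈ tv → r ∈ W ∧ r ≠ u := by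
                intro r hr
                obtain ⟨v', hv', hval⟩ := Finset.mem_image.mp hr
                refine ⟨hval ▸ htW v' hv', ?_⟩
                intro hre
                exact v'.2 (by rw [hval, hre])
              rcases hp with rfl | hp <;> rcases hq with rfl | hq
              · exact absurd rfl hne
              · obtain ⟨hqW, hqu⟩ := hmemW q hq
                exact huniv q hqW hqu
              · obtain ⟨hpW, hpu⟩ := hmemW p hp
                exact (huniv p hpW hpu).symm
              · obtain ⟨v1, hv1, hval1⟩ := Finset.mem_image.mp hp
                obtain ⟨v2, hv2, hval2⟩ := Finset.mem_image.mp hq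
                have hne12 : v1 ≠ v2 := by
                  intro h; exact hne (by rw [← hval1, ← hval2, h])
                have := ht.1 hv1 hv2 hne12
                have hadj' : G.Adj v1.val v2.val := this
                rw [hval1, hval2] at hadj'
                exact hadj'
            · rw [Finset.card_insert_of_notMem hunotin, htv_card]
          have hfin : (G.induce s).cliqueNum + 1 ≤ G.cliqueNum :=
            le_csSup (aux_clique_bdd G) ⟨_, hclq⟩
          omega

end Chunk6
section Chunk7

private lemma aux_minor_mono {V : Type*} {G : SimpleGraph V} {k j : ℕ}
    (h : HasCompleteMinor G k) (hjk : j ≤ k) : HasCompleteMinor G j := by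
  obtain ⟨B, h1, h2, h3⟩ := h
  refine ⟨fun i => B (Fin.castLE hjk i), fun i => h1 _, fun i i' hne => h2 _ _ ?_, 
    fun i i' hne => h3 _ _ ?_⟩ <;>
  · intro he
    exact hne (Fin.castLE_injective hjk he)

private lemma aux_hadwiger_le_two {V : Type*} [Fintype V] {G : SimpleGraph V}
    (h : ¬HasCompleteMinor G 3) : hadwigerNumber G ≤ 2 := by
  refine csSup_le' ?_
  intro k hk
  by_contra hgt
  push_neg at hgt
  exact h (aux_minor_mono hk (by omega))

private lemma aux_two_of_three {W : Type*} {B : Fin 3 → Set W}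
    (hdisj : ∀ i j : Fin 3, i ≠ j → Disjoint (B i) (B j)) {x : W}
    (h1 : x ∈ B 0 ∪ B 1) (h2 : x ∈ B 0 ∪ B 2) (h3 : x ∈ B 1 ∪ B 2) : False := by
  have key : ∀ i j : Fin 3, i ≠ j → x ∈ B i → x ∈ B j → False := by
    intro i j hne hi hj
    exact Set.disjoint_left.mp (hdisj i j hne) hi hj
  rcases h1 with h | h
  · rcases h3 with h' | h'
    · exact key 0 1 (by decide) h h'
    · exact key 0 2 (by decide) h h'
  · rcases h2 with h' | h'
    · exact key 0 1 (by decide) h' h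
    · exact key 1 2 (by decide) h h'

private lemma aux_other_two : ∀ p : Fin 3, ∃ i j : Fin 3, i ≠ j ∧ i ≠ p ∧ j ≠ p := by decide

private lemma aux_third : ∀ p q : Fin 3, p ≠ q → ∃ r : Fin 3, r ≠ p ∧ r ≠ q := by decide

private lemma aux_noP4 {V : Type*} [Fintype V] {G : SimpleGraph V}
    (hyp : ∀ s : Set V, achromaticNumber (G.induce s) = hadwigerNumber (G.induce s)) :
    ¬ConfP4 G := by
  classical
  rintro ⟨a, b, c, d, hac, had, hbd, hab, hbc, hcd, nac, nad, nbd⟩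
  have hba : a ≠ b := hab.ne
  have hcb : b ≠ c := hbc.ne
  have hdc : c ≠ d := hcd.ne
  set s : Set V := {a, b, c, d} with hsdef
  have ha : a ∈ s := by simp [hsdef]
  have hb : b ∈ s := by simp [hsdef]
  have hc : c ∈ s := by simp [hsdef]
  have hd : d ∈ s := by simp [hsdef]
  have hmem : ∀ v : ↥s, v.val = a ∨ v.val = b ∨ v.val = c ∨ v.val = d := fun v => by
    have := v.2
    simp only [hsdef, Set.mem_insert_iff, Set.mem_singleton_iff] at this
    exact this
  -- achromatic number at least 3
  set f : ↥s → Fin 3 := fun v => if v.val = a ∨ v.val = d then 0 else if v.val = b then 1 else 2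
    with hf
  have fa : f ⟨a, ha⟩ = 0 := by simp [hf]
  have fd : f ⟨d, hd⟩ = 0 := by simp [hf]
  have fb : f ⟨b, hb⟩ = 1 := by simp [hf, Ne.symm hba, hbd]
  have fc : f ⟨c, hc⟩ = 2 := by simp [hf, Ne.symm hac, hdc, Ne.symm hcb]
  have hfeval : ∀ v : ↥s, (v.val = a → f v = 0) ∧ (v.val = b → f v = 1) ∧
      (v.val = c → f v = 2) ∧ (v.val = d → f v = 0) := by
    intro v
    refine ⟨fun h => ?_, fun h => ?_, fun h => ?_, fun h => ?_⟩ <;>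
      (first
        | (rw [show v = (⟨a, ha⟩ : ↥s) from Subtype.ext h]; exact fa)
        | (rw [show v = (⟨b, hb⟩ : ↥s) from Subtype.ext h]; exact fb)
        | (rw [show v = (⟨c, hc⟩ : ↥s) from Subtype.ext h]; exact fc)
        | (rw [show v = (⟨d, hd⟩ : ↥s) from Subtype.ext h]; exact fd))
  have halpha : 3 ≤ achromaticNumber (G.induce s) := by
    refine le_csSup (aux_alpha_bdd _) ⟨f, ?_, ?_, ?_⟩
    · -- proper
      intro u v huv hfuv
      have hadj : G.Adj u.val v.val := huv
      obtain ⟨eu1, eu2, eu3, eu4⟩ := hfeval u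
      obtain ⟨ev1, ev2, ev3, ev4⟩ := hfeval v
      rcases hmem u with h1 | h1 | h1 | h1 <;> rcases hmem v with h2 | h2 | h2 | h2 <;>
        rw [h1, h2] at hadj <;>
        first
          | exact G.loopless.irrefl _ hadj
          | exact nac hadj
          | exact nac hadj.symm
          | exact nad hadj
          | exact nad hadj.symm
          | exact nbd hadj
          | exact nbd hadj.symm
          | (rw [eu1 h1, ev2 h2] at hfuv; exact absurd hfuv (by decide))
          | (rw [eu1 h1, ev3 h2] at hfuv; exact absurd hfuv (by decide))
          | (rw [eu2 h1, ev1 h2] at hfuv; exact absurd hfuv (by decide))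
          | (rw [eu2 h1, ev3 h2] at hfuv; exact absurd hfuv (by decide))
          | (rw [eu2 h1, ev4 h2] at hfuv; exact absurd hfuv (by decide))
          | (rw [eu3 h1, ev1 h2] at hfuv; exact absurd hfuv (by decide))
          | (rw [eu3 h1, ev2 h2] at hfuv; exact absurd hfuv (by decide))
          | (rw [eu3 h1, ev4 h2] at hfuv; exact absurd hfuv (by decide))
          | (rw [eu4 h1, ev2 h2] at hfuv; exact absurd hfuv (by decide))
          | (rw [eu4 h1, ev3 h2] at hfuv; exact absurd hfuv (by decide))
    · -- surjective
      intro i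
      fin_cases i
      · exact ⟨⟨a, ha⟩, fa⟩
      · exact ⟨⟨b, hb⟩, fb⟩
      · exact ⟨⟨c, hc⟩, fc⟩
    · -- complete
      intro i j hij
      have pab : (G.induce s).Adj ⟨a, ha⟩ ⟨b, hb⟩ := hab
      have pbc : (G.induce s).Adj ⟨b, hb⟩ ⟨c, hc⟩ := hbc
      have pcd : (G.induce s).Adj ⟨c, hc⟩ ⟨d, hd⟩ := hcd
      fin_cases i <;> fin_cases j <;>
        first
          | exact absurd rfl hij
          | exact ⟨_, _, pab, fa, fb⟩
          | exact ⟨_, _, pab.symm, fb, fa⟩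
          | exact ⟨_, _, pbc, fb, fc⟩
          | exact ⟨_, _, pbc.symm, fc, fb⟩
          | exact ⟨_, _, pcd, fc, fd⟩
          | exact ⟨_, _, pcd.symm, fd, fc⟩
  -- no K3 minor
  have hminor : ¬HasCompleteMinor (G.induce s) 3 := by
    rintro ⟨B, hBconn, hBdisj, hBadj⟩
    have hclass : ∀ u v : ↥s, (G.induce s).Adj u v →
        (u.val = a ∧ v.val = b) ∨ (u.val = b ∧ v.val = a) ∨ (u.val = b ∧ v.val = c) ∨
        (u.val = c ∧ v.val = b) ∨ (u.val = c ∧ v.val = d) ∨ (u.val = d ∧ v.val = c) := by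
      intro u v huv
      have hadj : G.Adj u.val v.val := huv
      rcases hmem u with h1 | h1 | h1 | h1 <;> rcases hmem v with h2 | h2 | h2 | h2 <;>
        rw [h1, h2] at hadj <;>
        first
          | exact (G.loopless.irrefl _ hadj).elim
          | exact (nac hadj).elim
          | exact (nac hadj.symm).elim
          | exact (nad hadj).elim
          | exact (nad hadj.symm).elim
          | exact (nbd hadj).elim
          | exact (nbd hadj.symm).elim
          | exact Or.inl ⟨h1, h2⟩
          | exact Or.inr (Or.inl ⟨h1, h2⟩)
          | exact Or.inr (Or.inr (Or.inl ⟨h1, h2⟩))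
          | exact Or.inr (Or.inr (Or.inr (Or.inl ⟨h1, h2⟩)))
          | exact Or.inr (Or.inr (Or.inr (Or.inr (Or.inl ⟨h1, h2⟩))))
          | exact Or.inr (Or.inr (Or.inr (Or.inr (Or.inr ⟨h1, h2⟩))))
    have hwit : ∀ i j : Fin 3, i ≠ j → ∃ u v : ↥s, u ∈ B i ∧ v ∈ B j ∧
        ((u.val = a ∧ v.val = b) ∨ (u.val = b ∧ v.val = a) ∨ (u.val = b ∧ v.val = c) ∨
        (u.val = c ∧ v.val = b) ∨ (u.val = c ∧ v.val = d) ∨ (u.val = d ∧ v.val = c)) := by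
      intro i j hij
      obtain ⟨u, hu, v, hv, huv⟩ := hBadj i j hij
      exact ⟨u, v, hu, hv, hclass u v huv⟩
    have hkey : ∀ (i j : Fin 3) (x : ↥s) (w : V), i ≠ j → x ∈ B i → x.val = w →
        ∀ y : ↥s, y ∈ B j → y.val = w → False := by
      intro i j x w hij hx hxw y hy hyw
      have : x = y := Subtype.ext (hxw.trans hyw.symm)
      exact Set.disjoint_left.mp (hBdisj i j hij) hx (this ▸ hy)
    -- b is in some branch set, or not
    by_cases hbB : ∃ p, (⟨b, hb⟩ : ↥s) ∈ B p
    · obtain ⟨p, hbp⟩ := hbB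
      by_cases hcB : ∃ q, (⟨c, hc⟩ : ↥s) ∈ B q
      · obtain ⟨q, hcq⟩ := hcB
        by_cases hpq : p = q
        · subst hpq
          obtain ⟨i, j, hij, hip, hjp⟩ := aux_other_two p
          obtain ⟨u, v, hu, hv, hcl⟩ := hwit i j hij
          rcases hcl with ⟨h1, h2⟩ | ⟨h1, h2⟩ | ⟨h1, h2⟩ | ⟨h1, h2⟩ | ⟨h1, h2⟩ | ⟨h1, h2⟩
          · exact hkey j p v b hjp hv h2 _ hbp rfl
          · exact hkey i p u b hip hu h1 _ hbp rfl
          · exact hkey i p u b hip hu h1 _ hbp rfl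
          · exact hkey j p v b hjp hv h2 _ hbp rfl
          · exact hkey i p u c hip hu h1 _ hcq rfl
          · exact hkey j p v c hjp hv h2 _ hcq rfl
        · obtain ⟨r, hrp, hrq⟩ := aux_third p q hpq
          -- from pair (p, r): a ∈ B r
          have haBr : (⟨a, ha⟩ : ↥s) ∈ B r := by
            obtain ⟨u, v, hu, hv, hcl⟩ := hwit p r (Ne.symm hrp)
            rcases hcl with ⟨h1, h2⟩ | ⟨h1, h2⟩ | ⟨h1, h2⟩ | ⟨h1, h2⟩ | ⟨h1, h2⟩ | ⟨h1, h2⟩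
            · exact (hkey r p v b hrp hv h2 _ hbp rfl).elim
            · rw [show v = (⟨a, ha⟩ : ↥s) from Subtype.ext h2] at hv; exact hv
            · exact (hkey r q v c hrq hv h2 _ hcq rfl).elim
            · exact (hkey p q u c (hpq) hu h1 _ hcq rfl).elim
            · exact (hkey p q u c (hpq) hu h1 _ hcq rfl).elim
            · exact (hkey r q v c hrq hv h2 _ hcq rfl).elim
          -- from pair (q, r): d ∈ B r
          have hdBr : (⟨d, hd⟩ : ↥s) ∈ B r := by
            obtain ⟨u, v, hu, hv, hcl⟩ := hwit q r (Ne.symm hrq)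
            rcases hcl with ⟨h1, h2⟩ | ⟨h1, h2⟩ | ⟨h1, h2⟩ | ⟨h1, h2⟩ | ⟨h1, h2⟩ | ⟨h1, h2⟩
            · exact (hkey r p v b hrp hv h2 _ hbp rfl).elim
            · exact (hkey q p u b (Ne.symm hpq) hu h1 _ hbp rfl).elim
            · exact (hkey q p u b (Ne.symm hpq) hu h1 _ hbp rfl).elim
            · exact (hkey r p v b hrp hv h2 _ hbp rfl).elim
            · rw [show v = (⟨d, hd⟩ : ↥s) from Subtype.ext h2] at hv; exact hv
            · exact (hkey r q v c hrq hv h2 _ hcq rfl).elim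
          -- B r ⊆ {a, d}
          have hsub : ∀ w : ↥s, w ∈ B r → w.val = a ∨ w.val = d := by
            intro w hw
            rcases hmem w with h | h | h | h
            · exact Or.inl h
            · exact (hkey r p w b hrp hw h _ hbp rfl).elim
            · exact (hkey r q w c hrq hw h _ hcq rfl).elim
            · exact Or.inr h
          -- connectivity contradiction
          have hreach := (hBconn r).preconnected ⟨⟨a, ha⟩, haBr⟩ ⟨⟨d, hd⟩, hdBr⟩
          have := aux_adj_invariant (H := ((G.induce s).induce (B r)))
            (F := fun w : ↥(B r) => if (w.val : ↥s).val = a then (0 : ℕ) else 1) ?_ hreach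
          · simp only [Ne.symm had] at this
            simp at this
          · intro x y hxy
            have hadj : (G.induce s).Adj x.val y.val := hxy
            exfalso
            rcases hclass _ _ hadj with ⟨h1, h2⟩ | ⟨h1, h2⟩ | ⟨h1, h2⟩ | ⟨h1, h2⟩ | ⟨h1, h2⟩ | ⟨h1, h2⟩
            · rcases hsub _ y.2 with h | h <;> rw [h2] at h
              · exact hba h.symm
              · exact hbd h
            · rcases hsub _ x.2 with h | h <;> rw [h1] at h
              · exact hba h.symm
              · exact hbd h
            · rcases hsub _ x.2 with h | h <;> rw [h1] at h
              · exact hba h.symm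
              · exact hbd h
            · rcases hsub _ x.2 with h | h <;> rw [h1] at h
              · exact hac h.symm
              · exact hdc h
            · rcases hsub _ x.2 with h | h <;> rw [h1] at h
              · exact hac h.symm
              · exact hdc h
            · rcases hsub _ y.2 with h | h <;> rw [h2] at h
              · exact hac h.symm
              · exact hdc h
      · -- c in no branch set: every witness edge must avoid c, so it must be {a,b}
        push_neg at hcB
        have hhit : ∀ i j : Fin 3, i ≠ j → (⟨a, ha⟩ : ↥s) ∈ B i ∪ B j := by
          intro i j hij
          obtain ⟨u, v, hu, hv, hcl⟩ := hwit i j hij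
          rcases hcl with ⟨h1, h2⟩ | ⟨h1, h2⟩ | ⟨h1, h2⟩ | ⟨h1, h2⟩ | ⟨h1, h2⟩ | ⟨h1, h2⟩
          · exact Or.inl (by rwa [show (⟨a, ha⟩ : ↥s) = u from Subtype.ext h1.symm])
          · exact Or.inr (by rwa [show (⟨a, ha⟩ : ↥s) = v from Subtype.ext h2.symm])
          · exact absurd (by rwa [show (⟨c, hc⟩ : ↥s) = v from Subtype.ext h2.symm]) (hcB j)
          · exact absurd (by rwa [show (⟨c, hc⟩ : ↥s) = u from Subtype.ext h1.symm]) (hcB i)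
          · exact absurd (by rwa [show (⟨c, hc⟩ : ↥s) = u from Subtype.ext h1.symm]) (hcB i)
          · exact absurd (by rwa [show (⟨c, hc⟩ : ↥s) = v from Subtype.ext h2.symm]) (hcB j)
        exact aux_two_of_three hBdisj (hhit 0 1 (by decide)) (hhit 0 2 (by decide))
          (hhit 1 2 (by decide))
    · -- b in no branch set: every witness edge avoids b, so it is {c,d}
      push_neg at hbB
      have hhit : ∀ i j : Fin 3, i ≠ j → (⟨c, hc⟩ : ↥s) ∈ B i ∪ B j := by
        intro i j hij
        obtain ⟨u, v, hu, hv, hcl⟩ := hwit i j hij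
        rcases hcl with ⟨h1, h2⟩ | ⟨h1, h2⟩ | ⟨h1, h2⟩ | ⟨h1, h2⟩ | ⟨h1, h2⟩ | ⟨h1, h2⟩
        · exact absurd (by rwa [show (⟨b, hb⟩ : ↥s) = v from Subtype.ext h2.symm]) (hbB j)
        · exact absurd (by rwa [show (⟨b, hb⟩ : ↥s) = u from Subtype.ext h1.symm]) (hbB i)
        · exact absurd (by rwa [show (⟨b, hb⟩ : ↥s) = u from Subtype.ext h1.symm]) (hbB i)
        · exact absurd (by rwa [show (⟨b, hb⟩ : ↥s) = v from Subtype.ext h2.symm]) (hbB j)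
        · exact Or.inl (by rwa [show (⟨c, hc⟩ : ↥s) = u from Subtype.ext h1.symm])
        · exact Or.inr (by rwa [show (⟨c, hc⟩ : ↥s) = v from Subtype.ext h2.symm])
      exact aux_two_of_three hBdisj (hhit 0 1 (by decide)) (hhit 0 2 (by decide))
        (hhit 1 2 (by decide))
  have := hyp s
  have h2 := aux_hadwiger_le_two hminor
  omega

end Chunk7
section Chunk8

private lemma aux_noC4 {V : Type*} [Fintype V] {G : SimpleGraph V}
    (hyp : ∀ s : Set V, achromaticNumber (G.induce s) = hadwigerNumber (G.induce s)) :
    ¬ConfC4 G := by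
  classical
  rintro ⟨a, b, c, d, hac, hbd, hab, hbc, hcd, hda, nac, nbd⟩
  have hba : a ≠ b := hab.ne
  have hcb : b ≠ c := hbc.ne
  have hdc : c ≠ d := hcd.ne
  have had : a ≠ d := (hda.ne).symm
  set s : Set V := {a, b, c, d} with hsdef
  have ha : a ∈ s := by simp [hsdef]
  have hb : b ∈ s := by simp [hsdef]
  have hc : c ∈ s := by simp [hsdef]
  have hd : d ∈ s := by simp [hsdef]
  have hmem : ∀ v : ↥s, v.val = a ∨ v.val = b ∨ v.val = c ∨ v.val = d := fun v => by
    have := v.2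
    simp only [hsdef, Set.mem_insert_iff, Set.mem_singleton_iff] at this
    exact this
  have hclass : ∀ u v : ↥s, (G.induce s).Adj u v →
      (u.val = a ∧ v.val = b) ∨ (u.val = b ∧ v.val = a) ∨ (u.val = b ∧ v.val = c) ∨
      (u.val = c ∧ v.val = b) ∨ (u.val = c ∧ v.val = d) ∨ (u.val = d ∧ v.val = c) ∨
      (u.val = d ∧ v.val = a) ∨ (u.val = a ∧ v.val = d) := by
    intro u v huv
    have hadj : G.Adj u.val v.val := huv
    rcases hmem u with h1 | h1 | h1 | h1 <;> rcases hmem v with h2 | h2 | h2 | h2 <;>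
      rw [h1, h2] at hadj <;>
      first
        | exact (G.loopless.irrefl _ hadj).elim
        | exact (nac hadj).elim
        | exact (nac hadj.symm).elim
        | exact (nbd hadj).elim
        | exact (nbd hadj.symm).elim
        | exact Or.inl ⟨h1, h2⟩
        | exact Or.inr (Or.inl ⟨h1, h2⟩)
        | exact Or.inr (Or.inr (Or.inl ⟨h1, h2⟩))
        | exact Or.inr (Or.inr (Or.inr (Or.inl ⟨h1, h2⟩)))
        | exact Or.inr (Or.inr (Or.inr (Or.inr (Or.inl ⟨h1, h2⟩))))
        | exact Or.inr (Or.inr (Or.inr (Or.inr (Or.inr (Or.inl ⟨h1, h2⟩)))))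
        | exact Or.inr (Or.inr (Or.inr (Or.inr (Or.inr (Or.inr (Or.inl ⟨h1, h2⟩))))))
        | exact Or.inr (Or.inr (Or.inr (Or.inr (Or.inr (Or.inr (Or.inr ⟨h1, h2⟩))))))
  -- Hadwiger number at least 3
  have hminor : 3 ≤ hadwigerNumber (G.induce s) := by
    refine le_csSup (aux_hadwiger_bdd _) ?_
    set B : Fin 3 → Set ↥s := fun i =>
      if i = 0 then {⟨a, ha⟩, ⟨b, hb⟩} else if i = 1 then {⟨c, hc⟩} else {⟨d, hd⟩} with hBdef
    have hB0 : B 0 = {⟨a, ha⟩, ⟨b, hb⟩} := by simp [hBdef]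
    have hB1 : B 1 = {⟨c, hc⟩} := by simp [hBdef]
    have hB2 : B 2 = {⟨d, hd⟩} := by simp [hBdef]
    have pab : (G.induce s).Adj ⟨a, ha⟩ ⟨b, hb⟩ := hab
    have pbc : (G.induce s).Adj ⟨b, hb⟩ ⟨c, hc⟩ := hbc
    have pcd : (G.induce s).Adj ⟨c, hc⟩ ⟨d, hd⟩ := hcd
    have pda : (G.induce s).Adj ⟨d, hd⟩ ⟨a, ha⟩ := hda
    refine ⟨B, ?_, ?_, ?_⟩
    · intro i
      fin_cases i
      · show ((G.induce s).induce (B 0)).Connected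
        rw [hB0]; exact aux_connected_induce_pair pab
      · show ((G.induce s).induce (B 1)).Connected
        rw [hB1]; exact aux_connected_induce_singleton _ _
      · show ((G.induce s).induce (B 2)).Connected
        rw [hB2]; exact aux_connected_induce_singleton _ _
    · have hdis : ∀ (x y : ↥s), x ≠ y → Disjoint ({x} : Set ↥s) {y} := by
        intro x y hxy
        rw [Set.disjoint_left]
        rintro z rfl hz
        rw [Set.mem_singleton_iff] at hz
        exact hxy hz
      have hdis2 : ∀ (x y z : ↥s), x ≠ z → y ≠ z → Disjoint ({x, y} : Set ↥s) {z} := by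
        intro x y z hxz hyz
        rw [Set.disjoint_left]
        rintro w (rfl | rfl) hw <;> rw [Set.mem_singleton_iff] at hw
        · exact hxz hw
        · exact hyz hw
      have nab_c : (⟨a, ha⟩ : ↥s) ≠ ⟨c, hc⟩ := fun h => hac (Subtype.ext_iff.mp h)
      have nb_c : (⟨b, hb⟩ : ↥s) ≠ ⟨c, hc⟩ := fun h => hcb (Subtype.ext_iff.mp h)
      have na_d : (⟨a, ha⟩ : ↥s) ≠ ⟨d, hd⟩ := fun h => had (Subtype.ext_iff.mp h)
      have nb_d : (⟨b, hb⟩ : ↥s) ≠ ⟨d, hd⟩ := fun h => hbd (Subtype.ext_iff.mp h)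
      have nc_d : (⟨c, hc⟩ : ↥s) ≠ ⟨d, hd⟩ := fun h => hdc (Subtype.ext_iff.mp h)
      have d01 : Disjoint (B 0) (B 1) := by rw [hB0, hB1]; exact hdis2 _ _ _ nab_c nb_c
      have d02 : Disjoint (B 0) (B 2) := by rw [hB0, hB2]; exact hdis2 _ _ _ na_d nb_d
      have d12 : Disjoint (B 1) (B 2) := by rw [hB1, hB2]; exact hdis _ _ nc_d
      intro i j hij
      fin_cases i <;> fin_cases j <;>
        first
          | exact absurd rfl hij
          | exact d01
          | exact d02
          | exact d12
          | exact d01.symm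
          | exact d02.symm
          | exact d12.symm
    · have mb0a : (⟨a, ha⟩ : ↥s) ∈ B 0 := by rw [hB0]; exact Or.inl rfl
      have mb0b : (⟨b, hb⟩ : ↥s) ∈ B 0 := by rw [hB0]; exact Or.inr rfl
      have mb1c : (⟨c, hc⟩ : ↥s) ∈ B 1 := by rw [hB1]; rfl
      have mb2d : (⟨d, hd⟩ : ↥s) ∈ B 2 := by rw [hB2]; rfl
      intro i j hij
      fin_cases i <;> fin_cases j <;>
        first
          | exact absurd rfl hij
          | exact ⟨_, mb0b, _, mb1c, pbc⟩
          | exact ⟨_, mb1c, _, mb0b, pbc.symm⟩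
          | exact ⟨_, mb0a, _, mb2d, pda.symm⟩
          | exact ⟨_, mb2d, _, mb0a, pda⟩
          | exact ⟨_, mb1c, _, mb2d, pcd⟩
          | exact ⟨_, mb2d, _, mb1c, pcd.symm⟩
  -- achromatic number at most 2
  have halpha : achromaticNumber (G.induce s) ≤ 2 := by
    refine csSup_le' ?_
    rintro k ⟨g, hgp, hgs, hgc⟩
    by_contra hk
    push_neg at hk
    have pab : (G.induce s).Adj ⟨a, ha⟩ ⟨b, hb⟩ := hab
    have pbc : (G.induce s).Adj ⟨b, hb⟩ ⟨c, hc⟩ := hbc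
    have pcd : (G.induce s).Adj ⟨c, hc⟩ ⟨d, hd⟩ := hcd
    have pda : (G.induce s).Adj ⟨d, hd⟩ ⟨a, ha⟩ := hda
    have h1 : g ⟨a, ha⟩ = g ⟨c, hc⟩ := by
      by_contra hne
      obtain ⟨u, v, huv, hgu, hgv⟩ := hgc (g ⟨a, ha⟩) (g ⟨c, hc⟩) hne
      rcases hclass u v huv with ⟨e1, e2⟩ | ⟨e1, e2⟩ | ⟨e1, e2⟩ | ⟨e1, e2⟩ |
        ⟨e1, e2⟩ | ⟨e1, e2⟩ | ⟨e1, e2⟩ | ⟨e1, e2⟩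
      · rw [show v = (⟨b, hb⟩ : ↥s) from Subtype.ext e2] at hgv
        exact hgp _ _ pbc hgv
      · rw [show u = (⟨b, hb⟩ : ↥s) from Subtype.ext e1] at hgu
        exact hgp _ _ pab hgu.symm
      · rw [show u = (⟨b, hb⟩ : ↥s) from Subtype.ext e1] at hgu
        exact hgp _ _ pab hgu.symm
      · rw [show u = (⟨c, hc⟩ : ↥s) from Subtype.ext e1] at hgu
        exact hne hgu.symm
      · rw [show u = (⟨c, hc⟩ : ↥s) from Subtype.ext e1] at hgu
        exact hne hgu.symm
      · rw [show u = (⟨d, hd⟩ : ↥s) from Subtype.ext e1] at hgu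
        exact hgp _ _ pda hgu
      · rw [show u = (⟨d, hd⟩ : ↥s) from Subtype.ext e1] at hgu
        exact hgp _ _ pda hgu
      · rw [show v = (⟨d, hd⟩ : ↥s) from Subtype.ext e2] at hgv
        exact hgp _ _ pcd hgv.symm
    have h2 : g ⟨b, hb⟩ = g ⟨d, hd⟩ := by
      by_contra hne
      obtain ⟨u, v, huv, hgu, hgv⟩ := hgc (g ⟨b, hb⟩) (g ⟨d, hd⟩) hne
      rcases hclass u v huv with ⟨e1, e2⟩ | ⟨e1, e2⟩ | ⟨e1, e2⟩ | ⟨e1, e2⟩ |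
        ⟨e1, e2⟩ | ⟨e1, e2⟩ | ⟨e1, e2⟩ | ⟨e1, e2⟩
      · rw [show u = (⟨a, ha⟩ : ↥s) from Subtype.ext e1] at hgu
        exact hgp _ _ pab hgu
      · rw [show v = (⟨a, ha⟩ : ↥s) from Subtype.ext e2] at hgv
        exact hgp _ _ pda hgv.symm
      · rw [show v = (⟨c, hc⟩ : ↥s) from Subtype.ext e2] at hgv
        exact hgp _ _ pcd hgv
      · rw [show u = (⟨c, hc⟩ : ↥s) from Subtype.ext e1] at hgu
        exact hgp _ _ pbc hgu.symm
      · rw [show u = (⟨c, hc⟩ : ↥s) from Subtype.ext e1] at hgu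
        exact hgp _ _ pbc hgu.symm
      · rw [show u = (⟨d, hd⟩ : ↥s) from Subtype.ext e1] at hgu
        exact hne hgu.symm
      · rw [show u = (⟨d, hd⟩ : ↥s) from Subtype.ext e1] at hgu
        exact hne hgu.symm
      · rw [show u = (⟨a, ha⟩ : ↥s) from Subtype.ext e1] at hgu
        exact hgp _ _ pab hgu
    have h0 : ∀ i : Fin k, i = g ⟨a, ha⟩ ∨ i = g ⟨b, hb⟩ := by
      intro i
      obtain ⟨v, hv⟩ := hgs i
      rcases hmem v with h | h | h | h
      · left; rw [← hv, show v = (⟨a, ha⟩ : ↥s) from Subtype.ext h]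
      · right; rw [← hv, show v = (⟨b, hb⟩ : ↥s) from Subtype.ext h]
      · left; rw [← hv, show v = (⟨c, hc⟩ : ↥s) from Subtype.ext h, h1]
      · right; rw [← hv, show v = (⟨d, hd⟩ : ↥s) from Subtype.ext h, h2]
    have ne01 : (⟨0, by omega⟩ : Fin k) ≠ ⟨1, by omega⟩ := by simp [Fin.ext_iff]
    have ne02 : (⟨0, by omega⟩ : Fin k) ≠ ⟨2, by omega⟩ := by simp [Fin.ext_iff]
    have ne12 : (⟨1, by omega⟩ : Fin k) ≠ ⟨2, by omega⟩ := by simp [Fin.ext_iff]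
    have e0 := h0 ⟨0, by omega⟩
    have e1 := h0 ⟨1, by omega⟩
    have e2 := h0 ⟨2, by omega⟩
    rcases e0 with e0 | e0 <;> rcases e1 with e1 | e1 <;> rcases e2 with e2 | e2 <;>
      first
        | exact ne01 (e0.trans e1.symm)
        | exact ne02 (e0.trans e2.symm)
        | exact ne12 (e1.trans e2.symm)
  have := hyp s
  omega

end Chunk8
section Chunk9

private lemma aux_noM3 {V : Type*} [Fintype V] {G : SimpleGraph V}
    (hyp : ∀ s : Set V, achromaticNumber (G.induce s) = hadwigerNumber (G.induce s)) :
    ¬ConfM3 G := by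
  classical
  rintro ⟨a1, b1, a2, b2, a3, b3, e1, e2, e3, n1, n2, n3, n4, n5, n6, n7, n8, n9, n10,
    n11, n12, m1, m2, m3, m4, m5, m6, m7, m8, m9, m10, m11, m12⟩
  have w1 : a1 ≠ b1 := e1.ne
  have w2 : a2 ≠ b2 := e2.ne
  have w3 : a3 ≠ b3 := e3.ne
  set s : Set V := {a1, b1, a2, b2, a3, b3} with hsdef
  have ha1 : a1 ∈ s := by simp [hsdef]
  have hb1 : b1 ∈ s := by simp [hsdef]
  have ha2 : a2 ∈ s := by simp [hsdef]
  have hb2 : b2 ∈ s := by simp [hsdef]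
  have ha3 : a3 ∈ s := by simp [hsdef]
  have hb3 : b3 ∈ s := by simp [hsdef]
  have hmem : ∀ v : ↥s, v.val = a1 ∨ v.val = b1 ∨ v.val = a2 ∨ v.val = b2 ∨ v.val = a3 ∨
      v.val = b3 := fun v => by
    have := v.2
    simp only [hsdef, Set.mem_insert_iff, Set.mem_singleton_iff] at this
    exact this
  have hclass : ∀ u v : ↥s, (G.induce s).Adj u v →
      (u.val = a1 ∧ v.val = b1) ∨ (u.val = b1 ∧ v.val = a1) ∨
      (u.val = a2 ∧ v.val = b2) ∨ (u.val = b2 ∧ v.val = a2) ∨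
      (u.val = a3 ∧ v.val = b3) ∨ (u.val = b3 ∧ v.val = a3) := by
    intro u v huv
    have hadj : G.Adj u.val v.val := huv
    rcases hmem u with h1 | h1 | h1 | h1 | h1 | h1 <;>
      rcases hmem v with h2 | h2 | h2 | h2 | h2 | h2 <;>
      rw [h1, h2] at hadj <;>
      first
        | exact (G.loopless.irrefl _ hadj).elim
        | exact (m1 hadj).elim
        | exact (m1 hadj.symm).elim
        | exact (m2 hadj).elim
        | exact (m2 hadj.symm).elim
        | exact (m3 hadj).elim
        | exact (m3 hadj.symm).elim
        | exact (m4 hadj).elim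
        | exact (m4 hadj.symm).elim
        | exact (m5 hadj).elim
        | exact (m5 hadj.symm).elim
        | exact (m6 hadj).elim
        | exact (m6 hadj.symm).elim
        | exact (m7 hadj).elim
        | exact (m7 hadj.symm).elim
        | exact (m8 hadj).elim
        | exact (m8 hadj.symm).elim
        | exact (m9 hadj).elim
        | exact (m9 hadj.symm).elim
        | exact (m10 hadj).elim
        | exact (m10 hadj.symm).elim
        | exact (m11 hadj).elim
        | exact (m11 hadj.symm).elim
        | exact (m12 hadj).elim
        | exact (m12 hadj.symm).elim
        | exact Or.inl ⟨h1, h2⟩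
        | exact Or.inr (Or.inl ⟨h1, h2⟩)
        | exact Or.inr (Or.inr (Or.inl ⟨h1, h2⟩))
        | exact Or.inr (Or.inr (Or.inr (Or.inl ⟨h1, h2⟩)))
        | exact Or.inr (Or.inr (Or.inr (Or.inr (Or.inl ⟨h1, h2⟩))))
        | exact Or.inr (Or.inr (Or.inr (Or.inr (Or.inr ⟨h1, h2⟩))))
  have pe1 : (G.induce s).Adj ⟨a1, ha1⟩ ⟨b1, hb1⟩ := e1
  have pe2 : (G.induce s).Adj ⟨a2, ha2⟩ ⟨b2, hb2⟩ := e2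
  have pe3 : (G.induce s).Adj ⟨a3, ha3⟩ ⟨b3, hb3⟩ := e3
  -- achromatic number at least 3
  set f : ↥s → Fin 3 := fun v => if v.val = a1 ∨ v.val = a2 then 0
    else if v.val = b1 ∨ v.val = a3 then 1 else 2 with hf
  have fa1 : f ⟨a1, ha1⟩ = 0 := by simp [hf]
  have fb1 : f ⟨b1, hb1⟩ = 1 := by simp [hf, Ne.symm w1, n3]
  have fa2 : f ⟨a2, ha2⟩ = 0 := by simp [hf]
  have fb2 : f ⟨b2, hb2⟩ = 2 := by simp [hf, Ne.symm n2, Ne.symm w2, Ne.symm n4, n11]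
  have fa3 : f ⟨a3, ha3⟩ = 1 := by simp [hf, Ne.symm n5, Ne.symm n9]
  have fb3 : f ⟨b3, hb3⟩ = 2 := by
    simp [hf, Ne.symm n6, Ne.symm n10, Ne.symm n8, Ne.symm w3]
  have halpha : 3 ≤ achromaticNumber (G.induce s) := by
    refine le_csSup (aux_alpha_bdd _) ⟨f, ?_, ?_, ?_⟩
    · intro u v huv hfuv
      rcases hclass u v huv with ⟨q1, q2⟩ | ⟨q1, q2⟩ | ⟨q1, q2⟩ | ⟨q1, q2⟩ | ⟨q1, q2⟩ | ⟨q1, q2⟩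
      · rw [show u = (⟨a1, ha1⟩ : ↥s) from Subtype.ext q1,
          show v = (⟨b1, hb1⟩ : ↥s) from Subtype.ext q2, fa1, fb1] at hfuv
        exact absurd hfuv (by decide)
      · rw [show u = (⟨b1, hb1⟩ : ↥s) from Subtype.ext q1,
          show v = (⟨a1, ha1⟩ : ↥s) from Subtype.ext q2, fb1, fa1] at hfuv
        exact absurd hfuv (by decide)
      · rw [show u = (⟨a2, ha2⟩ : ↥s) from Subtype.ext q1,
          show v = (⟨b2, hb2⟩ : ↥s) from Subtype.ext q2, fa2, fb2] at hfuv
        exact absurd hfuv (by decide)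
      · rw [show u = (⟨b2, hb2⟩ : ↥s) from Subtype.ext q1,
          show v = (⟨a2, ha2⟩ : ↥s) from Subtype.ext q2, fb2, fa2] at hfuv
        exact absurd hfuv (by decide)
      · rw [show u = (⟨a3, ha3⟩ : ↥s) from Subtype.ext q1,
          show v = (⟨b3, hb3⟩ : ↥s) from Subtype.ext q2, fa3, fb3] at hfuv
        exact absurd hfuv (by decide)
      · rw [show u = (⟨b3, hb3⟩ : ↥s) from Subtype.ext q1,
          show v = (⟨a3, ha3⟩ : ↥s) from Subtype.ext q2, fb3, fa3] at hfuv
        exact absurd hfuv (by decide)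
    · intro i
      fin_cases i
      · exact ⟨⟨a1, ha1⟩, fa1⟩
      · exact ⟨⟨b1, hb1⟩, fb1⟩
      · exact ⟨⟨b2, hb2⟩, fb2⟩
    · intro i j hij
      fin_cases i <;> fin_cases j <;>
        first
          | exact absurd rfl hij
          | exact ⟨_, _, pe1, fa1, fb1⟩
          | exact ⟨_, _, pe1.symm, fb1, fa1⟩
          | exact ⟨_, _, pe2, fa2, fb2⟩
          | exact ⟨_, _, pe2.symm, fb2, fa2⟩
          | exact ⟨_, _, pe3, fa3, fb3⟩
          | exact ⟨_, _, pe3.symm, fb3, fa3⟩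
  -- no K3 minor
  have hminor : ¬HasCompleteMinor (G.induce s) 3 := by
    rintro ⟨B, hBconn, hBdisj, hBadj⟩
    set F : ↥s → ℕ := fun v => if v.val = a1 ∨ v.val = b1 then 0
      else if v.val = a2 ∨ v.val = b2 then 1 else 2 with hF
    have Fa1 : F ⟨a1, ha1⟩ = 0 := by simp [hF]
    have Fb1 : F ⟨b1, hb1⟩ = 0 := by simp [hF]
    have Fa2 : F ⟨a2, ha2⟩ = 1 := by simp [hF, Ne.symm n1, Ne.symm n3]
    have Fb2 : F ⟨b2, hb2⟩ = 1 := by simp [hF, Ne.symm n2, Ne.symm n4]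
    have Fa3 : F ⟨a3, ha3⟩ = 2 := by simp [hF, Ne.symm n5, Ne.symm n7, Ne.symm n9, Ne.symm n11]
    have Fb3 : F ⟨b3, hb3⟩ = 2 := by simp [hF, Ne.symm n6, Ne.symm n8, Ne.symm n10, Ne.symm n12]
    have hFinv : ∀ u v : ↥s, (G.induce s).Adj u v → F u = F v := by
      intro u v huv
      rcases hclass u v huv with ⟨q1, q2⟩ | ⟨q1, q2⟩ | ⟨q1, q2⟩ | ⟨q1, q2⟩ | ⟨q1, q2⟩ | ⟨q1, q2⟩
      · rw [show u = (⟨a1, ha1⟩ : ↥s) from Subtype.ext q1,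
          show v = (⟨b1, hb1⟩ : ↥s) from Subtype.ext q2, Fa1, Fb1]
      · rw [show u = (⟨b1, hb1⟩ : ↥s) from Subtype.ext q1,
          show v = (⟨a1, ha1⟩ : ↥s) from Subtype.ext q2, Fb1, Fa1]
      · rw [show u = (⟨a2, ha2⟩ : ↥s) from Subtype.ext q1,
          show v = (⟨b2, hb2⟩ : ↥s) from Subtype.ext q2, Fa2, Fb2]
      · rw [show u = (⟨b2, hb2⟩ : ↥s) from Subtype.ext q1,
          show v = (⟨a2, ha2⟩ : ↥s) from Subtype.ext q2, Fb2, Fa2]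
      · rw [show u = (⟨a3, ha3⟩ : ↥s) from Subtype.ext q1,
          show v = (⟨b3, hb3⟩ : ↥s) from Subtype.ext q2, Fa3, Fb3]
      · rw [show u = (⟨b3, hb3⟩ : ↥s) from Subtype.ext q1,
          show v = (⟨a3, ha3⟩ : ↥s) from Subtype.ext q2, Fb3, Fa3]
    have hconst : ∀ (i : Fin 3) (x y : ↥s), x ∈ B i → y ∈ B i → F x = F y := by
      intro i x y hx hy
      exact aux_adj_invariant (H := (G.induce s).induce (B i)) (F := fun w => F w.val)
        (fun p q hpq => hFinv _ _ hpq) ((hBconn i).preconnected ⟨x, hx⟩ ⟨y, hy⟩)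
    obtain ⟨⟨x0, hx0⟩⟩ := (hBconn 0).nonempty
    have hglob : ∀ (i : Fin 3), ∀ w ∈ B i, F w = F x0 := by
      intro i w hw
      by_cases hi : i = 0
      · subst hi; exact hconst 0 w x0 hw hx0
      · obtain ⟨u, hu, v, hv, huv⟩ := hBadj 0 i (Ne.symm hi)
        calc F w = F v := hconst i w v hw hv
          _ = F u := (hFinv u v huv).symm
          _ = F x0 := hconst 0 u x0 hu hx0
    have hz : ∃ z : ↥s, ∀ u v : ↥s, (G.induce s).Adj u v → F u = F x0 → (u = z ∨ v = z) := by
      have hzcase : ∀ (z1 : ↥s), F z1 = F x0 → F z1 = 0 ∨ F z1 = 1 ∨ F z1 = 2 := by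
        intro z1 _
        rcases hmem z1 with h | h | h | h | h | h
        · rw [show z1 = (⟨a1, ha1⟩ : ↥s) from Subtype.ext h, Fa1]; tauto
        · rw [show z1 = (⟨b1, hb1⟩ : ↥s) from Subtype.ext h, Fb1]; tauto
        · rw [show z1 = (⟨a2, ha2⟩ : ↥s) from Subtype.ext h, Fa2]; tauto
        · rw [show z1 = (⟨b2, hb2⟩ : ↥s) from Subtype.ext h, Fb2]; tauto
        · rw [show z1 = (⟨a3, ha3⟩ : ↥s) from Subtype.ext h, Fa3]; tauto
        · rw [show z1 = (⟨b3, hb3⟩ : ↥s) from Subtype.ext h, Fb3]; tauto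
      have hval : F x0 = 0 ∨ F x0 = 1 ∨ F x0 = 2 := hzcase x0 rfl
      have hcore : ∀ (t : ℕ) (z : ↥s), F x0 = t → F z = t →
          (∀ u v : ↥s, (u.val = a1 ∧ v.val = b1) ∨ (u.val = b1 ∧ v.val = a1) ∨
            (u.val = a2 ∧ v.val = b2) ∨ (u.val = b2 ∧ v.val = a2) ∨
            (u.val = a3 ∧ v.val = b3) ∨ (u.val = b3 ∧ v.val = a3) →
            F u = t → (u = z ∨ v = z)) →
          ∃ z : ↥s, ∀ u v : ↥s, (G.induce s).Adj u v → F u = F x0 → (u = z ∨ v = z) := by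
        intro t z hx0t _ hcl
        exact ⟨z, fun u v huv hFu => hcl u v (hclass u v huv) (by rw [← hx0t]; exact hFu)⟩
      rcases hval with ht | ht | ht
      · refine hcore 0 ⟨a1, ha1⟩ ht Fa1 ?_
        intro u v hcl hFu
        rcases hcl with ⟨q1, q2⟩ | ⟨q1, q2⟩ | ⟨q1, q2⟩ | ⟨q1, q2⟩ | ⟨q1, q2⟩ | ⟨q1, q2⟩
        · exact Or.inl (Subtype.ext q1)
        · exact Or.inr (Subtype.ext q2)
        · rw [show u = (⟨a2, ha2⟩ : ↥s) from Subtype.ext q1, Fa2] at hFu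
          exact absurd hFu (by decide)
        · rw [show u = (⟨b2, hb2⟩ : ↥s) from Subtype.ext q1, Fb2] at hFu
          exact absurd hFu (by decide)
        · rw [show u = (⟨a3, ha3⟩ : ↥s) from Subtype.ext q1, Fa3] at hFu
          exact absurd hFu (by decide)
        · rw [show u = (⟨b3, hb3⟩ : ↥s) from Subtype.ext q1, Fb3] at hFu
          exact absurd hFu (by decide)
      · refine hcore 1 ⟨a2, ha2⟩ ht Fa2 ?_
        intro u v hcl hFu
        rcases hcl with ⟨q1, q2⟩ | ⟨q1, q2⟩ | ⟨q1, q2⟩ | ⟨q1, q2⟩ | ⟨q1, q2⟩ | ⟨q1, q2⟩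
        · rw [show u = (⟨a1, ha1⟩ : ↥s) from Subtype.ext q1, Fa1] at hFu
          exact absurd hFu (by decide)
        · rw [show u = (⟨b1, hb1⟩ : ↥s) from Subtype.ext q1, Fb1] at hFu
          exact absurd hFu (by decide)
        · exact Or.inl (Subtype.ext q1)
        · exact Or.inr (Subtype.ext q2)
        · rw [show u = (⟨a3, ha3⟩ : ↥s) from Subtype.ext q1, Fa3] at hFu
          exact absurd hFu (by decide)
        · rw [show u = (⟨b3, hb3⟩ : ↥s) from Subtype.ext q1, Fb3] at hFu
          exact absurd hFu (by decide)
      · refine hcore 2 ⟨a3, ha3⟩ ht Fa3 ?_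
        intro u v hcl hFu
        rcases hcl with ⟨q1, q2⟩ | ⟨q1, q2⟩ | ⟨q1, q2⟩ | ⟨q1, q2⟩ | ⟨q1, q2⟩ | ⟨q1, q2⟩
        · rw [show u = (⟨a1, ha1⟩ : ↥s) from Subtype.ext q1, Fa1] at hFu
          exact absurd hFu (by decide)
        · rw [show u = (⟨b1, hb1⟩ : ↥s) from Subtype.ext q1, Fb1] at hFu
          exact absurd hFu (by decide)
        · rw [show u = (⟨a2, ha2⟩ : ↥s) from Subtype.ext q1, Fa2] at hFu
          exact absurd hFu (by decide)
        · rw [show u = (⟨b2, hb2⟩ : ↥s) from Subtype.ext q1, Fb2] at hFu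
          exact absurd hFu (by decide)
        · exact Or.inl (Subtype.ext q1)
        · exact Or.inr (Subtype.ext q2)
    obtain ⟨z, hzkey⟩ := hz
    have hit : ∀ i j : Fin 3, i ≠ j → z ∈ B i ∪ B j := by
      intro i j hij
      obtain ⟨u, hu, v, hv, huv⟩ := hBadj i j hij
      rcases hzkey u v huv (hglob i u hu) with rfl | rfl
      · exact Or.inl hu
      · exact Or.inr hv
    exact aux_two_of_three hBdisj (hit 0 1 (by decide)) (hit 0 2 (by decide))
      (hit 1 2 (by decide))
  have := hyp s
  have h2 := aux_hadwiger_le_two hminor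
  omega

end Chunk9
section Chunk10

private lemma aux_noP3K2 {V : Type*} [Fintype V] {G : SimpleGraph V}
    (hyp : ∀ s : Set V, achromaticNumber (G.induce s) = hadwigerNumber (G.induce s)) :
    ¬ConfP3K2 G := by
  classical
  rintro ⟨a, b, c, d, e, hac, hab, hbc, nac, hde, n1, n2, n3, n4, n5, n6,
    m1, m2, m3, m4, m5, m6⟩
  have hba : a ≠ b := hab.ne
  have hcb : b ≠ c := hbc.ne
  have hed : d ≠ e := hde.ne
  set s : Set V := {a, b, c, d, e} with hsdef
  have ha : a ∈ s := by simp [hsdef]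
  have hb : b ∈ s := by simp [hsdef]
  have hc : c ∈ s := by simp [hsdef]
  have hd : d ∈ s := by simp [hsdef]
  have he : e ∈ s := by simp [hsdef]
  have hmem : ∀ v : ↥s, v.val = a ∨ v.val = b ∨ v.val = c ∨ v.val = d ∨ v.val = e :=
    fun v => by
      have := v.2
      simp only [hsdef, Set.mem_insert_iff, Set.mem_singleton_iff] at this
      exact this
  have hclass : ∀ u v : ↥s, (G.induce s).Adj u v →
      (u.val = a ∧ v.val = b) ∨ (u.val = b ∧ v.val = a) ∨
      (u.val = b ∧ v.val = c) ∨ (u.val = c ∧ v.val = b) ∨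
      (u.val = d ∧ v.val = e) ∨ (u.val = e ∧ v.val = d) := by
    intro u v huv
    have hadj : G.Adj u.val v.val := huv
    rcases hmem u with h1 | h1 | h1 | h1 | h1 <;>
      rcases hmem v with h2 | h2 | h2 | h2 | h2 <;>
      rw [h1, h2] at hadj <;>
      first
        | exact (G.loopless.irrefl _ hadj).elim
        | exact (nac hadj).elim
        | exact (nac hadj.symm).elim
        | exact (m1 hadj).elim
        | exact (m1 hadj.symm).elim
        | exact (m2 hadj).elim
        | exact (m2 hadj.symm).elim
        | exact (m3 hadj).elim
        | exact (m3 hadj.symm).elim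
        | exact (m4 hadj).elim
        | exact (m4 hadj.symm).elim
        | exact (m5 hadj).elim
        | exact (m5 hadj.symm).elim
        | exact (m6 hadj).elim
        | exact (m6 hadj.symm).elim
        | exact Or.inl ⟨h1, h2⟩
        | exact Or.inr (Or.inl ⟨h1, h2⟩)
        | exact Or.inr (Or.inr (Or.inl ⟨h1, h2⟩))
        | exact Or.inr (Or.inr (Or.inr (Or.inl ⟨h1, h2⟩)))
        | exact Or.inr (Or.inr (Or.inr (Or.inr (Or.inl ⟨h1, h2⟩))))
        | exact Or.inr (Or.inr (Or.inr (Or.inr (Or.inr ⟨h1, h2⟩))))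
  have pab : (G.induce s).Adj ⟨a, ha⟩ ⟨b, hb⟩ := hab
  have pbc : (G.induce s).Adj ⟨b, hb⟩ ⟨c, hc⟩ := hbc
  have pde : (G.induce s).Adj ⟨d, hd⟩ ⟨e, he⟩ := hde
  set f : ↥s → Fin 3 := fun v => if v.val = b then 0
    else if v.val = a ∨ v.val = d then 1 else 2 with hf
  have fb : f ⟨b, hb⟩ = 0 := by simp [hf]
  have fa : f ⟨a, ha⟩ = 1 := by simp [hf, hba]
  have fd : f ⟨d, hd⟩ = 1 := by simp [hf, Ne.symm n3]
  have fc : f ⟨c, hc⟩ = 2 := by simp [hf, Ne.symm hcb, Ne.symm hac, n5]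
  have fe : f ⟨e, he⟩ = 2 := by simp [hf, Ne.symm n4, Ne.symm n2, Ne.symm hed]
  have halpha : 3 ≤ achromaticNumber (G.induce s) := by
    refine le_csSup (aux_alpha_bdd _) ⟨f, ?_, ?_, ?_⟩
    · intro u v huv hfuv
      rcases hclass u v huv with ⟨q1, q2⟩ | ⟨q1, q2⟩ | ⟨q1, q2⟩ | ⟨q1, q2⟩ | ⟨q1, q2⟩ | ⟨q1, q2⟩
      · rw [show u = (⟨a, ha⟩ : ↥s) from Subtype.ext q1,
          show v = (⟨b, hb⟩ : ↥s) from Subtype.ext q2, fa, fb] at hfuv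
        exact absurd hfuv (by decide)
      · rw [show u = (⟨b, hb⟩ : ↥s) from Subtype.ext q1,
          show v = (⟨a, ha⟩ : ↥s) from Subtype.ext q2, fb, fa] at hfuv
        exact absurd hfuv (by decide)
      · rw [show u = (⟨b, hb⟩ : ↥s) from Subtype.ext q1,
          show v = (⟨c, hc⟩ : ↥s) from Subtype.ext q2, fb, fc] at hfuv
        exact absurd hfuv (by decide)
      · rw [show u = (⟨c, hc⟩ : ↥s) from Subtype.ext q1,
          show v = (⟨b, hb⟩ : ↥s) from Subtype.ext q2, fc, fb] at hfuv
        exact absurd hfuv (by decide)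
      · rw [show u = (⟨d, hd⟩ : ↥s) from Subtype.ext q1,
          show v = (⟨e, he⟩ : ↥s) from Subtype.ext q2, fd, fe] at hfuv
        exact absurd hfuv (by decide)
      · rw [show u = (⟨e, he⟩ : ↥s) from Subtype.ext q1,
          show v = (⟨d, hd⟩ : ↥s) from Subtype.ext q2, fe, fd] at hfuv
        exact absurd hfuv (by decide)
    · intro i
      fin_cases i
      · exact ⟨⟨b, hb⟩, fb⟩
      · exact ⟨⟨a, ha⟩, fa⟩
      · exact ⟨⟨c, hc⟩, fc⟩
    · intro i j hij
      fin_cases i <;> fin_cases j <;>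
        first
          | exact absurd rfl hij
          | exact ⟨_, _, pab.symm, fb, fa⟩
          | exact ⟨_, _, pab, fa, fb⟩
          | exact ⟨_, _, pbc, fb, fc⟩
          | exact ⟨_, _, pbc.symm, fc, fb⟩
          | exact ⟨_, _, pde, fd, fe⟩
          | exact ⟨_, _, pde.symm, fe, fd⟩
  have hminor : ¬HasCompleteMinor (G.induce s) 3 := by
    rintro ⟨B, hBconn, hBdisj, hBadj⟩
    set F : ↥s → ℕ := fun v => if v.val = d ∨ v.val = e then 1 else 0 with hF
    have Fa : F ⟨a, ha⟩ = 0 := by simp [hF, n1, n2]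
    have Fb : F ⟨b, hb⟩ = 0 := by simp [hF, n3, n4]
    have Fc : F ⟨c, hc⟩ = 0 := by simp [hF, n5, n6]
    have Fd : F ⟨d, hd⟩ = 1 := by simp [hF]
    have Fe : F ⟨e, he⟩ = 1 := by simp [hF]
    have hFinv : ∀ u v : ↥s, (G.induce s).Adj u v → F u = F v := by
      intro u v huv
      rcases hclass u v huv with ⟨q1, q2⟩ | ⟨q1, q2⟩ | ⟨q1, q2⟩ | ⟨q1, q2⟩ | ⟨q1, q2⟩ | ⟨q1, q2⟩
      · rw [show u = (⟨a, ha⟩ : ↥s) from Subtype.ext q1,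
          show v = (⟨b, hb⟩ : ↥s) from Subtype.ext q2, Fa, Fb]
      · rw [show u = (⟨b, hb⟩ : ↥s) from Subtype.ext q1,
          show v = (⟨a, ha⟩ : ↥s) from Subtype.ext q2, Fb, Fa]
      · rw [show u = (⟨b, hb⟩ : ↥s) from Subtype.ext q1,
          show v = (⟨c, hc⟩ : ↥s) from Subtype.ext q2, Fb, Fc]
      · rw [show u = (⟨c, hc⟩ : ↥s) from Subtype.ext q1,
          show v = (⟨b, hb⟩ : ↥s) from Subtype.ext q2, Fc, Fb]
      · rw [show u = (⟨d, hd⟩ : ↥s) from Subtype.ext q1,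
          show v = (⟨e, he⟩ : ↥s) from Subtype.ext q2, Fd, Fe]
      · rw [show u = (⟨e, he⟩ : ↥s) from Subtype.ext q1,
          show v = (⟨d, hd⟩ : ↥s) from Subtype.ext q2, Fe, Fd]
    have hconst : ∀ (i : Fin 3) (x y : ↥s), x ∈ B i → y ∈ B i → F x = F y := by
      intro i x y hx hy
      exact aux_adj_invariant (H := (G.induce s).induce (B i)) (F := fun w => F w.val)
        (fun p q hpq => hFinv _ _ hpq) ((hBconn i).preconnected ⟨x, hx⟩ ⟨y, hy⟩)
    obtain ⟨⟨x0, hx0⟩⟩ := (hBconn 0).nonempty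
    have hglob : ∀ (i : Fin 3), ∀ w ∈ B i, F w = F x0 := by
      intro i w hw
      by_cases hi : i = 0
      · subst hi; exact hconst 0 w x0 hw hx0
      · obtain ⟨u, hu, v, hv, huv⟩ := hBadj 0 i (Ne.symm hi)
        calc F w = F v := hconst i w v hw hv
          _ = F u := (hFinv u v huv).symm
          _ = F x0 := hconst 0 u x0 hu hx0
    have hval : F x0 = 0 ∨ F x0 = 1 := by
      rcases hmem x0 with h | h | h | h | h
      · rw [show x0 = (⟨a, ha⟩ : ↥s) from Subtype.ext h, Fa]; tauto
      · rw [show x0 = (⟨b, hb⟩ : ↥s) from Subtype.ext h, Fb]; tauto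
      · rw [show x0 = (⟨c, hc⟩ : ↥s) from Subtype.ext h, Fc]; tauto
      · rw [show x0 = (⟨d, hd⟩ : ↥s) from Subtype.ext h, Fd]; tauto
      · rw [show x0 = (⟨e, he⟩ : ↥s) from Subtype.ext h, Fe]; tauto
    have hz : ∃ z : ↥s, ∀ u v : ↥s, (G.induce s).Adj u v → F u = F x0 → (u = z ∨ v = z) := by
      rcases hval with ht | ht
      · refine ⟨⟨b, hb⟩, ?_⟩
        intro u v huv hFu
        have hFu0 : F u = 0 := hFu.trans ht
        rcases hclass u v huv with ⟨q1, q2⟩ | ⟨q1, q2⟩ | ⟨q1, q2⟩ | ⟨q1, q2⟩ | ⟨q1, q2⟩ | ⟨q1, q2⟩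
        · exact Or.inr (Subtype.ext q2)
        · exact Or.inl (Subtype.ext q1)
        · exact Or.inl (Subtype.ext q1)
        · exact Or.inr (Subtype.ext q2)
        · rw [show u = (⟨d, hd⟩ : ↥s) from Subtype.ext q1, Fd] at hFu0
          exact absurd hFu0 (by decide)
        · rw [show u = (⟨e, he⟩ : ↥s) from Subtype.ext q1, Fe] at hFu0
          exact absurd hFu0 (by decide)
      · refine ⟨⟨d, hd⟩, ?_⟩
        intro u v huv hFu
        have hFu1 : F u = 1 := hFu.trans ht
        rcases hclass u v huv with ⟨q1, q2⟩ | ⟨q1, q2⟩ | ⟨q1, q2⟩ | ⟨q1, q2⟩ | ⟨q1, q2⟩ | ⟨q1, q2⟩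
        · rw [show u = (⟨a, ha⟩ : ↥s) from Subtype.ext q1, Fa] at hFu1
          exact absurd hFu1 (by decide)
        · rw [show u = (⟨b, hb⟩ : ↥s) from Subtype.ext q1, Fb] at hFu1
          exact absurd hFu1 (by decide)
        · rw [show u = (⟨b, hb⟩ : ↥s) from Subtype.ext q1, Fb] at hFu1
          exact absurd hFu1 (by decide)
        · rw [show u = (⟨c, hc⟩ : ↥s) from Subtype.ext q1, Fc] at hFu1
          exact absurd hFu1 (by decide)
        · exact Or.inl (Subtype.ext q1)
        · exact Or.inr (Subtype.ext q2)
    obtain ⟨z, hzkey⟩ := hz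
    have hit : ∀ i j : Fin 3, i ≠ j → z ∈ B i ∪ B j := by
      intro i j hij
      obtain ⟨u, hu, v, hv, huv⟩ := hBadj i j hij
      rcases hzkey u v huv (hglob i u hu) with rfl | rfl
      · exact Or.inl hu
      · exact Or.inr hv
    exact aux_two_of_three hBdisj (hit 0 1 (by decide)) (hit 0 2 (by decide))
      (hit 1 2 (by decide))
  have := hyp s
  have h2 := aux_hadwiger_le_two hminor
  omega

end Chunk10
/-- `G` is αh-perfect iff `G` is ωψ-perfect. -/
theorem achromatic_hadwiger_perfect_iff_omega_pseudoachromatic_perfect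
    {V : Type*} [Fintype V] (G : SimpleGraph V) :
    (∀ s : Set V, achromaticNumber (G.induce s) = hadwigerNumber (G.induce s)) ↔
      (∀ s : Set V, (G.induce s).cliqueNum = pseudoachromaticNumber (G.induce s)) := by
  classical
  constructor
  · intro hyp s
    have h1 : pseudoachromaticNumber (G.induce s) ≤ (G.induce s).cliqueNum := by
      refine aux_main (Fintype.card ↥s) (G.induce s) le_rfl ?_ ?_ ?_ ?_
      · exact fun h => aux_noP4 hyp (aux_confP4_lift h)
      · exact fun h => aux_noC4 hyp (aux_confC4_lift h)
      · exact fun h => aux_noM3 hyp (aux_confM3_lift h)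
      · exact fun h => aux_noP3K2 hyp (aux_confP3K2_lift h)
    have h2 : (G.induce s).cliqueNum ≤ pseudoachromaticNumber (G.induce s) :=
      le_trans (aux_omega_le_achromatic _) (aux_alpha_le_psi _)
    omega
  · intro hyp s
    have e := hyp s
    have h1 := aux_omega_le_achromatic (G.induce s)
    have h2 := aux_alpha_le_psi (G.induce s)
    have h3 := aux_omega_le_hadwiger (G.induce s)
    have h4 := aux_hadwiger_le_psi (G.induce s)
    omega
end
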